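/- arXiv:1505.07903 — 2 statements merged into one kernel-verified Lean document; each statement's English description precedes it below -/
import Mathlib

section
/- Suppose (f_j^R, f_j^I) satisfy condition H1 with constants λ_j^{RR}, λ_j^{RI}, λ_j^{IR}, λ_j^{II} and (g_j^R, g_j^I) satisfy condition H2 with constants μ_j^{RR}, μ_j^{RI}, μ_j^{IR}, μ_j^{II}, for j = 1,…,n. Suppose there exist positive reals ξ_1,…,ξ_n, φ_1,…,φ_n such that for every k = 1,…,n both: (i) −ξ_k d_k + [ξ_k a_{kk}^R + Σ_{j≠k} ξ_j|a_{jk}^R| + Σ_{j=1}^n φ_j|a_{jk}^I|]⁺ λ_k^{RR} + [−ξ_k a_{kk}^I + Σ_{j≠k} ξ_j|a_{jk}^I| + Σ_{j=1}^n φ_j|a_{jk}^R|]⁺ λ_k^{IR} + Σ_{j=1}^n [ξ_j(|b_{jk}^R|μ_k^{RR} + |b_{jk}^I|μ_k^{IR}) + φ_j(|b_{jk}^R|μ_k^{IR} + |b_{jk}^I|μ_k^{RR})] < 0, and (ii) −φ_k d_k + [φ_k a_{kk}^R + Σ_{j≠k} φ_j|a_{jk}^R| + Σ_{j=1}^n ξ_j|a_{jk}^I|]⁺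 λ_k^{II} + [φ_k a_{kk}^I + Σ_{j≠k} φ_j|a_{jk}^I| + Σ_{j=1}^n ξ_j|a_{jk}^R|]⁺ λ_k^{RI} + Σ_{j=1}^n [ξ_j(|b_{jk}^R|μ_k^{RI} + |b_{jk}^I|μ_k^{II}) + φ_j(|b_{jk}^R|μ_k^{II} + |b_{jk}^I|μ_k^{RI})] < 0. If the network admits at least one solution, then it has exactly one equilibrium Z̄ ∈ ℝ^{2n}, and for every solution Z(t) there exist constants c > 0 and δ > 0 such that ‖Z(t) − Z̄‖ ≤ c e^{−δt} (Euclidean norm) for all t ≥ 0. -/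
open Finset

/-- A solution of the delayed complex-valued network, decomposed into real and
imaginary parts. -/
def IsSolution (n : ℕ) (d : Fin n → ℝ)
    (aR aI bR bI τ : Fin n → Fin n → ℝ)
    (uR uI : Fin n → ℝ)
    (fR fI gR gI : Fin n → ℝ → ℝ → ℝ)
    (zR zI : Fin n → ℝ → ℝ) : Prop :=
  (∀ j, ContDiff ℝ 1 (zR j)) ∧ (∀ j, ContDiff ℝ 1 (zI j)) ∧
  (∀ j : Fin n, ∀ t : ℝ, 0 ≤ t →
    deriv (zR j) t =
      -(d j) * zR j t
      + (∑ k, (aR j k * fR k (zR k t) (zI k t) - aI j k * fI k (zR k t) (zI k t)))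
      + (∑ k, (bR j k * gR k (zR k (t - τ j k)) (zI k (t - τ j k))
               - bI j k * gI k (zR k (t - τ j k)) (zI k (t - τ j k))))
      + uR j) ∧
  (∀ j : Fin n, ∀ t : ℝ, 0 ≤ t →
    deriv (zI j) t =
      -(d j) * zI j t
      + (∑ k, (aR j k * fI k (zR k t) (zI k t) + aI j k * fR k (zR k t) (zI k t)))
      + (∑ k, (bR j k * gI k (zR k (t - τ j k)) (zI k (t - τ j k))
               + bI j k * gR k (zR k (t - τ j k)) (zI k (t - τ j k))))
      + uI j)

/-- An equilibrium of the network: a point of ℝ^{2n} at which both right-hand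
sides vanish. -/
def IsEquilibrium (n : ℕ) (d : Fin n → ℝ)
    (aR aI bR bI : Fin n → Fin n → ℝ)
    (uR uI : Fin n → ℝ)
    (fR fI gR gI : Fin n → ℝ → ℝ → ℝ)
    (zbR zbI : Fin n → ℝ) : Prop :=
  (∀ j : Fin n,
    -(d j) * zbR j
    + (∑ k, (aR j k * fR k (zbR k) (zbI k) - aI j k * fI k (zbR k) (zbI k)))
    + (∑ k, (bR j k * gR k (zbR k) (zbI k) - bI j k * gI k (zbR k) (zbI k)))
    + uR j = 0) ∧
  (∀ j : Fin n,
    -(d j) * zbI j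
    + (∑ k, (aR j k * fI k (zbR k) (zbI k) + aI j k * fR k (zbR k) (zbI k)))
    + (∑ k, (bR j k * gI k (zbR k) (zbI k) + bI j k * gR k (zbR k) (zbI k)))
    + uI j = 0)

/-- Condition H1: continuously differentiable with positive, bounded partial
derivatives. -/
def CondH1 (f1 f2 : ℝ → ℝ → ℝ) (lRR lRI lIR lII : ℝ) : Prop :=
  ContDiff ℝ 1 (fun p : ℝ × ℝ => f1 p.1 p.2) ∧
  ContDiff ℝ 1 (fun p : ℝ × ℝ => f2 p.1 p.2) ∧
  (∀ x y : ℝ,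
    (0 < deriv (fun s => f1 s y) x ∧ deriv (fun s => f1 s y) x ≤ lRR) ∧
    (0 < deriv (fun s => f1 x s) y ∧ deriv (fun s => f1 x s) y ≤ lRI) ∧
    (0 < deriv (fun s => f2 s y) x ∧ deriv (fun s => f2 s y) x ≤ lIR) ∧
    (0 < deriv (fun s => f2 x s) y ∧ deriv (fun s => f2 x s) y ≤ lII))

/-- Condition H2: continuously differentiable with bounded partial derivatives. -/
def CondH2 (g1 g2 : ℝ → ℝ → ℝ) (mRR mRI mIR mII : ℝ) : Prop :=
  ContDiff ℝ 1 (fun p : ℝ × ℝ => g1 p.1 p.2) ∧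
  ContDiff ℝ 1 (fun p : ℝ × ℝ => g2 p.1 p.2) ∧
  (∀ x y : ℝ,
    |deriv (fun s => g1 s y) x| ≤ mRR ∧
    |deriv (fun s => g1 x s) y| ≤ mRI ∧
    |deriv (fun s => g2 s y) x| ≤ mIR ∧
    |deriv (fun s => g2 x s) y| ≤ mII)

open Finset Filter Set Real Topology

lemma aux_sqrt_le {n : ℕ} (a b : Fin n → ℝ) :
    Real.sqrt ((∑ j, a j ^ 2) + ∑ j, b j ^ 2) ≤ (∑ j, |a j|) + ∑ j, |b j| := by
  have key : ∀ (c : Fin n → ℝ), (∑ j, c j ^ 2) ≤ (∑ j, |c j|) ^ 2 := by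
    intro c
    have : ∀ (s : Finset (Fin n)), (∑ j ∈ s, c j ^ 2) ≤ (∑ j ∈ s, |c j|) ^ 2 := by
      intro s
      induction s using Finset.cons_induction with
      | empty => simp
      | cons i s his ih =>
        rw [Finset.sum_cons, Finset.sum_cons]
        have h1 : (0:ℝ) ≤ |c i| := abs_nonneg _
        have h2 : (0:ℝ) ≤ ∑ j ∈ s, |c j| := Finset.sum_nonneg fun j _ => abs_nonneg _
        have := sq_abs (c i)
        nlinarith [ih]
    exact this univ
  have h2 : (0:ℝ) ≤ ∑ j, |a j| := Finset.sum_nonneg fun j _ => abs_nonneg _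
  have h3 : (0:ℝ) ≤ ∑ j, |b j| := Finset.sum_nonneg fun j _ => abs_nonneg _
  have h1 : (∑ j, a j ^ 2) + ∑ j, b j ^ 2 ≤ ((∑ j, |a j|) + ∑ j, |b j|) ^ 2 := by
    have ha := key a; have hb := key b
    nlinarith
  calc Real.sqrt ((∑ j, a j ^ 2) + ∑ j, b j ^ 2)
      ≤ Real.sqrt (((∑ j, |a j|) + ∑ j, |b j|) ^ 2) := Real.sqrt_le_sqrt h1
    _ = (∑ j, |a j|) + ∑ j, |b j| := by
        rw [Real.sqrt_sq (by positivity)]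

lemma aux_exp_le (z : ℝ) : Real.exp z ≤ 1 + z * Real.exp z := by
  have h := Real.add_one_le_exp (-z)
  have h2 : Real.exp (-z) * Real.exp z = 1 := by
    rw [← Real.exp_add]; simp
  nlinarith [Real.exp_pos z]

lemma aux_exists_slope (h : ℝ → ℝ) (hd : Differentiable ℝ h) (p q : ℝ) (hpq : q ≠ p) :
    ∃ c : ℝ, h p - h q = deriv h c * (p - q) := by
  rcases lt_or_gt_of_ne hpq with hlt | hlt
  · obtain ⟨c, _, hc⟩ := exists_deriv_eq_slope h hlt hd.continuous.continuousOn
      hd.differentiableOn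
    have hne : p - q ≠ 0 := sub_ne_zero.2 (ne_of_gt hlt)
    refine ⟨c, ?_⟩; rw [hc]; field_simp
  · obtain ⟨c, _, hc⟩ := exists_deriv_eq_slope h hlt hd.continuous.continuousOn
      hd.differentiableOn
    have hne : q - p ≠ 0 := sub_ne_zero.2 (ne_of_gt hlt)
    refine ⟨c, ?_⟩; rw [hc]
    field_simp
    ring

lemma aux_abs_right_deriv {x : ℝ → ℝ} {t D : ℝ} (hx : HasDerivAt x D t) :
    ∃ s : ℝ, |s| ≤ 1 ∧ s * x t = |x t| ∧
      HasDerivWithinAt (fun u => |x u|) (s * D) (Ici t) t := by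
  by_cases h0 : x t = 0
  · refine ⟨if 0 ≤ D then 1 else -1, by split <;> norm_num, by simp [h0], ?_⟩
    have hsD : (if 0 ≤ D then (1:ℝ) else -1) * D = |D| := by
      split <;> rename_i h
      · rw [abs_of_nonneg h]; ring
      · rw [abs_of_neg (lt_of_not_ge h)]; ring
    rw [hsD]
    rw [hasDerivWithinAt_iff_tendsto_slope]
    have hIci : Ici t \ {t} = Ioi t := by
      ext u; simp [Set.mem_diff, lt_iff_le_and_ne, And.comm, eq_comm]
    rw [hIci]
    have hx' : Tendsto (slope x t) (𝓝[>] t) (𝓝 D) := by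
      have := hasDerivWithinAt_iff_tendsto_slope.1 (hx.hasDerivWithinAt (s := Ioi t))
      rwa [Set.diff_singleton_eq_self (by simp)] at this
    have habs : Tendsto (fun u => |slope x t u|) (𝓝[>] t) (𝓝 |D|) := hx'.abs
    refine habs.congr' ?_
    filter_upwards [self_mem_nhdsWithin] with u hu
    have hu' : t < u := hu
    show |slope x t u| = slope (fun u => |x u|) t u
    rw [slope_def_field, slope_def_field, h0, abs_zero, sub_zero, abs_div,
      abs_of_pos (sub_pos.2 hu')]
    simp
  · rcases lt_or_gt_of_ne h0 with hneg | hpos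
    · refine ⟨-1, by norm_num, by rw [abs_of_neg hneg]; ring, ?_⟩
      have hev : (fun u => |x u|) =ᶠ[𝓝 t] fun u => -1 * x u := by
        have : x ⁻¹' (Iio 0) ∈ 𝓝 t := hx.continuousAt.preimage_mem_nhds (Iio_mem_nhds hneg)
        filter_upwards [this] with u hu
        rw [abs_of_neg hu]; ring
      exact ((hx.const_mul (-1)).congr_of_eventuallyEq hev).hasDerivWithinAt
    · refine ⟨1, by norm_num, by rw [abs_of_pos hpos]; ring, ?_⟩
      have hev : (fun u => |x u|) =ᶠ[𝓝 t] fun u => 1 * x u := by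
        have : x ⁻¹' (Ioi 0) ∈ 𝓝 t := hx.continuousAt.preimage_mem_nhds (Ioi_mem_nhds hpos)
        filter_upwards [this] with u hu
        rw [abs_of_pos hu]; ring
      exact ((hx.const_mul 1).congr_of_eventuallyEq hev).hasDerivWithinAt

lemma aux_antitone_of_right_deriv (V : ℝ → ℝ) (hVc : ContinuousOn V (Ici 0))
    (hV : ∀ t, 0 ≤ t → ∃ D, D ≤ 0 ∧ HasDerivWithinAt V D (Ici t) t) :
    ∀ t, 0 ≤ t → V t ≤ V 0 := by
  intro T hT
  have key := le_gronwallBound_of_liminf_deriv_right_le (f := V) (f' := fun _ => 0)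
    (δ := V 0) (K := 0) (ε := 0) (a := 0) (b := T)
    (hVc.mono (Icc_subset_Ici_self))
    (by
      intro u hu r hr
      obtain ⟨D, hD0, hD⟩ := hV u hu.1
      have hslope : Tendsto (slope V u) (𝓝[>] u) (𝓝 D) := by
        have := hasDerivWithinAt_iff_tendsto_slope.1 hD
        have hIci : Ici u \ {u} = Ioi u := by
          ext v; simp [Set.mem_diff, lt_iff_le_and_ne, And.comm, eq_comm]
        rwa [hIci] at this
      have : ∀ᶠ z in 𝓝[>] u, slope V u z < r :=
        hslope.eventually_lt_const (lt_of_le_of_lt hD0 hr)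
      refine this.frequently.mono ?_
      intro z hz
      rwa [slope_def_field, div_eq_inv_mul] at hz)
    le_rfl
    (by intro u _; simp)
  have := key T ⟨hT, le_rfl⟩
  simpa [gronwallBound_K0] using this

lemma aux_deriv_tendsto_zero (z : ℝ → ℝ) (hd : Differentiable ℝ z) (L E : ℝ)
    (hz : Tendsto z atTop (𝓝 L)) (hD : Tendsto (deriv z) atTop (𝓝 E)) : E = 0 := by
  have main : ∀ (w : ℝ → ℝ) (L' E' : ℝ), Differentiable ℝ w →
      Tendsto w atTop (𝓝 L') → Tendsto (deriv w) atTop (𝓝 E') → E' ≤ 0 := by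
    intro w L' E' hw hwt hwd
    by_contra hpos
    push_neg at hpos
    have h1 : ∀ᶠ t in atTop, E' / 2 < deriv w t :=
      hwd.eventually_const_lt (half_lt_self hpos)
    have h2 : ∀ᶠ t in atTop, |w t - L'| < 1 := by
      obtain ⟨N, hN⟩ := Metric.tendsto_atTop.1 hwt 1 one_pos
      filter_upwards [eventually_ge_atTop N] with t ht
      have := hN t ht
      rwa [Real.dist_eq] at this
    obtain ⟨T, hTprop⟩ := eventually_atTop.1 (h1.and h2)
    have key : ∀ t, T < t → E' / 2 * (t - T) < 2 := by
      intro t hTt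
      obtain ⟨c, hc, hcslope⟩ := exists_deriv_eq_slope w hTt hw.continuous.continuousOn
        hw.differentiableOn
      have heq : w t - w T = deriv w c * (t - T) := by
        rw [hcslope, div_mul_cancel₀ _ (ne_of_gt (sub_pos.2 hTt))]
      have hderivc := (hTprop c (le_of_lt hc.1)).1
      have hwT := abs_lt.1 (hTprop T le_rfl).2
      have hwt' := abs_lt.1 (hTprop t (le_of_lt hTt)).2
      nlinarith [sub_pos.2 hTt]
    have hspec := key (T + 8 / E') (by
      have h8 : 0 < 8 / E' := by positivity
      linarith)
    have : E' / 2 * (T + 8 / E' - T) = 4 := by field_simp; ring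
    rw [this] at hspec
    linarith
  have hE1 : E ≤ 0 := main z L E hd hz hD
  have hE2 : -E ≤ 0 := by
    apply main (fun t => -z t) (-L) (-E) hd.neg hz.neg
    have : deriv (fun t => -z t) = fun t => -deriv z t := by
      funext t; exact deriv.neg
    rw [this]
    exact hD.neg
  linarith

lemma aux_mul_sgn {w c s1 s2 : ℝ} (hw : 0 ≤ w) (h1 : |s1| ≤ 1) (h2 : |s2| ≤ 1) :
    w * (s1 * c) * s2 ≤ w * |c| := by
  have h : w * (s1 * c) * s2 ≤ |w * (s1 * c) * s2| := le_abs_self _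
  rw [abs_mul, abs_mul, abs_mul, abs_of_nonneg hw] at h
  have h3 : |s1| * |s2| ≤ 1 := mul_le_one₀ h1 (abs_nonneg _) h2
  have h4 := mul_le_mul_of_nonneg_left h3 (mul_nonneg hw (abs_nonneg c))
  nlinarith [abs_nonneg c, abs_nonneg s1, abs_nonneg s2]

lemma aux_posneg {c B α lam : ℝ} (hc : c ≤ B) (hα : 0 < α) (hαl : α ≤ lam) :
    c * α ≤ max B 0 * lam := by
  have hlam : 0 < lam := lt_of_lt_of_le hα hαl
  rcases le_or_gt c 0 with h | h
  · have : c * α ≤ 0 := mul_nonpos_of_nonpos_of_nonneg h (le_of_lt hα)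
    have : (0:ℝ) ≤ max B 0 * lam := mul_nonneg (le_max_right B 0) (le_of_lt hlam)
    linarith
  · calc c * α ≤ c * lam := by nlinarith
      _ ≤ B * lam := by nlinarith
      _ ≤ max B 0 * lam := by nlinarith [le_max_left B 0]

lemma aux_sign_rep {s X : ℝ} (h1 : |s| ≤ 1) (h2 : s * X = |X|) : X = s * |X| := by
  rcases eq_or_ne X 0 with h | h
  · simp [h]
  · have habs : |s| * |X| = |X| := by rw [← abs_mul, h2, abs_abs]
    have hX : |X| ≠ 0 := fun hc => h (abs_eq_zero.1 hc)
    have hs1 : |s| = 1 := by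
      field_simp at habs; tauto
    have hss : s * s = 1 := by
      have := sq_abs s; nlinarith
    calc X = (s * s) * X := by rw [hss]; ring
      _ = s * |X| := by rw [mul_assoc, h2]

lemma aux_coef_bound {n : ℕ} (w v : Fin n → ℝ) (hw : ∀ k, 0 ≤ w k) (hv : ∀ k, 0 ≤ v k)
    (p e : Fin n → ℝ) (hp : ∀ k, |p k| ≤ 1) (he : ∀ k, |e k| ≤ 1)
    (A B : Fin n → ℝ) (l : Fin n) (hp2 : p l * p l = 1) :
    (∑ k, (w k * (p k * A k) + v k * (e k * B k))) * p l ≤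
      w l * A l + (∑ k ∈ univ.erase l, w k * |A k|) + ∑ k, v k * |B k| := by
  rw [Finset.sum_mul]
  have hsplit : ∀ k : Fin n, (w k * (p k * A k) + v k * (e k * B k)) * p l
      = w k * (p k * A k) * p l + v k * (e k * B k) * p l := fun k => by ring
  rw [Finset.sum_congr rfl (fun k _ => hsplit k), Finset.sum_add_distrib]
  have h2 : (∑ k, v k * (e k * B k) * p l) ≤ ∑ k, v k * |B k| :=
    Finset.sum_le_sum fun k _ => aux_mul_sgn (hv k) (he k) (hp l)
  have h1 : (∑ k, w k * (p k * A k) * p l) ≤ w l * A l + ∑ k ∈ univ.erase l, w k * |A k| := by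
    rw [← Finset.add_sum_erase univ _ (mem_univ l)]
    have hdiag : w l * (p l * A l) * p l = w l * A l := by
      have : w l * (p l * A l) * p l = (p l * p l) * (w l * A l) := by ring
      rw [this, hp2, one_mul]
    rw [hdiag]
    have := Finset.sum_le_sum (f := fun k => w k * (p k * A k) * p l)
      (g := fun k => w k * |A k|) (s := univ.erase l)
      (fun k _ => aux_mul_sgn (hw k) (hp k) (hp l))
    linarith
  linarith

lemma aux_delay {s σ' gp gq xd yd ξk φk br bi mRR mRI mIR mII : ℝ}
    (hs : |s| ≤ 1) (hσ : |σ'| ≤ 1)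
    (hGP : |gp| ≤ mRR * xd + mRI * yd) (hGQ : |gq| ≤ mIR * xd + mII * yd)
    (hξk : 0 ≤ ξk) (hφk : 0 ≤ φk) :
    ξk * (s * (br * gp - bi * gq)) + φk * (σ' * (br * gq + bi * gp)) ≤
      (ξk * (|br| * mRR + |bi| * mIR) + φk * (|br| * mIR + |bi| * mRR)) * xd +
      (ξk * (|br| * mRI + |bi| * mII) + φk * (|br| * mII + |bi| * mRI)) * yd := by
  have k1 : s * (br * gp - bi * gq) ≤ |br| * |gp| + |bi| * |gq| := by
    calc s * (br * gp - bi * gq) ≤ |s * (br * gp - bi * gq)| := le_abs_self _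
      _ = |s| * |br * gp - bi * gq| := abs_mul _ _
      _ ≤ 1 * |br * gp - bi * gq| := by
          apply mul_le_mul_of_nonneg_right hs (abs_nonneg _)
      _ = |br * gp - bi * gq| := one_mul _
      _ ≤ |br * gp| + |bi * gq| := abs_sub _ _
      _ = |br| * |gp| + |bi| * |gq| := by rw [abs_mul, abs_mul]
  have k2 : σ' * (br * gq + bi * gp) ≤ |br| * |gq| + |bi| * |gp| := by
    calc σ' * (br * gq + bi * gp) ≤ |σ' * (br * gq + bi * gp)| := le_abs_self _
      _ = |σ'| * |br * gq + bi * gp| := abs_mul _ _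
      _ ≤ 1 * |br * gq + bi * gp| := by
          apply mul_le_mul_of_nonneg_right hσ (abs_nonneg _)
      _ = |br * gq + bi * gp| := one_mul _
      _ ≤ |br * gq| + |bi * gp| := abs_add_le _ _
      _ = |br| * |gq| + |bi| * |gp| := by rw [abs_mul, abs_mul]
  have h3 : ξk * (s * (br * gp - bi * gq)) ≤ ξk * (|br| * |gp| + |bi| * |gq|) :=
    mul_le_mul_of_nonneg_left k1 hξk
  have h4 : φk * (σ' * (br * gq + bi * gp)) ≤ φk * (|br| * |gq| + |bi| * |gp|) :=
    mul_le_mul_of_nonneg_left k2 hφk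
  have habr : (0:ℝ) ≤ |br| := abs_nonneg _
  have habi : (0:ℝ) ≤ |bi| := abs_nonneg _
  have hgp : (0:ℝ) ≤ |gp| := abs_nonneg _
  have hgq : (0:ℝ) ≤ |gq| := abs_nonneg _
  nlinarith [mul_le_mul_of_nonneg_left hGP (mul_nonneg hξk habr),
    mul_le_mul_of_nonneg_left hGQ (mul_nonneg hξk habi),
    mul_le_mul_of_nonneg_left hGQ (mul_nonneg hφk habr),
    mul_le_mul_of_nonneg_left hGP (mul_nonneg hφk habi)]
namespace S4
variable {n : ℕ}

def B1 (ξ φ : Fin n → ℝ) (aR aI : Fin n → Fin n → ℝ) (l : Fin n) : ℝ :=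
  ξ l * aR l l + (∑ j ∈ univ.erase l, ξ j * |aR j l|) + ∑ j, φ j * |aI j l|
def B2 (ξ φ : Fin n → ℝ) (aR aI : Fin n → Fin n → ℝ) (l : Fin n) : ℝ :=
  -(ξ l * aI l l) + (∑ j ∈ univ.erase l, ξ j * |aI j l|) + ∑ j, φ j * |aR j l|
def B3 (ξ φ : Fin n → ℝ) (aR aI : Fin n → Fin n → ℝ) (l : Fin n) : ℝ :=
  φ l * aR l l + (∑ j ∈ univ.erase l, φ j * |aR j l|) + ∑ j, ξ j * |aI j l|
def B4 (ξ φ : Fin n → ℝ) (aR aI : Fin n → Fin n → ℝ) (l : Fin n) : ℝ :=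
  φ l * aI l l + (∑ j ∈ univ.erase l, φ j * |aI j l|) + ∑ j, ξ j * |aR j l|

def cxv (d : Fin n → ℝ) (ξ φ : Fin n → ℝ) (aR aI : Fin n → Fin n → ℝ)
    (lRR lIR : Fin n → ℝ) (l : Fin n) : ℝ :=
  -(ξ l) * d l + max (B1 ξ φ aR aI l) 0 * lRR l + max (B2 ξ φ aR aI l) 0 * lIR l
def cyv (d : Fin n → ℝ) (ξ φ : Fin n → ℝ) (aR aI : Fin n → Fin n → ℝ)
    (lII lRI : Fin n → ℝ) (l : Fin n) : ℝ :=
  -(φ l) * d l + max (B3 ξ φ aR aI l) 0 * lII l + max (B4 ξ φ aR aI l) 0 * lRI l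

def rr (ξ φ : Fin n → ℝ) (bR bI : Fin n → Fin n → ℝ) (mRR mIR : Fin n → ℝ) (k l : Fin n) : ℝ :=
  ξ k * (|bR k l| * mRR l + |bI k l| * mIR l) + φ k * (|bR k l| * mIR l + |bI k l| * mRR l)
def qq (ξ φ : Fin n → ℝ) (bR bI : Fin n → Fin n → ℝ) (mRI mII : Fin n → ℝ) (k l : Fin n) : ℝ :=
  ξ k * (|bR k l| * mRI l + |bI k l| * mII l) + φ k * (|bR k l| * mII l + |bI k l| * mRI l)

lemma rr_nonneg {ξ φ : Fin n → ℝ} {bR bI : Fin n → Fin n → ℝ} {mRR mIR : Fin n → ℝ}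
    (hξ : ∀ j, 0 < ξ j) (hφ : ∀ j, 0 < φ j) (h1 : ∀ j, 0 < mRR j) (h2 : ∀ j, 0 < mIR j)
    (k l : Fin n) : 0 ≤ rr ξ φ bR bI mRR mIR k l := by
  have := hξ k; have := hφ k; have := h1 l; have := h2 l
  have := abs_nonneg (bR k l); have := abs_nonneg (bI k l)
  unfold rr; positivity

lemma qq_nonneg {ξ φ : Fin n → ℝ} {bR bI : Fin n → Fin n → ℝ} {mRI mII : Fin n → ℝ}
    (hξ : ∀ j, 0 < ξ j) (hφ : ∀ j, 0 < φ j) (h1 : ∀ j, 0 < mRI j) (h2 : ∀ j, 0 < mII j)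
    (k l : Fin n) : 0 ≤ qq ξ φ bR bI mRI mII k l := by
  have := hξ k; have := hφ k; have := h1 l; have := h2 l
  unfold qq; positivity

set_option maxHeartbeats 2000000 in
lemma stepA (ξ φ : Fin n → ℝ) (hξ : ∀ j, 0 < ξ j) (hφ : ∀ j, 0 < φ j)
    (aR aI : Fin n → Fin n → ℝ) (lRR lRI lIR lII : Fin n → ℝ)
    (X Y P Q s σ : Fin n → ℝ)
    (hs : ∀ k, |s k| ≤ 1 ∧ s k * X k = |X k|)
    (hσ : ∀ k, |σ k| ≤ 1 ∧ σ k * Y k = |Y k|)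
    (l : Fin n)
    (hP : ∃ α β, (0 < α ∧ α ≤ lRR l) ∧ (0 < β ∧ β ≤ lRI l) ∧ P l = α * X l + β * Y l)
    (hQ : ∃ α β, (0 < α ∧ α ≤ lIR l) ∧ (0 < β ∧ β ≤ lII l) ∧ Q l = α * X l + β * Y l) :
    (∑ k, (ξ k * (s k * (aR k l * P l - aI k l * Q l))
         + φ k * (σ k * (aR k l * Q l + aI k l * P l)))) ≤
      (max (B1 ξ φ aR aI l) 0 * lRR l + max (B2 ξ φ aR aI l) 0 * lIR l) * |X l| +
      (max (B3 ξ φ aR aI l) 0 * lII l + max (B4 ξ φ aR aI l) 0 * lRI l) * |Y l| := by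
  obtain ⟨α, β, ⟨hα0, hαl⟩, ⟨hβ0, hβl⟩, hPdef⟩ := hP
  obtain ⟨α', β', ⟨hα'0, hα'l⟩, ⟨hβ'0, hβ'l⟩, hQdef⟩ := hQ
  set C : ℝ := ∑ k, (ξ k * (s k * aR k l) + φ k * (σ k * aI k l)) with hC
  set C' : ℝ := ∑ k, (ξ k * (s k * (-aI k l)) + φ k * (σ k * aR k l)) with hC'
  have hLHS : (∑ k, (ξ k * (s k * (aR k l * P l - aI k l * Q l))
         + φ k * (σ k * (aR k l * Q l + aI k l * P l)))) = C * P l + C' * Q l := by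
    rw [hC, hC', Finset.sum_mul, Finset.sum_mul, ← Finset.sum_add_distrib]
    exact Finset.sum_congr rfl fun k _ => by ring
  rw [hLHS, hPdef, hQdef]
  have hXrep : X l = s l * |X l| := aux_sign_rep (hs l).1 (hs l).2
  have hYrep : Y l = σ l * |Y l| := aux_sign_rep (hσ l).1 (hσ l).2
  have key : C * (α * X l + β * Y l) + C' * (α' * X l + β' * Y l)
      = ((C * s l) * α + (C' * s l) * α') * |X l| + ((C * σ l) * β + (C' * σ l) * β') * |Y l| := by
    calc C * (α * X l + β * Y l) + C' * (α' * X l + β' * Y l)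
        = C * (α * (s l * |X l|) + β * (σ l * |Y l|))
          + C' * (α' * (s l * |X l|) + β' * (σ l * |Y l|)) := by rw [← hXrep, ← hYrep]
      _ = _ := by ring
  rw [key]
  have hXabs : (0:ℝ) ≤ |X l| := abs_nonneg _
  have hYabs : (0:ℝ) ≤ |Y l| := abs_nonneg _
  -- bound the X-coefficient
  have hXcoef : ((C * s l) * α + (C' * s l) * α') * |X l| ≤
      (max (B1 ξ φ aR aI l) 0 * lRR l + max (B2 ξ φ aR aI l) 0 * lIR l) * |X l| := by
    rcases eq_or_ne (X l) 0 with hX0 | hX0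
    · simp [hX0]
    · have hsl2 : s l * s l = 1 := by
        have h2 := (hs l).2
        have h1 := (hs l).1
        have : |s l| = 1 := by
          have habs : |s l| * |X l| = |X l| := by rw [← abs_mul, h2, abs_abs]
          have hXne : |X l| ≠ 0 := fun hc => hX0 (abs_eq_zero.1 hc)
          field_simp at habs; tauto
        nlinarith [sq_abs (s l)]
      have hCs : C * s l ≤ B1 ξ φ aR aI l := by
        rw [hC]
        exact aux_coef_bound ξ φ (fun k => le_of_lt (hξ k)) (fun k => le_of_lt (hφ k))
          s σ (fun k => (hs k).1) (fun k => (hσ k).1)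
          (fun k => aR k l) (fun k => aI k l) l hsl2
      have hC's : C' * s l ≤ B2 ξ φ aR aI l := by
        rw [hC']
        have := aux_coef_bound ξ φ (fun k => le_of_lt (hξ k)) (fun k => le_of_lt (hφ k))
          s σ (fun k => (hs k).1) (fun k => (hσ k).1)
          (fun k => -aI k l) (fun k => aR k l) l hsl2
        have heq : B2 ξ φ aR aI l = ξ l * (-aI l l)
            + (∑ k ∈ univ.erase l, ξ k * |(-aI k l)|) + ∑ k, φ k * |aR k l| := by
          unfold B2; simp [abs_neg]
        rw [heq]
        exact this
      have h1 := aux_posneg hCs hα0 hαl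
      have h2 := aux_posneg hC's hα'0 hα'l
      apply mul_le_mul_of_nonneg_right _ hXabs
      linarith
  have hYcoef : ((C * σ l) * β + (C' * σ l) * β') * |Y l| ≤
      (max (B3 ξ φ aR aI l) 0 * lII l + max (B4 ξ φ aR aI l) 0 * lRI l) * |Y l| := by
    rcases eq_or_ne (Y l) 0 with hY0 | hY0
    · simp [hY0]
    · have hσl2 : σ l * σ l = 1 := by
        have h2 := (hσ l).2
        have h1 := (hσ l).1
        have : |σ l| = 1 := by
          have habs : |σ l| * |Y l| = |Y l| := by rw [← abs_mul, h2, abs_abs]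
          have hYne : |Y l| ≠ 0 := fun hc => hY0 (abs_eq_zero.1 hc)
          field_simp at habs; tauto
        nlinarith [sq_abs (σ l)]
      have hCσ : C * σ l ≤ B4 ξ φ aR aI l := by
        rw [hC]
        have hCalt : (∑ k, (ξ k * (s k * aR k l) + φ k * (σ k * aI k l)))
            = ∑ k, (φ k * (σ k * aI k l) + ξ k * (s k * aR k l)) :=
          Finset.sum_congr rfl fun k _ => by ring
        rw [hCalt]
        exact aux_coef_bound φ ξ (fun k => le_of_lt (hφ k)) (fun k => le_of_lt (hξ k))
          σ s (fun k => (hσ k).1) (fun k => (hs k).1)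
          (fun k => aI k l) (fun k => aR k l) l hσl2
      have hC'σ : C' * σ l ≤ B3 ξ φ aR aI l := by
        rw [hC']
        have hCalt : (∑ k, (ξ k * (s k * (-aI k l)) + φ k * (σ k * aR k l)))
            = ∑ k, (φ k * (σ k * aR k l) + ξ k * (s k * (-aI k l))) :=
          Finset.sum_congr rfl fun k _ => by ring
        rw [hCalt]
        have := aux_coef_bound φ ξ (fun k => le_of_lt (hφ k)) (fun k => le_of_lt (hξ k))
          σ s (fun k => (hσ k).1) (fun k => (hs k).1)
          (fun k => aR k l) (fun k => -aI k l) l hσl2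
        have heq : B3 ξ φ aR aI l = φ l * aR l l
            + (∑ k ∈ univ.erase l, φ k * |aR k l|) + ∑ k, ξ k * |(-aI k l)| := by
          unfold B3; simp [abs_neg]
        rw [heq]
        exact this
      have h1 := aux_posneg hCσ hβ0 hβl
      have h2 := aux_posneg hC'σ hβ'0 hβ'l
      apply mul_le_mul_of_nonneg_right _ hYabs
      linarith
  linarith

set_option maxHeartbeats 2000000 in
/-- The master pointwise inequality. -/
lemma step (d ξ φ : Fin n → ℝ) (hξ : ∀ j, 0 < ξ j) (hφ : ∀ j, 0 < φ j)
    (aR aI bR bI : Fin n → Fin n → ℝ)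
    (lRR lRI lIR lII mRR mRI mIR mII : Fin n → ℝ)
    (X Y P Q s σ : Fin n → ℝ) (XD YD GPD GQD : Fin n → Fin n → ℝ)
    (hs : ∀ k, |s k| ≤ 1 ∧ s k * X k = |X k|)
    (hσ : ∀ k, |σ k| ≤ 1 ∧ σ k * Y k = |Y k|)
    (hP : ∀ l, ∃ α β, (0 < α ∧ α ≤ lRR l) ∧ (0 < β ∧ β ≤ lRI l) ∧ P l = α * X l + β * Y l)
    (hQ : ∀ l, ∃ α β, (0 < α ∧ α ≤ lIR l) ∧ (0 < β ∧ β ≤ lII l) ∧ Q l = α * X l + β * Y l)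
    (hGP : ∀ k l, |GPD k l| ≤ mRR l * XD k l + mRI l * YD k l)
    (hGQ : ∀ k l, |GQD k l| ≤ mIR l * XD k l + mII l * YD k l) :
    (∑ k, (ξ k * (s k * (-(d k) * X k + (∑ l, (aR k l * P l - aI k l * Q l))
                  + ∑ l, (bR k l * GPD k l - bI k l * GQD k l)))
         + φ k * (σ k * (-(d k) * Y k + (∑ l, (aR k l * Q l + aI k l * P l))
                  + ∑ l, (bR k l * GQD k l + bI k l * GPD k l)))))
    ≤ (∑ k, (cxv d ξ φ aR aI lRR lIR k * |X k| + cyv d ξ φ aR aI lII lRI k * |Y k|))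
      + ∑ k, ∑ l, (rr ξ φ bR bI mRR mIR k l * XD k l + qq ξ φ bR bI mRI mII k l * YD k l) := by
  have expand : (∑ k, (ξ k * (s k * (-(d k) * X k + (∑ l, (aR k l * P l - aI k l * Q l))
                  + ∑ l, (bR k l * GPD k l - bI k l * GQD k l)))
         + φ k * (σ k * (-(d k) * Y k + (∑ l, (aR k l * Q l + aI k l * P l))
                  + ∑ l, (bR k l * GQD k l + bI k l * GPD k l)))))
      = (∑ k, (-(ξ k * d k) * |X k| - (φ k * d k) * |Y k|))
        + (∑ k, ∑ l, (ξ k * (s k * (aR k l * P l - aI k l * Q l))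
                    + φ k * (σ k * (aR k l * Q l + aI k l * P l))))
        + (∑ k, ∑ l, (ξ k * (s k * (bR k l * GPD k l - bI k l * GQD k l))
                    + φ k * (σ k * (bR k l * GQD k l + bI k l * GPD k l)))) := by
    rw [← Finset.sum_add_distrib, ← Finset.sum_add_distrib]
    refine Finset.sum_congr rfl fun k _ => ?_
    have e1 : (∑ l, (ξ k * (s k * (aR k l * P l - aI k l * Q l))
            + φ k * (σ k * (aR k l * Q l + aI k l * P l))))
        = ξ k * s k * (∑ l, (aR k l * P l - aI k l * Q l))
          + φ k * σ k * (∑ l, (aR k l * Q l + aI k l * P l)) := by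
      rw [Finset.sum_add_distrib, Finset.mul_sum, Finset.mul_sum]
      congr 1 <;> exact Finset.sum_congr rfl fun l _ => by ring
    have e2 : (∑ l, (ξ k * (s k * (bR k l * GPD k l - bI k l * GQD k l))
            + φ k * (σ k * (bR k l * GQD k l + bI k l * GPD k l))))
        = ξ k * s k * (∑ l, (bR k l * GPD k l - bI k l * GQD k l))
          + φ k * σ k * (∑ l, (bR k l * GQD k l + bI k l * GPD k l)) := by
      rw [Finset.sum_add_distrib, Finset.mul_sum, Finset.mul_sum]
      congr 1 <;> exact Finset.sum_congr rfl fun l _ => by ring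
    rw [e1, e2, ← (hs k).2, ← (hσ k).2]
    ring
  rw [expand]
  have hA : (∑ k, ∑ l, (ξ k * (s k * (aR k l * P l - aI k l * Q l))
                    + φ k * (σ k * (aR k l * Q l + aI k l * P l))))
      ≤ ∑ l, ((max (B1 ξ φ aR aI l) 0 * lRR l + max (B2 ξ φ aR aI l) 0 * lIR l) * |X l| +
              (max (B3 ξ φ aR aI l) 0 * lII l + max (B4 ξ φ aR aI l) 0 * lRI l) * |Y l|) := by
    rw [Finset.sum_comm]
    exact Finset.sum_le_sum fun l _ =>
      stepA ξ φ hξ hφ aR aI lRR lRI lIR lII X Y P Q s σ hs hσ l (hP l) (hQ l)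
  have hD : (∑ k, ∑ l, (ξ k * (s k * (bR k l * GPD k l - bI k l * GQD k l))
                    + φ k * (σ k * (bR k l * GQD k l + bI k l * GPD k l))))
      ≤ ∑ k, ∑ l, (rr ξ φ bR bI mRR mIR k l * XD k l + qq ξ φ bR bI mRI mII k l * YD k l) := by
    refine Finset.sum_le_sum fun k _ => Finset.sum_le_sum fun l _ => ?_
    have h := aux_delay (s := s k) (σ' := σ k) (gp := GPD k l) (gq := GQD k l)
      (xd := XD k l) (yd := YD k l) (ξk := ξ k) (φk := φ k)
      (br := bR k l) (bi := bI k l)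
      (mRR := mRR l) (mRI := mRI l) (mIR := mIR l) (mII := mII l)
      (hs k).1 (hσ k).1 (hGP k l) (hGQ k l) (le_of_lt (hξ k)) (le_of_lt (hφ k))
    calc ξ k * (s k * (bR k l * GPD k l - bI k l * GQD k l))
          + φ k * (σ k * (bR k l * GQD k l + bI k l * GPD k l))
        ≤ (ξ k * (|bR k l| * mRR l + |bI k l| * mIR l)
            + φ k * (|bR k l| * mIR l + |bI k l| * mRR l)) * XD k l +
          (ξ k * (|bR k l| * mRI l + |bI k l| * mII l)
            + φ k * (|bR k l| * mII l + |bI k l| * mRI l)) * YD k l := h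
      _ = rr ξ φ bR bI mRR mIR k l * XD k l + qq ξ φ bR bI mRI mII k l * YD k l := by
          unfold rr qq; ring
  have hmerge : (∑ k, (-(ξ k * d k) * |X k| - (φ k * d k) * |Y k|))
      + (∑ l, ((max (B1 ξ φ aR aI l) 0 * lRR l + max (B2 ξ φ aR aI l) 0 * lIR l) * |X l| +
              (max (B3 ξ φ aR aI l) 0 * lII l + max (B4 ξ φ aR aI l) 0 * lRI l) * |Y l|))
      = ∑ k, (cxv d ξ φ aR aI lRR lIR k * |X k| + cyv d ξ φ aR aI lII lRI k * |Y k|) := by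
    rw [← Finset.sum_add_distrib]
    refine Finset.sum_congr rfl fun k _ => ?_
    unfold cxv cyv
    ring
  linarith
set_option maxHeartbeats 4000000 in
/-- The key Lyapunov decay lemma for differences of solutions (abstract form). -/
lemma key (d ξ φ : Fin n → ℝ) (hξ : ∀ j, 0 < ξ j) (hφ : ∀ j, 0 < φ j)
    (aR aI bR bI τ : Fin n → Fin n → ℝ) (hτ : ∀ j k, 0 ≤ τ j k)
    (lRR lRI lIR lII mRR mRI mIR mII : Fin n → ℝ)
    (hm : ∀ j, 0 < mRR j ∧ 0 < mRI j ∧ 0 < mIR j ∧ 0 < mII j)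
    (δ : ℝ) (hδ0 : 0 < δ)
    (hδx : ∀ l, δ * ξ l + cxv d ξ φ aR aI lRR lIR l
      + (∑ k, rr ξ φ bR bI mRR mIR k l * exp (δ * τ k l)) ≤ 0)
    (hδy : ∀ l, δ * φ l + cyv d ξ φ aR aI lII lRI l
      + (∑ k, qq ξ φ bR bI mRI mII k l * exp (δ * τ k l)) ≤ 0)
    (x y : Fin n → ℝ → ℝ)
    (hxc : ∀ k, Continuous (x k)) (hyc : ∀ k, Continuous (y k))
    (P Q GP GQ : Fin n → ℝ → ℝ)
    (hP : ∀ l t, ∃ α β, (0 < α ∧ α ≤ lRR l) ∧ (0 < β ∧ β ≤ lRI l) ∧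
        P l t = α * x l t + β * y l t)
    (hQ : ∀ l t, ∃ α β, (0 < α ∧ α ≤ lIR l) ∧ (0 < β ∧ β ≤ lII l) ∧
        Q l t = α * x l t + β * y l t)
    (hGP : ∀ l u, |GP l u| ≤ mRR l * |x l u| + mRI l * |y l u|)
    (hGQ : ∀ l u, |GQ l u| ≤ mIR l * |x l u| + mII l * |y l u|)
    (hdx : ∀ k t, 0 ≤ t → HasDerivAt (x k)
        (-(d k) * x k t + (∑ l, (aR k l * P l t - aI k l * Q l t))
          + ∑ l, (bR k l * GP l (t - τ k l) - bI k l * GQ l (t - τ k l))) t)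
    (hdy : ∀ k t, 0 ≤ t → HasDerivAt (y k)
        (-(d k) * y k t + (∑ l, (aR k l * Q l t + aI k l * P l t))
          + ∑ l, (bR k l * GQ l (t - τ k l) + bI k l * GP l (t - τ k l))) t)
    (K : ℝ)
    (hK : ∀ u ∈ Icc (-(∑ j, ∑ k, τ j k)) (0:ℝ), (∑ k, (ξ k * |x k u| + φ k * |y k u|)) ≤ K) :
    ∀ t, 0 ≤ t → (∑ k, (ξ k * |x k t| + φ k * |y k t|)) ≤
      (1 + ∑ k, ∑ l, (rr ξ φ bR bI mRR mIR k l * exp (δ * τ k l) * τ k l / ξ l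
         + qq ξ φ bR bI mRI mII k l * exp (δ * τ k l) * τ k l / φ l)) * K * exp (-δ * t) := by
  have hrr : ∀ k l, 0 ≤ rr ξ φ bR bI mRR mIR k l :=
    rr_nonneg hξ hφ (fun j => (hm j).1) (fun j => (hm j).2.2.1)
  have hqq : ∀ k l, 0 ≤ qq ξ φ bR bI mRI mII k l :=
    qq_nonneg hξ hφ (fun j => (hm j).2.1) (fun j => (hm j).2.2.2)
  set W : ℝ → ℝ := fun t => ∑ k, (ξ k * |x k t| + φ k * |y k t|) with hW
  have hWc : Continuous W := by
    apply continuous_finset_sum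
    intro k _
    exact ((continuous_const.mul (hxc k).abs).add (continuous_const.mul (hyc k).abs))
  have hWnonneg : ∀ t, 0 ≤ W t := by
    intro t
    apply Finset.sum_nonneg
    intro k _
    have := hξ k; have := hφ k
    positivity
  set Fx : Fin n → ℝ → ℝ := fun l s => exp (δ * s) * |x l s| with hFx
  set Fy : Fin n → ℝ → ℝ := fun l s => exp (δ * s) * |y l s| with hFy
  have hFxc : ∀ l, Continuous (Fx l) := fun l =>
    (Real.continuous_exp.comp (continuous_const.mul continuous_id)).mul (hxc l).abs
  have hFyc : ∀ l, Continuous (Fy l) := fun l =>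
    (Real.continuous_exp.comp (continuous_const.mul continuous_id)).mul (hyc l).abs
  have hFxnn : ∀ l s, 0 ≤ Fx l s := fun l s => mul_nonneg (le_of_lt (exp_pos _)) (abs_nonneg _)
  have hFynn : ∀ l s, 0 ≤ Fy l s := fun l s => mul_nonneg (le_of_lt (exp_pos _)) (abs_nonneg _)
  set Gx : Fin n → ℝ → ℝ := fun l t => ∫ s in (0:ℝ)..t, Fx l s with hGxdef
  set Gy : Fin n → ℝ → ℝ := fun l t => ∫ s in (0:ℝ)..t, Fy l s with hGydef
  have hGxd : ∀ l t, HasDerivAt (Gx l) (Fx l t) t := fun l t =>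
    ((hFxc l).integral_hasStrictDerivAt 0 t).hasDerivAt
  have hGyd : ∀ l t, HasDerivAt (Gy l) (Fy l t) t := fun l t =>
    ((hFyc l).integral_hasStrictDerivAt 0 t).hasDerivAt
  have hGxc : ∀ l, Continuous (Gx l) := fun l =>
    continuous_iff_continuousAt.2 fun t => (hGxd l t).continuousAt
  have hGyc : ∀ l, Continuous (Gy l) := fun l =>
    continuous_iff_continuousAt.2 fun t => (hGyd l t).continuousAt
  have hGxint : ∀ l a b, Gx l b - Gx l a = ∫ s in a..b, Fx l s := by
    intro l a b
    have h1 := intervalIntegral.integral_add_adjacent_intervals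
      (a := 0) (b := a) (c := b) ((hFxc l).intervalIntegrable (μ := MeasureTheory.volume) 0 a) ((hFxc l).intervalIntegrable (μ := MeasureTheory.volume) a b)
    rw [hGxdef]
    dsimp only
    linarith
  have hGyint : ∀ l a b, Gy l b - Gy l a = ∫ s in a..b, Fy l s := by
    intro l a b
    have h1 := intervalIntegral.integral_add_adjacent_intervals
      (a := 0) (b := a) (c := b) ((hFyc l).intervalIntegrable (μ := MeasureTheory.volume) 0 a) ((hFyc l).intervalIntegrable (μ := MeasureTheory.volume) a b)
    rw [hGydef]
    dsimp only
    linarith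
  set V : ℝ → ℝ := fun t => exp (δ * t) * W t
    + (∑ k, ∑ l, rr ξ φ bR bI mRR mIR k l * exp (δ * τ k l) * (Gx l t - Gx l (t - τ k l)))
    + (∑ k, ∑ l, qq ξ φ bR bI mRI mII k l * exp (δ * τ k l) * (Gy l t - Gy l (t - τ k l)))
    with hV
  -- V dominates exp(δt) W t
  have hVlow : ∀ t, exp (δ * t) * W t ≤ V t := by
    intro t
    rw [hV]
    dsimp only
    have h1 : (0:ℝ) ≤ ∑ k, ∑ l, rr ξ φ bR bI mRR mIR k l * exp (δ * τ k l)
        * (Gx l t - Gx l (t - τ k l)) := by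
      apply Finset.sum_nonneg; intro k _; apply Finset.sum_nonneg; intro l _
      apply mul_nonneg (mul_nonneg (hrr k l) (le_of_lt (exp_pos _)))
      rw [hGxint]
      apply intervalIntegral.integral_nonneg (by linarith [hτ k l])
      intro u _; exact hFxnn l u
    have h2 : (0:ℝ) ≤ ∑ k, ∑ l, qq ξ φ bR bI mRI mII k l * exp (δ * τ k l)
        * (Gy l t - Gy l (t - τ k l)) := by
      apply Finset.sum_nonneg; intro k _; apply Finset.sum_nonneg; intro l _
      apply mul_nonneg (mul_nonneg (hqq k l) (le_of_lt (exp_pos _)))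
      rw [hGyint]
      apply intervalIntegral.integral_nonneg (by linarith [hτ k l])
      intro u _; exact hFynn l u
    linarith
  -- continuity of V
  have hVc : Continuous V := by
    rw [hV]
    apply Continuous.add
    apply Continuous.add
    · exact (Real.continuous_exp.comp (continuous_const.mul continuous_id)).mul hWc
    · apply continuous_finset_sum; intro k _; apply continuous_finset_sum; intro l _
      exact continuous_const.mul ((hGxc l).sub ((hGxc l).comp (continuous_id.sub continuous_const)))
    · apply continuous_finset_sum; intro k _; apply continuous_finset_sum; intro l _
      exact continuous_const.mul ((hGyc l).sub ((hGyc l).comp (continuous_id.sub continuous_const)))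
  -- some abbreviations
  set RR := rr ξ φ bR bI mRR mIR with hRR
  set QQ := qq ξ φ bR bI mRI mII with hQQ
  set CX := cxv d ξ φ aR aI lRR lIR with hCX
  set CY := cyv d ξ φ aR aI lII lRI with hCY
  -- the right derivative of V is ≤ 0 on t ≥ 0
  have hVd : ∀ t, 0 ≤ t → ∃ D, D ≤ 0 ∧ HasDerivWithinAt V D (Ici t) t := by
    intro t ht
    choose s hs1 hs2 hs3 using fun k => aux_abs_right_deriv (hdx k t ht)
    choose σ hσ1 hσ2 hσ3 using fun k => aux_abs_right_deriv (hdy k t ht)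
    have hWd : HasDerivWithinAt W
        (∑ k, (ξ k * (s k * (-(d k) * x k t + (∑ l, (aR k l * P l t - aI k l * Q l t))
              + ∑ l, (bR k l * GP l (t - τ k l) - bI k l * GQ l (t - τ k l))))
            + φ k * (σ k * (-(d k) * y k t + (∑ l, (aR k l * Q l t + aI k l * P l t))
              + ∑ l, (bR k l * GQ l (t - τ k l) + bI k l * GP l (t - τ k l))))))
        (Ici t) t := by
      rw [hW]
      apply HasDerivWithinAt.fun_sum
      intro k _
      exact ((hs3 k).const_mul (ξ k)).add ((hσ3 k).const_mul (φ k))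
    have hExpd : HasDerivAt (fun u => exp (δ * u)) (exp (δ * t) * δ) t := by
      simpa using ((hasDerivAt_id t).const_mul δ).exp
    have hIxd : HasDerivAt (fun u => ∑ k, ∑ l, RR k l * exp (δ * τ k l)
          * (Gx l u - Gx l (u - τ k l)))
        (∑ k, ∑ l, RR k l * exp (δ * τ k l) * (Fx l t - Fx l (t - τ k l) * 1)) t := by
      apply HasDerivAt.fun_sum
      intro k _
      apply HasDerivAt.fun_sum
      intro l _
      have hcomp : HasDerivAt (fun u => Gx l (u - τ k l)) (Fx l (t - τ k l) * 1) t := by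
        have := HasDerivAt.comp t (hGxd l (t - τ k l)) ((hasDerivAt_id t).sub_const (τ k l))
        exact this
      exact ((hGxd l t).sub hcomp).const_mul _
    have hIyd : HasDerivAt (fun u => ∑ k, ∑ l, QQ k l * exp (δ * τ k l)
          * (Gy l u - Gy l (u - τ k l)))
        (∑ k, ∑ l, QQ k l * exp (δ * τ k l) * (Fy l t - Fy l (t - τ k l) * 1)) t := by
      apply HasDerivAt.fun_sum
      intro k _
      apply HasDerivAt.fun_sum
      intro l _
      have hcomp : HasDerivAt (fun u => Gy l (u - τ k l)) (Fy l (t - τ k l) * 1) t := by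
        have := HasDerivAt.comp t (hGyd l (t - τ k l)) ((hasDerivAt_id t).sub_const (τ k l))
        exact this
      exact ((hGyd l t).sub hcomp).const_mul _
    have hVder : HasDerivWithinAt V
        (exp (δ * t) * δ * W t + exp (δ * t)
            * (∑ k, (ξ k * (s k * (-(d k) * x k t + (∑ l, (aR k l * P l t - aI k l * Q l t))
              + ∑ l, (bR k l * GP l (t - τ k l) - bI k l * GQ l (t - τ k l))))
            + φ k * (σ k * (-(d k) * y k t + (∑ l, (aR k l * Q l t + aI k l * P l t))
              + ∑ l, (bR k l * GQ l (t - τ k l) + bI k l * GP l (t - τ k l))))))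
          + (∑ k, ∑ l, RR k l * exp (δ * τ k l) * (Fx l t - Fx l (t - τ k l) * 1))
          + (∑ k, ∑ l, QQ k l * exp (δ * τ k l) * (Fy l t - Fy l (t - τ k l) * 1)))
        (Ici t) t := by
      rw [hV]
      exact ((hExpd.hasDerivWithinAt.mul hWd).add hIxd.hasDerivWithinAt).add
        hIyd.hasDerivWithinAt
    refine ⟨_, ?_, hVder⟩
    -- now show the derivative value is ≤ 0
    have hstep := step d ξ φ hξ hφ aR aI bR bI lRR lRI lIR lII mRR mRI mIR mII
      (fun k => x k t) (fun k => y k t) (fun l => P l t) (fun l => Q l t) s σ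
      (fun k l => |x l (t - τ k l)|) (fun k l => |y l (t - τ k l)|)
      (fun k l => GP l (t - τ k l)) (fun k l => GQ l (t - τ k l))
      (fun k => ⟨hs1 k, hs2 k⟩) (fun k => ⟨hσ1 k, hσ2 k⟩)
      (fun l => hP l t) (fun l => hQ l t)
      (fun k l => hGP l (t - τ k l)) (fun k l => hGQ l (t - τ k l))
    rw [← hRR, ← hQQ, ← hCX, ← hCY] at hstep
    set E := exp (δ * t) with hE
    have hEpos : 0 < E := exp_pos _
    have I1 : (∑ k, ∑ l, RR k l * exp (δ * τ k l) * (Fx l t - Fx l (t - τ k l) * 1))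
        = E * (∑ k, ∑ l, RR k l * exp (δ * τ k l) * |x l t|)
          - E * (∑ k, ∑ l, RR k l * |x l (t - τ k l)|) := by
      rw [Finset.mul_sum, Finset.mul_sum, ← Finset.sum_sub_distrib]
      refine Finset.sum_congr rfl fun k _ => ?_
      rw [Finset.mul_sum, Finset.mul_sum, ← Finset.sum_sub_distrib]
      refine Finset.sum_congr rfl fun l _ => ?_
      have hee : exp (δ * τ k l) * exp (δ * (t - τ k l)) = E := by
        rw [hE, ← Real.exp_add]; ring_nf
      rw [hFx]
      dsimp only
      linear_combination (-(RR k l * |x l (t - τ k l)|)) * hee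
    have I2 : (∑ k, ∑ l, QQ k l * exp (δ * τ k l) * (Fy l t - Fy l (t - τ k l) * 1))
        = E * (∑ k, ∑ l, QQ k l * exp (δ * τ k l) * |y l t|)
          - E * (∑ k, ∑ l, QQ k l * |y l (t - τ k l)|) := by
      rw [Finset.mul_sum, Finset.mul_sum, ← Finset.sum_sub_distrib]
      refine Finset.sum_congr rfl fun k _ => ?_
      rw [Finset.mul_sum, Finset.mul_sum, ← Finset.sum_sub_distrib]
      refine Finset.sum_congr rfl fun l _ => ?_
      have hee : exp (δ * τ k l) * exp (δ * (t - τ k l)) = E := by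
        rw [hE, ← Real.exp_add]; ring_nf
      rw [hFy]
      dsimp only
      linear_combination (-(QQ k l * |y l (t - τ k l)|)) * hee
    have hsplit : (∑ k, ∑ l, (RR k l * |x l (t - τ k l)| + QQ k l * |y l (t - τ k l)|))
        = (∑ k, ∑ l, RR k l * |x l (t - τ k l)|)
          + (∑ k, ∑ l, QQ k l * |y l (t - τ k l)|) := by
      rw [← Finset.sum_add_distrib]
      exact Finset.sum_congr rfl fun k _ => Finset.sum_add_distrib
    have hcol : δ * W t + (∑ k, (CX k * |x k t| + CY k * |y k t|))
        + (∑ k, ∑ l, RR k l * exp (δ * τ k l) * |x l t|)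
        + (∑ k, ∑ l, QQ k l * exp (δ * τ k l) * |y l t|) ≤ 0 := by
      have h1 : (∑ k, ∑ l, RR k l * exp (δ * τ k l) * |x l t|)
          = ∑ l, (∑ k, RR k l * exp (δ * τ k l)) * |x l t| := by
        rw [Finset.sum_comm]
        exact Finset.sum_congr rfl fun l _ => (Finset.sum_mul _ _ _).symm
      have h2 : (∑ k, ∑ l, QQ k l * exp (δ * τ k l) * |y l t|)
          = ∑ l, (∑ k, QQ k l * exp (δ * τ k l)) * |y l t| := by
        rw [Finset.sum_comm]
        exact Finset.sum_congr rfl fun l _ => (Finset.sum_mul _ _ _).symm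
      rw [h1, h2, hW]
      dsimp only
      rw [Finset.mul_sum, ← Finset.sum_add_distrib, ← Finset.sum_add_distrib,
        ← Finset.sum_add_distrib]
      apply Finset.sum_nonpos
      intro l _
      have hxl := abs_nonneg (x l t)
      have hyl := abs_nonneg (y l t)
      have e1 : δ * (ξ l * |x l t| + φ l * |y l t|) + (CX l * |x l t| + CY l * |y l t|)
          + (∑ k, RR k l * exp (δ * τ k l)) * |x l t|
          + (∑ k, QQ k l * exp (δ * τ k l)) * |y l t|
          = (δ * ξ l + CX l + ∑ k, RR k l * exp (δ * τ k l)) * |x l t|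
            + (δ * φ l + CY l + ∑ k, QQ k l * exp (δ * τ k l)) * |y l t| := by ring
      rw [e1]
      exact add_nonpos (mul_nonpos_of_nonpos_of_nonneg (hδx l) hxl)
        (mul_nonpos_of_nonpos_of_nonneg (hδy l) hyl)
    rw [I1, I2]
    have hmul := mul_le_mul_of_nonneg_left hstep (le_of_lt hEpos)
    have hcol2 := mul_le_mul_of_nonneg_left hcol (le_of_lt hEpos)
    nlinarith [hmul, hcol2, hsplit]
  have hmono := aux_antitone_of_right_deriv V hVc.continuousOn hVd
  have hτm : ∀ k l, τ k l ≤ ∑ j, ∑ k', τ j k' := by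
    intro k l
    calc τ k l ≤ ∑ k', τ k k' := Finset.single_le_sum (fun i _ => hτ k i) (mem_univ l)
      _ ≤ ∑ j, ∑ k', τ j k' := Finset.single_le_sum
          (fun j _ => Finset.sum_nonneg fun i _ => hτ j i) (mem_univ k)
  have hτm0 : (0:ℝ) ≤ ∑ j, ∑ k', τ j k' :=
    Finset.sum_nonneg fun j _ => Finset.sum_nonneg fun i _ => hτ j i
  have hK0 : 0 ≤ K := le_trans (hWnonneg 0) (hK 0 ⟨by linarith, le_rfl⟩)
  have habs_le : ∀ l u, u ∈ Icc (-(∑ j, ∑ k', τ j k')) (0:ℝ) →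
      |x l u| ≤ K / ξ l ∧ |y l u| ≤ K / φ l := by
    intro l u hu
    have hWu := hK u hu
    have hterm : ξ l * |x l u| + φ l * |y l u| ≤ W u := by
      rw [hW]
      exact Finset.single_le_sum (f := fun k => ξ k * |x k u| + φ k * |y k u|)
        (fun k _ => by have := hξ k; have := hφ k; positivity) (mem_univ l)
    constructor
    · rw [le_div_iff₀ (hξ l)]
      nlinarith [abs_nonneg (y l u), hφ l]
    · rw [le_div_iff₀ (hφ l)]
      nlinarith [abs_nonneg (x l u), hξ l]
  have hIx : ∀ k l, Gx l 0 - Gx l (0 - τ k l) ≤ τ k l * (K / ξ l) := by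
    intro k l
    rw [hGxint]
    calc (∫ s' in (0 - τ k l)..(0:ℝ), Fx l s')
        ≤ ∫ _s' in (0 - τ k l)..(0:ℝ), (K / ξ l) := by
          apply intervalIntegral.integral_mono_on (by linarith [hτ k l])
            ((hFxc l).intervalIntegrable (μ := MeasureTheory.volume) _ _)
            intervalIntegrable_const
          intro u hu
          obtain ⟨hu1, hu2⟩ := hu
          have huIcc : u ∈ Icc (-(∑ j, ∑ k', τ j k')) (0:ℝ) :=
            ⟨by linarith [hτm k l], hu2⟩
          have h1 := (habs_le l u huIcc).1
          rw [hFx]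
          have he : exp (δ * u) ≤ 1 := by
            rw [Real.exp_le_one_iff]
            have := hδ0
            nlinarith
          calc exp (δ * u) * |x l u| ≤ 1 * (K / ξ l) := by
                apply mul_le_mul he h1 (abs_nonneg _) zero_le_one
            _ = K / ξ l := one_mul _
      _ = τ k l * (K / ξ l) := by
          rw [intervalIntegral.integral_const, smul_eq_mul]
          ring_nf
  have hIy : ∀ k l, Gy l 0 - Gy l (0 - τ k l) ≤ τ k l * (K / φ l) := by
    intro k l
    rw [hGyint]
    calc (∫ s' in (0 - τ k l)..(0:ℝ), Fy l s')
        ≤ ∫ _s' in (0 - τ k l)..(0:ℝ), (K / φ l) := by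
          apply intervalIntegral.integral_mono_on (by linarith [hτ k l])
            ((hFyc l).intervalIntegrable (μ := MeasureTheory.volume) _ _)
            intervalIntegrable_const
          intro u hu
          obtain ⟨hu1, hu2⟩ := hu
          have huIcc : u ∈ Icc (-(∑ j, ∑ k', τ j k')) (0:ℝ) :=
            ⟨by linarith [hτm k l], hu2⟩
          have h1 := (habs_le l u huIcc).2
          rw [hFy]
          have he : exp (δ * u) ≤ 1 := by
            rw [Real.exp_le_one_iff]
            have := hδ0
            nlinarith
          calc exp (δ * u) * |y l u| ≤ 1 * (K / φ l) := by
                apply mul_le_mul he h1 (abs_nonneg _) zero_le_one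
            _ = K / φ l := one_mul _
      _ = τ k l * (K / φ l) := by
          rw [intervalIntegral.integral_const, smul_eq_mul]
          ring_nf
  have hV0 : V 0 ≤ (1 + ∑ k, ∑ l, (RR k l * exp (δ * τ k l) * τ k l / ξ l
      + QQ k l * exp (δ * τ k l) * τ k l / φ l)) * K := by
    rw [hV]
    have hW0 : W 0 ≤ K := hK 0 ⟨by linarith, le_rfl⟩
    have hsumx : (∑ k, ∑ l, RR k l * exp (δ * τ k l) * (Gx l 0 - Gx l (0 - τ k l)))
        ≤ ∑ k, ∑ l, RR k l * exp (δ * τ k l) * (τ k l * (K / ξ l)) :=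
      Finset.sum_le_sum fun k _ => Finset.sum_le_sum fun l _ =>
        mul_le_mul_of_nonneg_left (hIx k l)
          (mul_nonneg (hrr k l) (le_of_lt (exp_pos _)))
    have hsumy : (∑ k, ∑ l, QQ k l * exp (δ * τ k l) * (Gy l 0 - Gy l (0 - τ k l)))
        ≤ ∑ k, ∑ l, QQ k l * exp (δ * τ k l) * (τ k l * (K / φ l)) :=
      Finset.sum_le_sum fun k _ => Finset.sum_le_sum fun l _ =>
        mul_le_mul_of_nonneg_left (hIy k l)
          (mul_nonneg (hqq k l) (le_of_lt (exp_pos _)))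
    have hRHS : (1 + ∑ k, ∑ l, (RR k l * exp (δ * τ k l) * τ k l / ξ l
        + QQ k l * exp (δ * τ k l) * τ k l / φ l)) * K
        = K + ((∑ k, ∑ l, RR k l * exp (δ * τ k l) * (τ k l * (K / ξ l)))
          + (∑ k, ∑ l, QQ k l * exp (δ * τ k l) * (τ k l * (K / φ l)))) := by
      rw [add_mul, one_mul, Finset.sum_mul]
      congr 1
      rw [← Finset.sum_add_distrib]
      refine Finset.sum_congr rfl fun k _ => ?_
      rw [Finset.sum_mul, ← Finset.sum_add_distrib]
      refine Finset.sum_congr rfl fun l _ => ?_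
      have hξl := ne_of_gt (hξ l)
      have hφl := ne_of_gt (hφ l)
      field_simp
    rw [hRHS]
    dsimp only
    have he0 : exp (δ * 0) = 1 := by norm_num
    rw [he0, one_mul]
    linarith
  -- conclusion
  intro t ht
  have h1 := hVlow t
  have h2 := hmono t ht
  have h3 : exp (δ * t) * W t ≤ (1 + ∑ k, ∑ l, (RR k l * exp (δ * τ k l) * τ k l / ξ l
      + QQ k l * exp (δ * τ k l) * τ k l / φ l)) * K := le_trans h1 (le_trans h2 hV0)
  have hgoal : -δ * t = -(δ * t) := by ring
  rw [show W t = ∑ k, (ξ k * |x k t| + φ k * |y k t|) from by rw [hW]] at h3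
  rw [hgoal]
  have h5 : exp (-(δ * t)) * exp (δ * t) = 1 := by
    rw [← Real.exp_add]; simp
  have h7 := mul_le_mul_of_nonneg_left h3 (le_of_lt (exp_pos (-(δ * t))))
  have h6 : exp (-(δ * t)) * (exp (δ * t) * (∑ k, (ξ k * |x k t| + φ k * |y k t|)))
      = ∑ k, (ξ k * |x k t| + φ k * |y k t|) := by
    rw [← mul_assoc, h5, one_mul]
  rw [h6] at h7
  have h8 : (1 + ∑ k, ∑ l, (RR k l * exp (δ * τ k l) * τ k l / ξ l
      + QQ k l * exp (δ * τ k l) * τ k l / φ l)) * K * exp (-(δ * t))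
      = exp (-(δ * t)) * ((1 + ∑ k, ∑ l, (RR k l * exp (δ * τ k l) * τ k l / ξ l
      + QQ k l * exp (δ * τ k l) * τ k l / φ l)) * K) := by ring
  rw [h8]
  exact h7
lemma exists_delta (hn : 1 ≤ n) (d ξ φ : Fin n → ℝ) (hξ : ∀ j, 0 < ξ j) (hφ : ∀ j, 0 < φ j)
    (aR aI bR bI τ : Fin n → Fin n → ℝ) (hτ : ∀ j k, 0 ≤ τ j k)
    (lRR lRI lIR lII mRR mRI mIR mII : Fin n → ℝ)
    (hm : ∀ j, 0 < mRR j ∧ 0 < mRI j ∧ 0 < mIR j ∧ 0 < mII j)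
    (hT9 : ∀ l, cxv d ξ φ aR aI lRR lIR l + (∑ k, rr ξ φ bR bI mRR mIR k l) < 0)
    (hT10 : ∀ l, cyv d ξ φ aR aI lII lRI l + (∑ k, qq ξ φ bR bI mRI mII k l) < 0) :
    ∃ δ : ℝ, 0 < δ ∧
      (∀ l, δ * ξ l + cxv d ξ φ aR aI lRR lIR l
        + (∑ k, rr ξ φ bR bI mRR mIR k l * exp (δ * τ k l)) ≤ 0) ∧
      (∀ l, δ * φ l + cyv d ξ φ aR aI lII lRI l
        + (∑ k, qq ξ φ bR bI mRI mII k l * exp (δ * τ k l)) ≤ 0) := by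
  have hrr : ∀ k l, 0 ≤ rr ξ φ bR bI mRR mIR k l :=
    rr_nonneg hξ hφ (fun j => (hm j).1) (fun j => (hm j).2.2.1)
  have hqq : ∀ k l, 0 ≤ qq ξ φ bR bI mRI mII k l :=
    qq_nonneg hξ hφ (fun j => (hm j).2.1) (fun j => (hm j).2.2.2)
  have hne : (univ : Finset (Fin n)).Nonempty := ⟨⟨0, hn⟩, mem_univ _⟩
  set εx : Fin n → ℝ := fun l => -(cxv d ξ φ aR aI lRR lIR l + ∑ k, rr ξ φ bR bI mRR mIR k l)
    with hεx
  set εy : Fin n → ℝ := fun l => -(cyv d ξ φ aR aI lII lRI l + ∑ k, qq ξ φ bR bI mRI mII k l)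
    with hεy
  have hεxpos : ∀ l, 0 < εx l := fun l => by rw [hεx]; dsimp only; linarith [hT9 l]
  have hεypos : ∀ l, 0 < εy l := fun l => by rw [hεy]; dsimp only; linarith [hT10 l]
  set Gx : Fin n → ℝ := fun l => ξ l + ∑ k, rr ξ φ bR bI mRR mIR k l * τ k l * exp (τ k l)
    with hGx
  set Gy : Fin n → ℝ := fun l => φ l + ∑ k, qq ξ φ bR bI mRI mII k l * τ k l * exp (τ k l)
    with hGy
  have hGxpos : ∀ l, 0 < Gx l := by
    intro l
    rw [hGx]; dsimp only
    have h1 : (0:ℝ) ≤ ∑ k, rr ξ φ bR bI mRR mIR k l * τ k l * exp (τ k l) :=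
      Finset.sum_nonneg fun k _ =>
        mul_nonneg (mul_nonneg (hrr k l) (hτ k l)) (le_of_lt (exp_pos _))
    linarith [hξ l]
  have hGypos : ∀ l, 0 < Gy l := by
    intro l
    rw [hGy]; dsimp only
    have h1 : (0:ℝ) ≤ ∑ k, qq ξ φ bR bI mRI mII k l * τ k l * exp (τ k l) :=
      Finset.sum_nonneg fun k _ =>
        mul_nonneg (mul_nonneg (hqq k l) (hτ k l)) (le_of_lt (exp_pos _))
    linarith [hφ l]
  set δ : ℝ := min 1 (univ.inf' hne (fun l => min (εx l / Gx l) (εy l / Gy l))) with hδ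
  have hδpos : 0 < δ := by
    rw [hδ]
    apply lt_min one_pos
    rw [Finset.lt_inf'_iff]
    intro l _
    exact lt_min (div_pos (hεxpos l) (hGxpos l)) (div_pos (hεypos l) (hGypos l))
  have hδ1 : δ ≤ 1 := min_le_left _ _
  have hδx' : ∀ l, δ ≤ εx l / Gx l := fun l =>
    le_trans (min_le_right _ _) (le_trans (Finset.inf'_le _ (mem_univ l)) (min_le_left _ _))
  have hδy' : ∀ l, δ ≤ εy l / Gy l := fun l =>
    le_trans (min_le_right _ _) (le_trans (Finset.inf'_le _ (mem_univ l)) (min_le_right _ _))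
  have hexpb : ∀ (c : ℝ), 0 ≤ c → exp (δ * c) ≤ 1 + δ * c * exp c := by
    intro c hc
    have h1 := aux_exp_le (δ * c)
    have h2 : exp (δ * c) ≤ exp c := by
      apply Real.exp_le_exp.2
      nlinarith
    nlinarith [mul_nonneg (le_of_lt hδpos) hc, exp_pos (δ * c)]
  refine ⟨δ, hδpos, ?_, ?_⟩
  · intro l
    have hsum : (∑ k, rr ξ φ bR bI mRR mIR k l * exp (δ * τ k l))
        ≤ (∑ k, rr ξ φ bR bI mRR mIR k l)
          + δ * ∑ k, rr ξ φ bR bI mRR mIR k l * τ k l * exp (τ k l) := by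
      rw [Finset.mul_sum, ← Finset.sum_add_distrib]
      apply Finset.sum_le_sum
      intro k _
      have := mul_le_mul_of_nonneg_left (hexpb (τ k l) (hτ k l)) (hrr k l)
      nlinarith [this]
    have hfrac : δ * Gx l ≤ εx l := by
      have := mul_le_mul_of_nonneg_right (hδx' l) (le_of_lt (hGxpos l))
      rwa [div_mul_cancel₀ _ (ne_of_gt (hGxpos l))] at this
    rw [hGx] at hfrac; rw [hεx] at hfrac
    dsimp only at hfrac
    nlinarith [hsum, hfrac]
  · intro l
    have hsum : (∑ k, qq ξ φ bR bI mRI mII k l * exp (δ * τ k l))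
        ≤ (∑ k, qq ξ φ bR bI mRI mII k l)
          + δ * ∑ k, qq ξ φ bR bI mRI mII k l * τ k l * exp (τ k l) := by
      rw [Finset.mul_sum, ← Finset.sum_add_distrib]
      apply Finset.sum_le_sum
      intro k _
      have := mul_le_mul_of_nonneg_left (hexpb (τ k l) (hτ k l)) (hqq k l)
      nlinarith [this]
    have hfrac : δ * Gy l ≤ εy l := by
      have := mul_le_mul_of_nonneg_right (hδy' l) (le_of_lt (hGypos l))
      rwa [div_mul_cancel₀ _ (ne_of_gt (hGypos l))] at this
    rw [hGy] at hfrac; rw [hεy] at hfrac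
    dsimp only at hfrac
    nlinarith [hsum, hfrac]
lemma mvtH1 {f1 f2 : ℝ → ℝ → ℝ} {lRR lRI lIR lII : ℝ}
    (h : CondH1 f1 f2 lRR lRI lIR lII) (hRR : 0 < lRR) (hRI : 0 < lRI)
    (a b c e : ℝ) :
    ∃ α β, (0 < α ∧ α ≤ lRR) ∧ (0 < β ∧ β ≤ lRI) ∧
      f1 a b - f1 c e = α * (a - c) + β * (b - e) := by
  obtain ⟨hd1, _, hbd⟩ := h
  have hdiff1 : ∀ yv : ℝ, Differentiable ℝ (fun sv => f1 sv yv) := fun yv =>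
    (hd1.differentiable one_ne_zero).comp (differentiable_id.prodMk (differentiable_const yv))
  have hdiff2 : ∀ xv : ℝ, Differentiable ℝ (fun sv => f1 xv sv) := fun xv =>
    (hd1.differentiable one_ne_zero).comp ((differentiable_const xv).prodMk differentiable_id)
  obtain ⟨α, hα1, hα2, hAeq⟩ : ∃ α, 0 < α ∧ α ≤ lRR ∧ f1 a b - f1 c b = α * (a - c) := by
    rcases eq_or_ne c a with hac | hac
    · exact ⟨lRR, hRR, le_rfl, by rw [hac]; simp⟩
    · obtain ⟨c₀, hc₀⟩ := aux_exists_slope (fun sv => f1 sv b) (hdiff1 b) a c hac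
      exact ⟨_, ((hbd c₀ b).1).1, ((hbd c₀ b).1).2, hc₀⟩
  obtain ⟨β, hβ1, hβ2, hBeq⟩ : ∃ β, 0 < β ∧ β ≤ lRI ∧ f1 c b - f1 c e = β * (b - e) := by
    rcases eq_or_ne e b with hbe | hbe
    · exact ⟨lRI, hRI, le_rfl, by rw [hbe]; simp⟩
    · obtain ⟨c₀, hc₀⟩ := aux_exists_slope (fun sv => f1 c sv) (hdiff2 c) b e hbe
      exact ⟨_, ((hbd c c₀).2.1).1, ((hbd c c₀).2.1).2, hc₀⟩
  exact ⟨α, β, ⟨hα1, hα2⟩, ⟨hβ1, hβ2⟩, by linarith⟩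

lemma mvtH1' {f1 f2 : ℝ → ℝ → ℝ} {lRR lRI lIR lII : ℝ}
    (h : CondH1 f1 f2 lRR lRI lIR lII) (hIR : 0 < lIR) (hII : 0 < lII)
    (a b c e : ℝ) :
    ∃ α β, (0 < α ∧ α ≤ lIR) ∧ (0 < β ∧ β ≤ lII) ∧
      f2 a b - f2 c e = α * (a - c) + β * (b - e) := by
  obtain ⟨_, hd2, hbd⟩ := h
  have hdiff1 : ∀ yv : ℝ, Differentiable ℝ (fun sv => f2 sv yv) := fun yv =>
    (hd2.differentiable one_ne_zero).comp (differentiable_id.prodMk (differentiable_const yv))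
  have hdiff2 : ∀ xv : ℝ, Differentiable ℝ (fun sv => f2 xv sv) := fun xv =>
    (hd2.differentiable one_ne_zero).comp ((differentiable_const xv).prodMk differentiable_id)
  obtain ⟨α, hα1, hα2, hAeq⟩ : ∃ α, 0 < α ∧ α ≤ lIR ∧ f2 a b - f2 c b = α * (a - c) := by
    rcases eq_or_ne c a with hac | hac
    · exact ⟨lIR, hIR, le_rfl, by rw [hac]; simp⟩
    · obtain ⟨c₀, hc₀⟩ := aux_exists_slope (fun sv => f2 sv b) (hdiff1 b) a c hac
      exact ⟨_, ((hbd c₀ b).2.2.1).1, ((hbd c₀ b).2.2.1).2, hc₀⟩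
  obtain ⟨β, hβ1, hβ2, hBeq⟩ : ∃ β, 0 < β ∧ β ≤ lII ∧ f2 c b - f2 c e = β * (b - e) := by
    rcases eq_or_ne e b with hbe | hbe
    · exact ⟨lII, hII, le_rfl, by rw [hbe]; simp⟩
    · obtain ⟨c₀, hc₀⟩ := aux_exists_slope (fun sv => f2 c sv) (hdiff2 c) b e hbe
      exact ⟨_, ((hbd c c₀).2.2.2).1, ((hbd c c₀).2.2.2).2, hc₀⟩
  exact ⟨α, β, ⟨hα1, hα2⟩, ⟨hβ1, hβ2⟩, by linarith⟩

lemma mvtH2 {g1 g2 : ℝ → ℝ → ℝ} {mRR mRI mIR mII : ℝ}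
    (h : CondH2 g1 g2 mRR mRI mIR mII) (hRR : 0 ≤ mRR) (hRI : 0 ≤ mRI)
    (a b c e : ℝ) :
    |g1 a b - g1 c e| ≤ mRR * |a - c| + mRI * |b - e| := by
  obtain ⟨hd1, _, hbd⟩ := h
  have hdiff1 : ∀ yv : ℝ, Differentiable ℝ (fun sv => g1 sv yv) := fun yv =>
    (hd1.differentiable one_ne_zero).comp (differentiable_id.prodMk (differentiable_const yv))
  have hdiff2 : ∀ xv : ℝ, Differentiable ℝ (fun sv => g1 xv sv) := fun xv =>
    (hd1.differentiable one_ne_zero).comp ((differentiable_const xv).prodMk differentiable_id)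
  have h1 : |g1 a b - g1 c b| ≤ mRR * |a - c| := by
    rcases eq_or_ne c a with hac | hac
    · rw [hac]; simp
    · obtain ⟨c₀, hc₀⟩ := aux_exists_slope (fun sv => g1 sv b) (hdiff1 b) a c hac
      rw [hc₀, abs_mul]
      exact mul_le_mul_of_nonneg_right ((hbd c₀ b).1) (abs_nonneg _)
  have h2 : |g1 c b - g1 c e| ≤ mRI * |b - e| := by
    rcases eq_or_ne e b with hbe | hbe
    · rw [hbe]; simp
    · obtain ⟨c₀, hc₀⟩ := aux_exists_slope (fun sv => g1 c sv) (hdiff2 c) b e hbe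
      rw [hc₀, abs_mul]
      exact mul_le_mul_of_nonneg_right ((hbd c c₀).2.1) (abs_nonneg _)
  calc |g1 a b - g1 c e| = |(g1 a b - g1 c b) + (g1 c b - g1 c e)| := by ring_nf
    _ ≤ |g1 a b - g1 c b| + |g1 c b - g1 c e| := abs_add_le _ _
    _ ≤ mRR * |a - c| + mRI * |b - e| := add_le_add h1 h2

lemma mvtH2' {g1 g2 : ℝ → ℝ → ℝ} {mRR mRI mIR mII : ℝ}
    (h : CondH2 g1 g2 mRR mRI mIR mII) (hIR : 0 ≤ mIR) (hII : 0 ≤ mII)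
    (a b c e : ℝ) :
    |g2 a b - g2 c e| ≤ mIR * |a - c| + mII * |b - e| := by
  obtain ⟨_, hd2, hbd⟩ := h
  have hdiff1 : ∀ yv : ℝ, Differentiable ℝ (fun sv => g2 sv yv) := fun yv =>
    (hd2.differentiable one_ne_zero).comp (differentiable_id.prodMk (differentiable_const yv))
  have hdiff2 : ∀ xv : ℝ, Differentiable ℝ (fun sv => g2 xv sv) := fun xv =>
    (hd2.differentiable one_ne_zero).comp ((differentiable_const xv).prodMk differentiable_id)
  have h1 : |g2 a b - g2 c b| ≤ mIR * |a - c| := by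
    rcases eq_or_ne c a with hac | hac
    · rw [hac]; simp
    · obtain ⟨c₀, hc₀⟩ := aux_exists_slope (fun sv => g2 sv b) (hdiff1 b) a c hac
      rw [hc₀, abs_mul]
      exact mul_le_mul_of_nonneg_right ((hbd c₀ b).2.2.1) (abs_nonneg _)
  have h2 : |g2 c b - g2 c e| ≤ mII * |b - e| := by
    rcases eq_or_ne e b with hbe | hbe
    · rw [hbe]; simp
    · obtain ⟨c₀, hc₀⟩ := aux_exists_slope (fun sv => g2 c sv) (hdiff2 c) b e hbe
      rw [hc₀, abs_mul]
      exact mul_le_mul_of_nonneg_right ((hbd c c₀).2.2.2) (abs_nonneg _)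
  calc |g2 a b - g2 c e| = |(g2 a b - g2 c b) + (g2 c b - g2 c e)| := by ring_nf
    _ ≤ |g2 a b - g2 c b| + |g2 c b - g2 c e| := abs_add_le _ _
    _ ≤ mIR * |a - c| + mII * |b - e| := add_le_add h1 h2
lemma solution_shift (d : Fin n → ℝ) (aR aI bR bI τ : Fin n → Fin n → ℝ)
    (uR uI : Fin n → ℝ) (fR fI gR gI : Fin n → ℝ → ℝ → ℝ)
    (zR zI : Fin n → ℝ → ℝ) (s : ℝ) (hs : 0 ≤ s)
    (hz : IsSolution n d aR aI bR bI τ uR uI fR fI gR gI zR zI) :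
    IsSolution n d aR aI bR bI τ uR uI fR fI gR gI
      (fun j t => zR j (t + s)) (fun j t => zI j (t + s)) := by
  obtain ⟨hz1, hz2, hz3, hz4⟩ := hz
  have harg : ∀ u τ' : ℝ, u - τ' + s = u + s - τ' := fun u τ' => by ring
  refine ⟨fun j => (hz1 j).comp (contDiff_id.add contDiff_const),
    fun j => (hz2 j).comp (contDiff_id.add contDiff_const), ?_, ?_⟩
  · intro j t ht
    rw [deriv_comp_add_const, hz3 j (t + s) (by linarith)]
    simp only [harg]
  · intro j t ht
    rw [deriv_comp_add_const, hz4 j (t + s) (by linarith)]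
    simp only [harg]

lemma solution_const (d : Fin n → ℝ) (aR aI bR bI τ : Fin n → Fin n → ℝ)
    (uR uI : Fin n → ℝ) (fR fI gR gI : Fin n → ℝ → ℝ → ℝ)
    (vR vI : Fin n → ℝ)
    (hv : IsEquilibrium n d aR aI bR bI uR uI fR fI gR gI vR vI) :
    IsSolution n d aR aI bR bI τ uR uI fR fI gR gI
      (fun j _ => vR j) (fun j _ => vI j) := by
  refine ⟨fun j => contDiff_const, fun j => contDiff_const, ?_, ?_⟩
  · intro j t _
    rw [deriv_const']
    exact (hv.1 j).symm
  · intro j t _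
    rw [deriv_const']
    exact (hv.2 j).symm

lemma aux_geom_sum (ρ : ℝ) (h0 : 0 ≤ ρ) (h1 : ρ < 1) (N : ℕ) :
    (∑ i ∈ Finset.range N, ρ ^ i) ≤ 1 / (1 - ρ) := by
  rw [geom_sum_eq (ne_of_lt h1)]
  have h2 : 0 < 1 - ρ := by linarith
  have h3 : 0 ≤ ρ ^ N := pow_nonneg h0 N
  have h4 : (ρ ^ N - 1) / (ρ - 1) = (1 - ρ ^ N) / (1 - ρ) := by
    rw [← neg_div_neg_eq]; ring_nf
  rw [h4, div_le_div_iff₀ h2 h2]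
  nlinarith [mul_nonneg h3 (le_of_lt h2)]

lemma aux_cauchy (z : ℝ → ℝ) (c1 δ : ℝ) (hδ : 0 < δ) (hc1 : 0 ≤ c1)
    (hstep : ∀ s ∈ Icc (0:ℝ) 1, ∀ t, 0 ≤ t → |z (t + s) - z t| ≤ c1 * exp (-δ * t)) :
    ∀ t₁, 0 ≤ t₁ → ∀ t₂, t₁ ≤ t₂ → |z t₂ - z t₁| ≤ c1 / (1 - exp (-δ)) * exp (-δ * t₁) := by
  have hρ1 : exp (-δ) < 1 := by
    rw [Real.exp_lt_one_iff]; linarith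
  have hρ0 : (0:ℝ) ≤ exp (-δ) := le_of_lt (exp_pos _)
  have main : ∀ m : ℕ, ∀ t₁ : ℝ, 0 ≤ t₁ → ∀ t₂ : ℝ, t₁ ≤ t₂ → t₂ ≤ t₁ + (m : ℝ) + 1 →
      |z t₂ - z t₁| ≤ c1 * ∑ i ∈ Finset.range (m + 1), exp (-δ * (t₁ + (i : ℝ))) := by
    intro m
    induction m with
    | zero =>
      intro t₁ ht₁ t₂ h12 hub
      have hs : t₂ - t₁ ∈ Icc (0:ℝ) 1 := ⟨by linarith, by push_cast at hub; linarith⟩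
      have := hstep (t₂ - t₁) hs t₁ ht₁
      rw [show t₁ + (t₂ - t₁) = t₂ from by ring] at this
      simpa using this
    | succ m ih =>
      intro t₁ ht₁ t₂ h12 hub
      by_cases hcase : t₂ ≤ t₁ + 1
      · have hs : t₂ - t₁ ∈ Icc (0:ℝ) 1 := ⟨by linarith, by linarith⟩
        have h := hstep (t₂ - t₁) hs t₁ ht₁
        rw [show t₁ + (t₂ - t₁) = t₂ from by ring] at h
        calc |z t₂ - z t₁| ≤ c1 * exp (-δ * t₁) := h
          _ ≤ c1 * ∑ i ∈ Finset.range (m + 1 + 1), exp (-δ * (t₁ + i)) := by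
            apply mul_le_mul_of_nonneg_left _ hc1
            have h0 : exp (-δ * (t₁ + (0:ℕ))) ≤ ∑ i ∈ Finset.range (m + 2), exp (-δ * (t₁ + i)) :=
              Finset.single_le_sum (f := fun i : ℕ => exp (-δ * (t₁ + i)))
                (fun i _ => le_of_lt (exp_pos _)) (Finset.mem_range.2 (Nat.succ_pos _))
            simpa using h0
      · push_neg at hcase
        have hih' := ih (t₁ + 1) (by linarith) t₂ (by linarith) (by push_cast at hub ⊢; linarith)
        have hih : |z t₂ - z (t₁ + 1)| ≤
            c1 * ∑ i ∈ Finset.range (m + 1), exp (-δ * (t₁ + 1 + (i:ℝ))) := hih'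
        have h1 := hstep 1 ⟨zero_le_one, le_rfl⟩ t₁ ht₁
        have htri : |z t₂ - z t₁| ≤ |z t₂ - z (t₁ + 1)| + |z (t₁ + 1) - z t₁| := by
          have := abs_add_le (z t₂ - z (t₁ + 1)) (z (t₁ + 1) - z t₁)
          simpa using this
        have hsum : (∑ i ∈ Finset.range (m + 1), exp (-δ * (t₁ + 1 + (i:ℝ))))
            + exp (-δ * t₁)
            = ∑ i ∈ Finset.range (m + 1 + 1), exp (-δ * (t₁ + (i:ℝ))) := by
          conv_rhs => rw [Finset.sum_range_succ']
          congr 1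
          · refine Finset.sum_congr rfl fun i _ => ?_
            congr 1
            push_cast
            ring
          · norm_num
        calc |z t₂ - z t₁| ≤ |z t₂ - z (t₁ + 1)| + |z (t₁ + 1) - z t₁| := htri
          _ ≤ c1 * (∑ i ∈ Finset.range (m + 1), exp (-δ * (t₁ + 1 + (i:ℝ))))
              + c1 * exp (-δ * t₁) := add_le_add hih h1
          _ = c1 * ((∑ i ∈ Finset.range (m + 1), exp (-δ * (t₁ + 1 + (i:ℝ))))
              + exp (-δ * t₁)) := by ring
          _ = c1 * ∑ i ∈ Finset.range (m + 1 + 1), exp (-δ * (t₁ + (i:ℝ))) := by rw [hsum]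
  intro t₁ ht₁ t₂ h12
  obtain ⟨m, hm⟩ := exists_nat_ge (t₂ - t₁)
  have hub : t₂ ≤ t₁ + m + 1 := by linarith
  have h := main m t₁ ht₁ t₂ h12 hub
  have hexp : ∀ i : ℕ, exp (-δ * (t₁ + (i:ℝ))) = exp (-δ * t₁) * exp (-δ) ^ i := by
    intro i
    rw [← Real.exp_nat_mul, ← Real.exp_add]
    congr 1
    ring
  have hsum2 : (∑ i ∈ Finset.range (m + 1), exp (-δ * (t₁ + (i:ℝ))))
      = exp (-δ * t₁) * ∑ i ∈ Finset.range (m + 1), exp (-δ) ^ i := by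
    rw [Finset.mul_sum]
    exact Finset.sum_congr rfl fun i _ => hexp i
  have hgeo := aux_geom_sum (exp (-δ)) hρ0 hρ1 (m + 1)
  calc |z t₂ - z t₁| ≤ c1 * (exp (-δ * t₁) * ∑ i ∈ Finset.range (m + 1), exp (-δ) ^ i) := by
        rw [← hsum2]; exact h
    _ ≤ c1 * (exp (-δ * t₁) * (1 / (1 - exp (-δ)))) := by
        apply mul_le_mul_of_nonneg_left _ hc1
        exact mul_le_mul_of_nonneg_left hgeo (le_of_lt (exp_pos _))
    _ = c1 / (1 - exp (-δ)) * exp (-δ * t₁) := by ring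

lemma aux_limit (z : ℝ → ℝ) (c2 δ : ℝ) (hδ : 0 < δ) (hc2 : 0 ≤ c2)
    (hCB : ∀ t₁, 0 ≤ t₁ → ∀ t₂, t₁ ≤ t₂ → |z t₂ - z t₁| ≤ c2 * exp (-δ * t₁)) :
    ∃ L, Tendsto z atTop (𝓝 L) := by
  have hρ1 : exp (-δ) < 1 := by rw [Real.exp_lt_one_iff]; linarith
  have hcseq : CauchySeq (fun m : ℕ => z m) := by
    apply cauchySeq_of_le_geometric (r := exp (-δ)) (C := c2) hρ1
    intro m
    rw [Real.dist_eq, abs_sub_comm]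
    have h := hCB (m:ℝ) (Nat.cast_nonneg m) ((m:ℝ) + 1) (by linarith)
    push_cast
    calc |z ((m:ℝ) + 1) - z (m:ℝ)| ≤ c2 * exp (-δ * (m:ℝ)) := h
      _ = c2 * exp (-δ) ^ m := by rw [← Real.exp_nat_mul]; congr 1; ring
  obtain ⟨L, hL⟩ := cauchySeq_tendsto_of_complete hcseq
  refine ⟨L, Metric.tendsto_atTop.2 fun ε hε => ?_⟩
  obtain ⟨N₁, hN₁⟩ := Metric.tendsto_atTop.1 hL (ε / 2) (by linarith)
  have htend : Tendsto (fun m : ℕ => c2 * exp (-δ) ^ m) atTop (𝓝 0) := by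
    have h := tendsto_pow_atTop_nhds_zero_of_lt_one (le_of_lt (exp_pos (-δ))) hρ1
    have h2 := h.const_mul c2
    simpa using h2
  have hev : ∀ᶠ m : ℕ in atTop, c2 * exp (-δ) ^ m < ε / 2 :=
    htend.eventually_lt_const (by linarith)
  obtain ⟨N, hN⟩ := (hev.and (eventually_ge_atTop N₁)).exists
  refine ⟨(N:ℝ), fun t ht => ?_⟩
  have h1 : |z t - z (N:ℝ)| ≤ c2 * exp (-δ * N) := hCB N (Nat.cast_nonneg N) t ht
  have h2 : c2 * exp (-δ * N) = c2 * exp (-δ) ^ N := by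
    rw [← Real.exp_nat_mul]; congr 1; ring
  calc dist (z t) L ≤ dist (z t) (z (N:ℝ)) + dist (z (N:ℝ)) L := dist_triangle _ _ _
    _ < ε := by
      have h3 : dist (z t) (z (N:ℝ)) < ε / 2 := by
        rw [Real.dist_eq]
        calc |z t - z (N:ℝ)| ≤ c2 * exp (-δ * N) := h1
          _ = c2 * exp (-δ) ^ N := h2
          _ < ε / 2 := hN.1
      have h4 : dist (z (N:ℝ)) L < ε / 2 := hN₁ N hN.2
      linarith
def Pd (fR : Fin n → ℝ → ℝ → ℝ) (zR zI wR wI : Fin n → ℝ → ℝ) (l : Fin n) (t : ℝ) : ℝ :=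
  fR l (zR l t) (zI l t) - fR l (wR l t) (wI l t)

set_option maxHeartbeats 4000000 in
lemma pair_key (d ξ φ : Fin n → ℝ) (hξ : ∀ j, 0 < ξ j) (hφ : ∀ j, 0 < φ j)
    (aR aI bR bI τ : Fin n → Fin n → ℝ) (hτ : ∀ j k, 0 ≤ τ j k)
    (uR uI : Fin n → ℝ) (fR fI gR gI : Fin n → ℝ → ℝ → ℝ)
    (lRR lRI lIR lII mRR mRI mIR mII : Fin n → ℝ)
    (hl : ∀ j, 0 < lRR j ∧ 0 < lRI j ∧ 0 < lIR j ∧ 0 < lII j)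
    (hm : ∀ j, 0 < mRR j ∧ 0 < mRI j ∧ 0 < mIR j ∧ 0 < mII j)
    (hf : ∀ j, CondH1 (fR j) (fI j) (lRR j) (lRI j) (lIR j) (lII j))
    (hg : ∀ j, CondH2 (gR j) (gI j) (mRR j) (mRI j) (mIR j) (mII j))
    (δ : ℝ) (hδ0 : 0 < δ)
    (hδx : ∀ l, δ * ξ l + cxv d ξ φ aR aI lRR lIR l
      + (∑ k, rr ξ φ bR bI mRR mIR k l * exp (δ * τ k l)) ≤ 0)
    (hδy : ∀ l, δ * φ l + cyv d ξ φ aR aI lII lRI l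
      + (∑ k, qq ξ φ bR bI mRI mII k l * exp (δ * τ k l)) ≤ 0)
    (zR zI wR wI : Fin n → ℝ → ℝ)
    (hz : IsSolution n d aR aI bR bI τ uR uI fR fI gR gI zR zI)
    (hw : IsSolution n d aR aI bR bI τ uR uI fR fI gR gI wR wI)
    (K : ℝ)
    (hK : ∀ u ∈ Icc (-(∑ j, ∑ k, τ j k)) (0:ℝ),
      (∑ k, (ξ k * |zR k u - wR k u| + φ k * |zI k u - wI k u|)) ≤ K) :
    ∀ t, 0 ≤ t → (∑ k, (ξ k * |zR k t - wR k t| + φ k * |zI k t - wI k t|)) ≤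
      (1 + ∑ k, ∑ l, (rr ξ φ bR bI mRR mIR k l * exp (δ * τ k l) * τ k l / ξ l
         + qq ξ φ bR bI mRI mII k l * exp (δ * τ k l) * τ k l / φ l)) * K * exp (-δ * t) := by
  obtain ⟨hz1, hz2, hz3, hz4⟩ := hz
  obtain ⟨hw1, hw2, hw3, hw4⟩ := hw
  have hdx : ∀ k t, 0 ≤ t → HasDerivAt (fun u => zR k u - wR k u)
      (-(d k) * (zR k t - wR k t)
        + (∑ l, (aR k l * Pd fR zR zI wR wI l t - aI k l * Pd fI zR zI wR wI l t))
        + ∑ l, (bR k l * Pd gR zR zI wR wI l (t - τ k l)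
              - bI k l * Pd gI zR zI wR wI l (t - τ k l))) t := by
    intro k t ht
    have h1 : HasDerivAt (zR k) (deriv (zR k) t) t :=
      (((hz1 k).differentiable one_ne_zero) t).hasDerivAt
    have h2 : HasDerivAt (wR k) (deriv (wR k) t) t :=
      (((hw1 k).differentiable one_ne_zero) t).hasDerivAt
    have h3 := h1.sub h2
    have heq : deriv (zR k) t - deriv (wR k) t
        = -(d k) * (zR k t - wR k t)
        + (∑ l, (aR k l * Pd fR zR zI wR wI l t - aI k l * Pd fI zR zI wR wI l t))
        + ∑ l, (bR k l * Pd gR zR zI wR wI l (t - τ k l)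
              - bI k l * Pd gI zR zI wR wI l (t - τ k l)) := by
      rw [hz3 k t ht, hw3 k t ht]
      have e1 : (∑ l, (aR k l * Pd fR zR zI wR wI l t - aI k l * Pd fI zR zI wR wI l t))
          = (∑ l, (aR k l * fR l (zR l t) (zI l t) - aI k l * fI l (zR l t) (zI l t)))
            - ∑ l, (aR k l * fR l (wR l t) (wI l t) - aI k l * fI l (wR l t) (wI l t)) := by
        rw [← Finset.sum_sub_distrib]
        refine Finset.sum_congr rfl fun l _ => ?_
        simp only [Pd]
        ring
      have e2 : (∑ l, (bR k l * Pd gR zR zI wR wI l (t - τ k l)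
              - bI k l * Pd gI zR zI wR wI l (t - τ k l)))
          = (∑ l, (bR k l * gR l (zR l (t - τ k l)) (zI l (t - τ k l))
              - bI k l * gI l (zR l (t - τ k l)) (zI l (t - τ k l))))
            - ∑ l, (bR k l * gR l (wR l (t - τ k l)) (wI l (t - τ k l))
              - bI k l * gI l (wR l (t - τ k l)) (wI l (t - τ k l))) := by
        rw [← Finset.sum_sub_distrib]
        refine Finset.sum_congr rfl fun l _ => ?_
        simp only [Pd]
        ring
      rw [e1, e2]
      ring
    rw [heq] at h3
    exact h3
  have hdy : ∀ k t, 0 ≤ t → HasDerivAt (fun u => zI k u - wI k u)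
      (-(d k) * (zI k t - wI k t)
        + (∑ l, (aR k l * Pd fI zR zI wR wI l t + aI k l * Pd fR zR zI wR wI l t))
        + ∑ l, (bR k l * Pd gI zR zI wR wI l (t - τ k l)
              + bI k l * Pd gR zR zI wR wI l (t - τ k l))) t := by
    intro k t ht
    have h1 : HasDerivAt (zI k) (deriv (zI k) t) t :=
      (((hz2 k).differentiable one_ne_zero) t).hasDerivAt
    have h2 : HasDerivAt (wI k) (deriv (wI k) t) t :=
      (((hw2 k).differentiable one_ne_zero) t).hasDerivAt
    have h3 := h1.sub h2
    have heq : deriv (zI k) t - deriv (wI k) t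
        = -(d k) * (zI k t - wI k t)
        + (∑ l, (aR k l * Pd fI zR zI wR wI l t + aI k l * Pd fR zR zI wR wI l t))
        + ∑ l, (bR k l * Pd gI zR zI wR wI l (t - τ k l)
              + bI k l * Pd gR zR zI wR wI l (t - τ k l)) := by
      rw [hz4 k t ht, hw4 k t ht]
      have e1 : (∑ l, (aR k l * Pd fI zR zI wR wI l t + aI k l * Pd fR zR zI wR wI l t))
          = (∑ l, (aR k l * fI l (zR l t) (zI l t) + aI k l * fR l (zR l t) (zI l t)))
            - ∑ l, (aR k l * fI l (wR l t) (wI l t) + aI k l * fR l (wR l t) (wI l t)) := by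
        rw [← Finset.sum_sub_distrib]
        refine Finset.sum_congr rfl fun l _ => ?_
        simp only [Pd]
        ring
      have e2 : (∑ l, (bR k l * Pd gI zR zI wR wI l (t - τ k l)
              + bI k l * Pd gR zR zI wR wI l (t - τ k l)))
          = (∑ l, (bR k l * gI l (zR l (t - τ k l)) (zI l (t - τ k l))
              + bI k l * gR l (zR l (t - τ k l)) (zI l (t - τ k l))))
            - ∑ l, (bR k l * gI l (wR l (t - τ k l)) (wI l (t - τ k l))
              + bI k l * gR l (wR l (t - τ k l)) (wI l (t - τ k l))) := by
        rw [← Finset.sum_sub_distrib]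
        refine Finset.sum_congr rfl fun l _ => ?_
        simp only [Pd]
        ring
      rw [e1, e2]
      ring
    rw [heq] at h3
    exact h3
  exact key d ξ φ hξ hφ aR aI bR bI τ hτ lRR lRI lIR lII mRR mRI mIR mII hm δ hδ0 hδx hδy
    (fun k t => zR k t - wR k t) (fun k t => zI k t - wI k t)
    (fun k => ((hz1 k).continuous).sub ((hw1 k).continuous))
    (fun k => ((hz2 k).continuous).sub ((hw2 k).continuous))
    (Pd fR zR zI wR wI) (Pd fI zR zI wR wI) (Pd gR zR zI wR wI) (Pd gI zR zI wR wI)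
    (fun l t => mvtH1 (hf l) (hl l).1 (hl l).2.1 _ _ _ _)
    (fun l t => mvtH1' (hf l) (hl l).2.2.1 (hl l).2.2.2 _ _ _ _)
    (fun l u => mvtH2 (hg l) (le_of_lt (hm l).1) (le_of_lt (hm l).2.1) _ _ _ _)
    (fun l u => mvtH2' (hg l) (le_of_lt (hm l).2.2.1) (le_of_lt (hm l).2.2.2) _ _ _ _)
    hdx hdy K hK
end S4

set_option maxHeartbeats 4000000

theorem stmt4
    (n : ℕ) (hn : 1 ≤ n)
    (d : Fin n → ℝ) (hd : ∀ j, 0 < d j)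
    (aR aI bR bI τ : Fin n → Fin n → ℝ) (hτ : ∀ j k, 0 ≤ τ j k)
    (uR uI : Fin n → ℝ)
    (fR fI gR gI : Fin n → ℝ → ℝ → ℝ)
    (lRR lRI lIR lII mRR mRI mIR mII : Fin n → ℝ)
    (hl : ∀ j, 0 < lRR j ∧ 0 < lRI j ∧ 0 < lIR j ∧ 0 < lII j)
    (hm : ∀ j, 0 < mRR j ∧ 0 < mRI j ∧ 0 < mIR j ∧ 0 < mII j)
    (hf : ∀ j, CondH1 (fR j) (fI j) (lRR j) (lRI j) (lIR j) (lII j))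
    (hg : ∀ j, CondH2 (gR j) (gI j) (mRR j) (mRI j) (mIR j) (mII j))
    (ξ φ : Fin n → ℝ) (hξ : ∀ j, 0 < ξ j) (hφ : ∀ j, 0 < φ j)
    (hT9 : ∀ k : Fin n,
      -(ξ k) * d k
      + max (ξ k * aR k k + (∑ j ∈ Finset.univ.erase k, ξ j * |aR j k|)
             + (∑ j, φ j * |aI j k|)) 0 * lRR k
      + max (-(ξ k * aI k k) + (∑ j ∈ Finset.univ.erase k, ξ j * |aI j k|)
             + (∑ j, φ j * |aR j k|)) 0 * lIR k
      + (∑ j, (ξ j * (|bR j k| * mRR k + |bI j k| * mIR k)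
               + φ j * (|bR j k| * mIR k + |bI j k| * mRR k))) < 0)
    (hT10 : ∀ k : Fin n,
      -(φ k) * d k
      + max (φ k * aR k k + (∑ j ∈ Finset.univ.erase k, φ j * |aR j k|)
             + (∑ j, ξ j * |aI j k|)) 0 * lII k
      + max (φ k * aI k k + (∑ j ∈ Finset.univ.erase k, φ j * |aI j k|)
             + (∑ j, ξ j * |aR j k|)) 0 * lRI k
      + (∑ j, (ξ j * (|bR j k| * mRI k + |bI j k| * mII k)
               + φ j * (|bR j k| * mII k + |bI j k| * mRI k))) < 0)
    (hsol : ∃ zR zI, IsSolution n d aR aI bR bI τ uR uI fR fI gR gI zR zI) :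
    ∃ zbR zbI : Fin n → ℝ,
      IsEquilibrium n d aR aI bR bI uR uI fR fI gR gI zbR zbI ∧
      (∀ wR wI : Fin n → ℝ,
        IsEquilibrium n d aR aI bR bI uR uI fR fI gR gI wR wI → wR = zbR ∧ wI = zbI) ∧
      (∀ zR zI : Fin n → ℝ → ℝ,
        IsSolution n d aR aI bR bI τ uR uI fR fI gR gI zR zI →
        ∃ c δ : ℝ, 0 < c ∧ 0 < δ ∧ ∀ t : ℝ, 0 ≤ t →
          Real.sqrt ((∑ j, (zR j t - zbR j) ^ 2) + ∑ j, (zI j t - zbI j) ^ 2)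
            ≤ c * Real.exp (-δ * t)) := by
  classical
  have hT9' : ∀ k, S4.cxv d ξ φ aR aI lRR lIR k + (∑ j, S4.rr ξ φ bR bI mRR mIR j k) < 0 := by
    intro k
    simpa only [S4.cxv, S4.B1, S4.B2, S4.rr] using hT9 k
  have hT10' : ∀ k, S4.cyv d ξ φ aR aI lII lRI k + (∑ j, S4.qq ξ φ bR bI mRI mII j k) < 0 := by
    intro k
    simpa only [S4.cyv, S4.B3, S4.B4, S4.qq] using hT10 k
  obtain ⟨δ, hδ0, hδx, hδy⟩ := S4.exists_delta hn d ξ φ hξ hφ aR aI bR bI τ hτ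
    lRR lRI lIR lII mRR mRI mIR mII hm hT9' hT10'
  have hrr : ∀ k l, 0 ≤ S4.rr ξ φ bR bI mRR mIR k l :=
    S4.rr_nonneg hξ hφ (fun j => (hm j).1) (fun j => (hm j).2.2.1)
  have hqq : ∀ k l, 0 ≤ S4.qq ξ φ bR bI mRI mII k l :=
    S4.qq_nonneg hξ hφ (fun j => (hm j).2.1) (fun j => (hm j).2.2.2)
  set A := 1 + ∑ k, ∑ l, (S4.rr ξ φ bR bI mRR mIR k l * Real.exp (δ * τ k l) * τ k l / ξ l
    + S4.qq ξ φ bR bI mRI mII k l * Real.exp (δ * τ k l) * τ k l / φ l) with hA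
  have hA1 : 1 ≤ A := by
    rw [hA]
    have h0 : (0:ℝ) ≤ ∑ k, ∑ l, (S4.rr ξ φ bR bI mRR mIR k l * Real.exp (δ * τ k l) * τ k l / ξ l
        + S4.qq ξ φ bR bI mRI mII k l * Real.exp (δ * τ k l) * τ k l / φ l) := by
      apply Finset.sum_nonneg; intro k _; apply Finset.sum_nonneg; intro l _
      have h1 := hrr k l; have h2 := hqq k l; have h3 := hτ k l
      have h4 := hξ l; have h5 := hφ l; have h6 := Real.exp_pos (δ * τ k l)
      positivity
    linarith
  set τm := ∑ j, ∑ k, τ j k with hτm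
  have hτm0 : (0:ℝ) ≤ τm :=
    Finset.sum_nonneg fun j _ => Finset.sum_nonneg fun i _ => hτ j i
  obtain ⟨zR0, zI0, hsol0⟩ := hsol
  have hne : (univ : Finset (Fin n)).Nonempty := ⟨⟨0, hn⟩, mem_univ _⟩
  -- weights minimum
  set wm := min (univ.inf' hne ξ) (univ.inf' hne φ) with hwm
  have hwm0 : 0 < wm := by
    apply lt_min
    · rw [Finset.lt_inf'_iff]; intro j _; exact hξ j
    · rw [Finset.lt_inf'_iff]; intro j _; exact hφ j
  have hwmξ : ∀ j, wm ≤ ξ j := fun j =>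
    le_trans (min_le_left _ _) (Finset.inf'_le _ (mem_univ j))
  have hwmφ : ∀ j, wm ≤ φ j := fun j =>
    le_trans (min_le_right _ _) (Finset.inf'_le _ (mem_univ j))
    -- uniform bound for the base solution on [-τm, 1]
  choose CR hCR using fun k => (isCompact_Icc (a := -τm) (b := (1:ℝ))).exists_bound_of_continuousOn
    (((hsol0.1 k).continuous).continuousOn)
  choose CI hCI using fun k => (isCompact_Icc (a := -τm) (b := (1:ℝ))).exists_bound_of_continuousOn
    (((hsol0.2.1 k).continuous).continuousOn)
  set M := max (univ.sup' hne CR) (univ.sup' hne CI) with hM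
  have hMb : ∀ k : Fin n, ∀ u ∈ Icc (-τm) (1:ℝ), |zR0 k u| ≤ M ∧ |zI0 k u| ≤ M := by
    intro k u hu
    constructor
    · have h1 := hCR k u hu
      rw [Real.norm_eq_abs] at h1
      exact le_trans h1 (le_trans (Finset.le_sup' CR (mem_univ k)) (le_max_left _ _))
    · have h1 := hCI k u hu
      rw [Real.norm_eq_abs] at h1
      exact le_trans h1 (le_trans (Finset.le_sup' CI (mem_univ k)) (le_max_right _ _))
  have hM0 : 0 ≤ M := le_trans (abs_nonneg _) ((hMb ⟨0, hn⟩ 0 ⟨by linarith, by linarith⟩).1)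
  set Kst := ∑ k, (ξ k * (2 * M) + φ k * (2 * M)) with hKst
  have hKst0 : 0 ≤ Kst := Finset.sum_nonneg fun k _ => by
    have := hξ k; have := hφ k; positivity
  -- decay of shifted differences
  have hshift : ∀ s ∈ Icc (0:ℝ) 1, ∀ t, 0 ≤ t →
      (∑ k, (ξ k * |zR0 k (t + s) - zR0 k t| + φ k * |zI0 k (t + s) - zI0 k t|))
        ≤ A * Kst * Real.exp (-δ * t) := by
    intro s hs t ht
    have hsolS := S4.solution_shift d aR aI bR bI τ uR uI fR fI gR gI zR0 zI0 s hs.1 hsol0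
    have hKhist : ∀ u ∈ Icc (-τm) (0:ℝ),
        (∑ k, (ξ k * |zR0 k (u + s) - zR0 k u| + φ k * |zI0 k (u + s) - zI0 k u|)) ≤ Kst := by
      intro u hu
      rw [hKst]
      apply Finset.sum_le_sum
      intro k _
      have hu1 : u ∈ Icc (-τm) (1:ℝ) := ⟨hu.1, by linarith [hu.2]⟩
      have hu2 : u + s ∈ Icc (-τm) (1:ℝ) :=
        ⟨by linarith [hu.1, hs.1], by linarith [hu.2, hs.2]⟩
      have h1 := hMb k u hu1
      have h2 := hMb k (u + s) hu2
      have hb1 : |zR0 k (u + s) - zR0 k u| ≤ 2 * M := by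
        calc |zR0 k (u + s) - zR0 k u| ≤ |zR0 k (u + s)| + |zR0 k u| := abs_sub _ _
          _ ≤ 2 * M := by linarith [h1.1, h2.1]
      have hb2 : |zI0 k (u + s) - zI0 k u| ≤ 2 * M := by
        calc |zI0 k (u + s) - zI0 k u| ≤ |zI0 k (u + s)| + |zI0 k u| := abs_sub _ _
          _ ≤ 2 * M := by linarith [h1.2, h2.2]
      have := hξ k; have := hφ k
      have e1 : ξ k * |zR0 k (u + s) - zR0 k u| ≤ ξ k * (2 * M) :=
        mul_le_mul_of_nonneg_left hb1 (by linarith)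
      have e2 : φ k * |zI0 k (u + s) - zI0 k u| ≤ φ k * (2 * M) :=
        mul_le_mul_of_nonneg_left hb2 (by linarith)
      linarith
    have hpk := S4.pair_key d ξ φ hξ hφ aR aI bR bI τ hτ uR uI fR fI gR gI
      lRR lRI lIR lII mRR mRI mIR mII hl hm hf hg δ hδ0 hδx hδy
      (fun j t => zR0 j (t + s)) (fun j t => zI0 j (t + s)) zR0 zI0 hsolS hsol0 Kst hKhist t ht
    rw [← hA] at hpk
    exact hpk
  -- componentwise small-step bounds
  set c1 := A * Kst / wm with hc1
  have hc10 : 0 ≤ c1 := div_nonneg (mul_nonneg (by linarith) hKst0) (le_of_lt hwm0)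
  have hstepR : ∀ j : Fin n, ∀ s ∈ Icc (0:ℝ) 1, ∀ t, 0 ≤ t →
      |zR0 j (t + s) - zR0 j t| ≤ c1 * Real.exp (-δ * t) := by
    intro j s hs t ht
    have h := hshift s hs t ht
    have hterm : ξ j * |zR0 j (t + s) - zR0 j t| ≤ A * Kst * Real.exp (-δ * t) := by
      refine le_trans ?_ h
      have hsingle := Finset.single_le_sum
        (f := fun k => ξ k * |zR0 k (t + s) - zR0 k t| + φ k * |zI0 k (t + s) - zI0 k t|)
        (fun k _ => add_nonneg (mul_nonneg (hξ k).le (abs_nonneg _))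
          (mul_nonneg (hφ k).le (abs_nonneg _))) (mem_univ j)
      have h2 : 0 ≤ φ j * |zI0 j (t + s) - zI0 j t| := mul_nonneg (hφ j).le (abs_nonneg _)
      linarith
    rw [hc1, div_mul_eq_mul_div, le_div_iff₀ hwm0]
    have h3 := mul_le_mul_of_nonneg_right (hwmξ j) (abs_nonneg (zR0 j (t + s) - zR0 j t))
    linarith
  have hstepI : ∀ j : Fin n, ∀ s ∈ Icc (0:ℝ) 1, ∀ t, 0 ≤ t →
      |zI0 j (t + s) - zI0 j t| ≤ c1 * Real.exp (-δ * t) := by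
    intro j s hs t ht
    have h := hshift s hs t ht
    have hterm : φ j * |zI0 j (t + s) - zI0 j t| ≤ A * Kst * Real.exp (-δ * t) := by
      refine le_trans ?_ h
      have hsingle := Finset.single_le_sum
        (f := fun k => ξ k * |zR0 k (t + s) - zR0 k t| + φ k * |zI0 k (t + s) - zI0 k t|)
        (fun k _ => add_nonneg (mul_nonneg (hξ k).le (abs_nonneg _))
          (mul_nonneg (hφ k).le (abs_nonneg _))) (mem_univ j)
      have h2 : 0 ≤ ξ j * |zR0 j (t + s) - zR0 j t| := mul_nonneg (hξ j).le (abs_nonneg _)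
      linarith
    rw [hc1, div_mul_eq_mul_div, le_div_iff₀ hwm0]
    have h3 := mul_le_mul_of_nonneg_right (hwmφ j) (abs_nonneg (zI0 j (t + s) - zI0 j t))
    linarith
  -- Cauchy bounds and limits
  set c2 := c1 / (1 - Real.exp (-δ)) with hc2
  have hρ1 : Real.exp (-δ) < 1 := by rw [Real.exp_lt_one_iff]; linarith
  have hc20 : 0 ≤ c2 := div_nonneg hc10 (by linarith)
  have hCBR : ∀ j : Fin n, ∀ t₁, 0 ≤ t₁ → ∀ t₂, t₁ ≤ t₂ →
      |zR0 j t₂ - zR0 j t₁| ≤ c2 * Real.exp (-δ * t₁) := fun j =>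
    S4.aux_cauchy (zR0 j) c1 δ hδ0 hc10 (hstepR j)
  have hCBI : ∀ j : Fin n, ∀ t₁, 0 ≤ t₁ → ∀ t₂, t₁ ≤ t₂ →
      |zI0 j t₂ - zI0 j t₁| ≤ c2 * Real.exp (-δ * t₁) := fun j =>
    S4.aux_cauchy (zI0 j) c1 δ hδ0 hc10 (hstepI j)
  choose LR hLR using fun j => S4.aux_limit (zR0 j) c2 δ hδ0 hc20 (hCBR j)
  choose LI hLI using fun j => S4.aux_limit (zI0 j) c2 δ hδ0 hc20 (hCBI j)
    -- the limit point is an equilibrium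
  have hshiftT : ∀ (c : ℝ), Tendsto (fun t : ℝ => t - c) atTop atTop := fun c => by
    simpa [sub_eq_add_neg] using tendsto_atTop_add_const_right atTop (-c) (tendsto_id (α := ℝ))
  have hfRt : ∀ k, Tendsto (fun t => fR k (zR0 k t) (zI0 k t)) atTop (𝓝 (fR k (LR k) (LI k))) := by
    intro k
    exact (((hf k).1.continuous).continuousAt).tendsto.comp ((hLR k).prodMk_nhds (hLI k))
  have hfIt : ∀ k, Tendsto (fun t => fI k (zR0 k t) (zI0 k t)) atTop (𝓝 (fI k (LR k) (LI k))) := by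
    intro k
    exact (((hf k).2.1.continuous).continuousAt).tendsto.comp ((hLR k).prodMk_nhds (hLI k))
  have hgRt : ∀ j k, Tendsto (fun t => gR k (zR0 k (t - τ j k)) (zI0 k (t - τ j k))) atTop
      (𝓝 (gR k (LR k) (LI k))) := by
    intro j k
    exact (((hg k).1.continuous).continuousAt).tendsto.comp
      (((hLR k).comp (hshiftT (τ j k))).prodMk_nhds ((hLI k).comp (hshiftT (τ j k))))
  have hgIt : ∀ j k, Tendsto (fun t => gI k (zR0 k (t - τ j k)) (zI0 k (t - τ j k))) atTop
      (𝓝 (gI k (LR k) (LI k))) := by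
    intro j k
    exact (((hg k).2.1.continuous).continuousAt).tendsto.comp
      (((hLR k).comp (hshiftT (τ j k))).prodMk_nhds ((hLI k).comp (hshiftT (τ j k))))
  have heq : IsEquilibrium n d aR aI bR bI uR uI fR fI gR gI LR LI := by
    constructor
    · intro j
      have htend : Tendsto (fun t => -(d j) * zR0 j t
          + (∑ k, (aR j k * fR k (zR0 k t) (zI0 k t) - aI j k * fI k (zR0 k t) (zI0 k t)))
          + (∑ k, (bR j k * gR k (zR0 k (t - τ j k)) (zI0 k (t - τ j k))
                   - bI j k * gI k (zR0 k (t - τ j k)) (zI0 k (t - τ j k)))) + uR j) atTop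
          (𝓝 (-(d j) * LR j
            + (∑ k, (aR j k * fR k (LR k) (LI k) - aI j k * fI k (LR k) (LI k)))
            + (∑ k, (bR j k * gR k (LR k) (LI k) - bI j k * gI k (LR k) (LI k))) + uR j)) := by
        refine ((((hLR j).const_mul (-(d j))).add ?_).add ?_).add tendsto_const_nhds
        · exact tendsto_finset_sum _ fun k _ =>
            ((hfRt k).const_mul (aR j k)).sub ((hfIt k).const_mul (aI j k))
        · exact tendsto_finset_sum _ fun k _ =>
            ((hgRt j k).const_mul (bR j k)).sub ((hgIt j k).const_mul (bI j k))
      have hdeq : deriv (zR0 j) =ᶠ[atTop] (fun t => -(d j) * zR0 j t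
          + (∑ k, (aR j k * fR k (zR0 k t) (zI0 k t) - aI j k * fI k (zR0 k t) (zI0 k t)))
          + (∑ k, (bR j k * gR k (zR0 k (t - τ j k)) (zI0 k (t - τ j k))
                   - bI j k * gI k (zR0 k (t - τ j k)) (zI0 k (t - τ j k)))) + uR j) := by
        filter_upwards [eventually_ge_atTop (0:ℝ)] with t ht
        exact hsol0.2.2.1 j t ht
      exact aux_deriv_tendsto_zero (zR0 j) ((hsol0.1 j).differentiable one_ne_zero) (LR j) _
        (hLR j) (Filter.Tendsto.congr' hdeq.symm htend)
    · intro j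
      have htend : Tendsto (fun t => -(d j) * zI0 j t
          + (∑ k, (aR j k * fI k (zR0 k t) (zI0 k t) + aI j k * fR k (zR0 k t) (zI0 k t)))
          + (∑ k, (bR j k * gI k (zR0 k (t - τ j k)) (zI0 k (t - τ j k))
                   + bI j k * gR k (zR0 k (t - τ j k)) (zI0 k (t - τ j k)))) + uI j) atTop
          (𝓝 (-(d j) * LI j
            + (∑ k, (aR j k * fI k (LR k) (LI k) + aI j k * fR k (LR k) (LI k)))
            + (∑ k, (bR j k * gI k (LR k) (LI k) + bI j k * gR k (LR k) (LI k))) + uI j)) := by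
        refine ((((hLI j).const_mul (-(d j))).add ?_).add ?_).add tendsto_const_nhds
        · exact tendsto_finset_sum _ fun k _ =>
            ((hfIt k).const_mul (aR j k)).add ((hfRt k).const_mul (aI j k))
        · exact tendsto_finset_sum _ fun k _ =>
            ((hgIt j k).const_mul (bR j k)).add ((hgRt j k).const_mul (bI j k))
      have hdeq : deriv (zI0 j) =ᶠ[atTop] (fun t => -(d j) * zI0 j t
          + (∑ k, (aR j k * fI k (zR0 k t) (zI0 k t) + aI j k * fR k (zR0 k t) (zI0 k t)))
          + (∑ k, (bR j k * gI k (zR0 k (t - τ j k)) (zI0 k (t - τ j k))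
                   + bI j k * gR k (zR0 k (t - τ j k)) (zI0 k (t - τ j k)))) + uI j) := by
        filter_upwards [eventually_ge_atTop (0:ℝ)] with t ht
        exact hsol0.2.2.2 j t ht
      exact aux_deriv_tendsto_zero (zI0 j) ((hsol0.2.1 j).differentiable one_ne_zero) (LI j) _
        (hLI j) (Filter.Tendsto.congr' hdeq.symm htend)
  have hLsol := S4.solution_const d aR aI bR bI τ uR uI fR fI gR gI LR LI heq
  -- generic exponential decay to 0
  have hexpt : Tendsto (fun t : ℝ => Real.exp (-δ * t)) atTop (𝓝 0) := by
    have h1 : Tendsto (fun t : ℝ => δ * t) atTop atTop :=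
      Tendsto.const_mul_atTop hδ0 tendsto_id
    have h2 : Tendsto (fun t : ℝ => -(δ * t)) atTop atBot := tendsto_neg_atTop_atBot.comp h1
    have h3 : Tendsto (fun t : ℝ => Real.exp (-(δ * t))) atTop (𝓝 0) :=
      Real.tendsto_exp_atBot.comp h2
    simpa [neg_mul] using h3
  -- uniqueness
  have huniq : ∀ vR vI : Fin n → ℝ,
      IsEquilibrium n d aR aI bR bI uR uI fR fI gR gI vR vI → vR = LR ∧ vI = LI := by
    intro vR vI hv
    have hvs := S4.solution_const d aR aI bR bI τ uR uI fR fI gR gI vR vI hv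
    have hW0key := S4.pair_key d ξ φ hξ hφ aR aI bR bI τ hτ uR uI fR fI gR gI
      lRR lRI lIR lII mRR mRI mIR mII hl hm hf hg δ hδ0 hδx hδy
      (fun j _ => vR j) (fun j _ => vI j) (fun j _ => LR j) (fun j _ => LI j) hvs hLsol
      (∑ k, (ξ k * |vR k - LR k| + φ k * |vI k - LI k|)) (fun u _ => le_rfl)
    set W0 := ∑ k, (ξ k * |vR k - LR k| + φ k * |vI k - LI k|) with hW0
    have hW00 : 0 ≤ W0 := Finset.sum_nonneg fun k _ =>
      add_nonneg (mul_nonneg (hξ k).le (abs_nonneg _)) (mul_nonneg (hφ k).le (abs_nonneg _))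
    have hW0z : W0 ≤ 0 := by
      by_contra hpos
      push_neg at hpos
      have htt : Tendsto (fun t : ℝ => A * W0 * Real.exp (-δ * t)) atTop (𝓝 0) := by
        have h4 := hexpt.const_mul (A * W0)
        simpa using h4
      obtain ⟨t, htl⟩ := ((htt.eventually_lt_const hpos).and (eventually_ge_atTop (0:ℝ))).exists
      have hWt := hW0key t htl.2
      rw [← hA] at hWt
      have hWt' : W0 ≤ A * W0 * Real.exp (-δ * t) := hWt
      linarith [htl.1]
    have hzero : ∀ k, ξ k * |vR k - LR k| + φ k * |vI k - LI k| = 0 := by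
      intro k
      have h1 : ξ k * |vR k - LR k| + φ k * |vI k - LI k| ≤ W0 :=
        Finset.single_le_sum (f := fun k => ξ k * |vR k - LR k| + φ k * |vI k - LI k|)
          (fun k _ => add_nonneg (mul_nonneg (hξ k).le (abs_nonneg _))
            (mul_nonneg (hφ k).le (abs_nonneg _))) (mem_univ k)
      have h2 : 0 ≤ ξ k * |vR k - LR k| + φ k * |vI k - LI k| :=
        add_nonneg (mul_nonneg (hξ k).le (abs_nonneg _)) (mul_nonneg (hφ k).le (abs_nonneg _))
      linarith
    constructor
    · funext k
      have h := hzero k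
      have h1 : |vR k - LR k| = 0 := by
        have h2 := mul_nonneg (hξ k).le (abs_nonneg (vR k - LR k))
        have h3 := mul_nonneg (hφ k).le (abs_nonneg (vI k - LI k))
        have h4 : ξ k * |vR k - LR k| = 0 := by linarith
        have := hξ k
        rcases mul_eq_zero.1 h4 with h5 | h5
        · linarith
        · exact h5
      have := abs_eq_zero.1 h1
      linarith [sub_eq_zero.1 this]
    · funext k
      have h := hzero k
      have h1 : |vI k - LI k| = 0 := by
        have h2 := mul_nonneg (hξ k).le (abs_nonneg (vR k - LR k))
        have h3 := mul_nonneg (hφ k).le (abs_nonneg (vI k - LI k))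
        have h4 : φ k * |vI k - LI k| = 0 := by linarith
        have := hφ k
        rcases mul_eq_zero.1 h4 with h5 | h5
        · linarith
        · exact h5
      have := abs_eq_zero.1 h1
      linarith [sub_eq_zero.1 this]
  refine ⟨LR, LI, heq, huniq, ?_⟩
  -- exponential convergence of every solution
  intro zR zI hzsol
  have hWcont : Continuous (fun u => ∑ k, (ξ k * |zR k u - LR k| + φ k * |zI k u - LI k|)) := by
    apply continuous_finset_sum
    intro k _
    exact (continuous_const.mul (((hzsol.1 k).continuous).sub continuous_const).abs).add
      (continuous_const.mul (((hzsol.2.1 k).continuous).sub continuous_const).abs)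
  obtain ⟨K, hKb⟩ := (isCompact_Icc (a := -τm) (b := (0:ℝ))).exists_bound_of_continuousOn
    hWcont.continuousOn
  have hK0 : 0 ≤ K := le_trans (norm_nonneg _) (hKb 0 ⟨by linarith, le_rfl⟩)
  have hKb' : ∀ u ∈ Icc (-τm) (0:ℝ),
      (∑ k, (ξ k * |zR k u - LR k| + φ k * |zI k u - LI k|)) ≤ K := by
    intro u hu
    have := hKb u hu
    rw [Real.norm_eq_abs] at this
    exact le_trans (le_abs_self _) this
  have hdecay := S4.pair_key d ξ φ hξ hφ aR aI bR bI τ hτ uR uI fR fI gR gI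
    lRR lRI lIR lII mRR mRI mIR mII hl hm hf hg δ hδ0 hδx hδy
    zR zI (fun j _ => LR j) (fun j _ => LI j) hzsol hLsol K hKb'
  refine ⟨A * K / wm + 1, δ, ?_, hδ0, ?_⟩
  · have : 0 ≤ A * K / wm := div_nonneg (mul_nonneg (by linarith) hK0) hwm0.le
    linarith
  intro t ht
  have h := hdecay t ht
  rw [← hA] at h
  have hsq := aux_sqrt_le (fun j => zR j t - LR j) (fun j => zI j t - LI j)
  have hcomb : (∑ j, |zR j t - LR j|) + ∑ j, |zI j t - LI j|
      ≤ (1 / wm) * ∑ k, (ξ k * |zR k t - LR k| + φ k * |zI k t - LI k|) := by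
    rw [Finset.mul_sum, ← Finset.sum_add_distrib]
    apply Finset.sum_le_sum
    intro j _
    have e1 : |zR j t - LR j| = (1 / wm) * (wm * |zR j t - LR j|) := by
      field_simp
    have e2 : |zI j t - LI j| = (1 / wm) * (wm * |zI j t - LI j|) := by
      field_simp
    have h1 : wm * |zR j t - LR j| ≤ ξ j * |zR j t - LR j| :=
      mul_le_mul_of_nonneg_right (hwmξ j) (abs_nonneg _)
    have h2 : wm * |zI j t - LI j| ≤ φ j * |zI j t - LI j| :=
      mul_le_mul_of_nonneg_right (hwmφ j) (abs_nonneg _)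
    have h3 : (0:ℝ) ≤ 1 / wm := by positivity
    calc |zR j t - LR j| + |zI j t - LI j|
        = (1 / wm) * (wm * |zR j t - LR j| + wm * |zI j t - LI j|) := by
          rw [mul_add, ← e1, ← e2]
      _ ≤ (1 / wm) * (ξ j * |zR j t - LR j| + φ j * |zI j t - LI j|) := by
          apply mul_le_mul_of_nonneg_left _ h3
          linarith
  have h' : (∑ k, (ξ k * |zR k t - LR k| + φ k * |zI k t - LI k|)) ≤ A * K * Real.exp (-δ * t) :=
    h
  calc Real.sqrt ((∑ j, (zR j t - LR j) ^ 2) + ∑ j, (zI j t - LI j) ^ 2)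
      ≤ (∑ j, |zR j t - LR j|) + ∑ j, |zI j t - LI j| := hsq
    _ ≤ (1 / wm) * ∑ k, (ξ k * |zR k t - LR k| + φ k * |zI k t - LI k|) := hcomb
    _ ≤ (1 / wm) * (A * K * Real.exp (-δ * t)) :=
        mul_le_mul_of_nonneg_left h' (by positivity)
    _ = (A * K / wm) * Real.exp (-δ * t) := by ring
    _ ≤ (A * K / wm + 1) * Real.exp (-δ * t) := by
        apply mul_le_mul_of_nonneg_right _ (Real.exp_nonneg _)
        linarith
end

section
/- Suppose (f_j^R, f_j^I) satisfy condition H2 with constants λ_j^{RR}, λ_j^{RI}, λ_j^{IR}, λ_j^{II} and (g_j^R, g_j^I) satisfy condition H2 with constants μ_j^{RR}, μ_j^{RI}, μ_j^{IR}, μ_j^{II}, for j = 1,…,n. Suppose there exist positive reals ξ_1,…,ξ_n, φ_1,…,φ_n such that for every k = 1,…,n both: (i) −ξ_k d_k + [Σ_{j=1}^n ξ_j|a_{jk}^R| + Σ_{j=1}^n φ_j|a_{jk}^I|] λ_k^{RR} + [Σ_{j=1}^n ξ_j|a_{jk}^I| + Σ_{j=1}^n φ_j|a_{jk}^R|] λ_k^{IR}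 + Σ_{j=1}^n [ξ_j(|b_{jk}^R|μ_k^{RR} + |b_{jk}^I|μ_k^{IR}) + φ_j(|b_{jk}^R|μ_k^{IR} + |b_{jk}^I|μ_k^{RR})] < 0, and (ii) −φ_k d_k + [Σ_{j=1}^n φ_j|a_{jk}^R| + Σ_{j=1}^n ξ_j|a_{jk}^I|] λ_k^{II} + [Σ_{j=1}^n φ_j|a_{jk}^I| + Σ_{j=1}^n ξ_j|a_{jk}^R|] λ_k^{RI} + Σ_{j=1}^n [ξ_j(|b_{jk}^R|μ_k^{RI} + |b_{jk}^I|μ_k^{II}) + φ_j(|b_{jk}^R|μ_k^{II} + |b_{jk}^I|μ_k^{RI})] < 0. If the network admits at least one solution, then it has exactly one equilibrium Z̄ ∈ ℝ^{2n}, and for every solution Z(t) there exist constants c > 0 and δ > 0 such that ‖Z(t) − Z̄‖ ≤ c e^{−δt} (Euclidean norm) for all t ≥ 0. -/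
open Finset

lemma mvt_lip {f : ℝ → ℝ → ℝ} {m1 m2 : ℝ}
    (hf : ContDiff ℝ 1 (fun p : ℝ × ℝ => f p.1 p.2))
    (h1 : ∀ x y : ℝ, |deriv (fun s => f s y) x| ≤ m1)
    (h2 : ∀ x y : ℝ, |deriv (fun s => f x s) y| ≤ m2)
    (x y x' y' : ℝ) : |f x y - f x' y'| ≤ m1 * |x - x'| + m2 * |y - y'| := by
  have hdiff : Differentiable ℝ (fun p : ℝ × ℝ => f p.1 p.2) :=
    hf.differentiable one_ne_zero
  have d1 : ∀ y : ℝ, Differentiable ℝ (fun s => f s y) := by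
    intro y
    exact hdiff.comp (differentiable_id.prodMk (differentiable_const y))
  have d2 : ∀ x : ℝ, Differentiable ℝ (fun s => f x s) := by
    intro x
    exact hdiff.comp ((differentiable_const x).prodMk differentiable_id)
  have e1 : |f x y - f x' y| ≤ m1 * |x - x'| := by
    have := Convex.norm_image_sub_le_of_norm_deriv_le (f := fun s => f s y)
      (fun z _ => (d1 y).differentiableAt) (fun z _ => h1 z y) convex_univ
      (Set.mem_univ x') (Set.mem_univ x)
    simpa [Real.norm_eq_abs] using this
  have e2 : |f x' y - f x' y'| ≤ m2 * |y - y'| := by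
    have := Convex.norm_image_sub_le_of_norm_deriv_le (f := fun s => f x' s)
      (fun z _ => (d2 x').differentiableAt) (fun z _ => h2 x' z) convex_univ
      (Set.mem_univ y') (Set.mem_univ y)
    simpa [Real.norm_eq_abs] using this
  calc |f x y - f x' y'| = |(f x y - f x' y) + (f x' y - f x' y')| := by ring_nf
    _ ≤ |f x y - f x' y| + |f x' y - f x' y'| := abs_add_le _ _
    _ ≤ m1 * |x - x'| + m2 * |y - y'| := add_le_add e1 e2

lemma banach_pi {ι : Type*} [Fintype ι] [Nonempty ι]
    (ν : ι → ℝ) (hν : ∀ i, 0 < ν i) (q : ℝ) (hq0 : 0 ≤ q) (hq1 : q < 1)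
    (P : (ι → ℝ) → (ι → ℝ)) (hPc : Continuous P)
    (hlip : ∀ z z', (∑ i, ν i * |P z i - P z' i|) ≤ q * ∑ i, ν i * |z i - z' i|) :
    ∃ z : ι → ℝ, P z = z ∧ ∀ w, P w = w → w = z := by
  classical
  obtain ⟨i₀⟩ := ‹Nonempty ι›
  set νm : ℝ := Finset.univ.inf' ⟨i₀, Finset.mem_univ i₀⟩ ν with hνm
  have hνmpos : 0 < νm := by
    obtain ⟨i, _, hi⟩ := Finset.exists_mem_eq_inf' ⟨i₀, Finset.mem_univ i₀⟩ ν
    rw [hνm, hi]; exact hν i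
  have hνmle : ∀ i, νm ≤ ν i := fun i => Finset.inf'_le ν (Finset.mem_univ i)
  set u : ℕ → ι → ℝ := fun m => P^[m] (fun _ => 0) with hu
  set N0 : ℝ := ∑ i, ν i * |u 1 i - u 0 i| with hN0
  have hN0nn : 0 ≤ N0 := Finset.sum_nonneg fun i _ => mul_nonneg (hν i).le (abs_nonneg _)
  have hiter : ∀ m : ℕ, u (m+1) = P (u m) := by
    intro m; simp [hu, Function.iterate_succ_apply']
  have hstep : ∀ m : ℕ, (∑ i, ν i * |u (m+1) i - u m i|) ≤ q ^ m * N0 := by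
    intro m
    induction m with
    | zero => simp; exact le_rfl
    | succ m ih =>
      calc (∑ i, ν i * |u (m+2) i - u (m+1) i|)
          = ∑ i, ν i * |P (u (m+1)) i - P (u m) i| := by rw [hiter (m+1), hiter m]
        _ ≤ q * ∑ i, ν i * |u (m+1) i - u m i| := hlip _ _
        _ ≤ q * (q ^ m * N0) := mul_le_mul_of_nonneg_left ih hq0
        _ = q ^ (m+1) * N0 := by ring
  have hcoord : ∀ m i, |u (m+1) i - u m i| ≤ N0 / νm * q ^ m := by
    intro m i
    have h1 : ν i * |u (m+1) i - u m i| ≤ q ^ m * N0 := by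
      refine le_trans ?_ (hstep m)
      exact Finset.single_le_sum (f := fun j => ν j * |u (m+1) j - u m j|)
        (fun j _ => mul_nonneg (hν j).le (abs_nonneg _)) (Finset.mem_univ i)
    have h2 : νm * |u (m+1) i - u m i| ≤ q ^ m * N0 :=
      le_trans (mul_le_mul_of_nonneg_right (hνmle i) (abs_nonneg _)) h1
    rw [div_mul_eq_mul_div, le_div_iff₀ hνmpos]
    linarith
  have hcauchy : CauchySeq u := by
    apply cauchySeq_of_le_geometric q (N0 / νm) hq1
    intro m
    rw [dist_pi_le_iff (by positivity)]
    intro i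
    rw [Real.dist_eq, abs_sub_comm]
    exact hcoord m i
  obtain ⟨L, hL⟩ := cauchySeq_tendsto_of_complete hcauchy
  have hL1 : Filter.Tendsto (fun m => u (m+1)) Filter.atTop (nhds L) :=
    hL.comp (Filter.tendsto_add_atTop_nat 1)
  have hL2 : Filter.Tendsto (fun m => P (u m)) Filter.atTop (nhds (P L)) :=
    (hPc.tendsto L).comp hL
  have hfix : P L = L := by
    have : Filter.Tendsto (fun m => u (m+1)) Filter.atTop (nhds (P L)) := by
      simpa [hiter] using hL2
    exact tendsto_nhds_unique this hL1
  refine ⟨L, hfix, ?_⟩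
  intro w hw
  have h := hlip w L
  rw [hw, hfix] at h
  have hN : (∑ i, ν i * |w i - L i|) ≤ 0 := by
    nlinarith [Finset.sum_nonneg (fun i (_ : i ∈ Finset.univ) =>
      mul_nonneg (hν i).le (abs_nonneg (w i - L i)))]
  funext i
  have hterm : ν i * |w i - L i| ≤ 0 := by
    refine le_trans ?_ hN
    refine Finset.single_le_sum (f := fun j => ν j * |w j - L j|)
      (fun j _ => mul_nonneg (hν j).le (abs_nonneg _)) (Finset.mem_univ i)
  have habs : |w i - L i| ≤ 0 := by
    by_contra hpos
    push_neg at hpos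
    nlinarith [hν i]
  have h0 : |w i - L i| = 0 := le_antisymm habs (abs_nonneg _)
  have := abs_eq_zero.mp h0
  linarith

lemma abs_right_deriv {g : ℝ → ℝ} {t e : ℝ} (hg : HasDerivAt g e t) :
    HasDerivWithinAt (fun s => |g s|)
      (if g t = 0 then |e| else if 0 < g t then e else -e) (Set.Ici t) t := by
  rcases eq_or_ne (g t) 0 with h0 | h0
  · simp only [h0, if_pos rfl]
    rw [hasDerivWithinAt_iff_tendsto_slope]
    rw [show Set.Ici t \ {t} = Set.Ioi t from Set.Ici_sdiff_left]
    have hslope : Filter.Tendsto (slope g t) (nhdsWithin t (Set.Ioi t)) (nhds e) :=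
      (hasDerivAt_iff_tendsto_slope.mp hg).mono_left
        (nhdsWithin_mono t fun z hz => Set.mem_compl_singleton_iff.mpr (ne_of_gt hz))
    have habs : Filter.Tendsto (fun z => |slope g t z|) (nhdsWithin t (Set.Ioi t)) (nhds |e|) :=
      (continuous_abs.tendsto e).comp hslope
    refine habs.congr' ?_
    filter_upwards [self_mem_nhdsWithin] with z hz
    simp only [slope_def_field, h0, abs_zero, sub_zero, abs_div]
    rw [abs_of_pos (sub_pos.mpr (Set.mem_Ioi.mp hz))]
  · rcases lt_or_gt_of_ne h0 with hneg | hpos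
    · simp only [if_neg h0, if_neg (not_lt.mpr hneg.le)]
      have hev : ∀ᶠ s in nhds t, g s < 0 :=
        hg.continuousAt.eventually (eventually_lt_nhds hneg)
      have : HasDerivAt (fun s => |g s|) (-e) t := by
        refine HasDerivAt.congr_of_eventuallyEq hg.neg ?_
        filter_upwards [hev] with s hs
        exact abs_of_neg hs
      exact this.hasDerivWithinAt
    · simp only [if_neg h0, if_pos hpos]
      have hev : ∀ᶠ s in nhds t, 0 < g s :=
        hg.continuousAt.eventually (eventually_gt_nhds hpos)
      have : HasDerivAt (fun s => |g s|) e t := by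
        refine HasDerivAt.congr_of_eventuallyEq hg ?_
        filter_upwards [hev] with s hs
        exact abs_of_pos hs
      exact this.hasDerivWithinAt

lemma halanay {ι : Type*} [Fintype ι] [Nonempty ι]
    (w D : ι → ℝ) (hw : ∀ i, 0 < w i) (hD : ∀ i, 0 < D i)
    (A B τ' : ι → ι → ℝ) (hA : ∀ i k, 0 ≤ A i k) (hB : ∀ i k, 0 ≤ B i k)
    (hτ : ∀ i k, 0 ≤ τ' i k)
    (x : ι → ℝ → ℝ) (hx : ∀ i, ContDiff ℝ 1 (x i))
    (hode : ∀ i, ∀ t : ℝ, 0 ≤ t →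
      |deriv (x i) t + D i * x i t| ≤ (∑ k, A i k * |x k t|) + ∑ k, B i k * |x k (t - τ' i k)|)
    (hcol : ∀ k, (∑ i, w i * A i k) + (∑ i, w i * B i k) < w k * D k) :
    ∃ c δ : ℝ, 0 < c ∧ 0 < δ ∧ ∀ t : ℝ, 0 ≤ t →
      (∑ i, w i * |x i t|) ≤ c * Real.exp (-δ * t) := by
  classical
  set T : ℝ := ∑ i, ∑ k, τ' i k with hT
  have hT0 : 0 ≤ T := Finset.sum_nonneg fun i _ => Finset.sum_nonneg fun k _ => hτ i k
  have hτT : ∀ i k, τ' i k ≤ T := by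
    intro i k
    calc τ' i k ≤ ∑ k', τ' i k' :=
          Finset.single_le_sum (fun k' _ => hτ i k') (Finset.mem_univ k)
      _ ≤ T := Finset.single_le_sum (f := fun i' => ∑ k', τ' i' k')
          (fun i' _ => Finset.sum_nonneg fun k' _ => hτ i' k') (Finset.mem_univ i)
  -- choose δ
  obtain ⟨δ, hδ0, hδk⟩ : ∃ δ : ℝ, 0 < δ ∧ ∀ k,
      (∑ i, w i * A i k) + Real.exp (δ * T) * (∑ i, w i * B i k) + δ * w k ≤ w k * D k := by
    have hev : ∀ k, ∀ᶠ δ in nhdsWithin (0:ℝ) (Set.Ioi 0),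
        Real.exp (δ * T) * (∑ i, w i * B i k) - (∑ i, w i * B i k) + δ * w k
          < w k * D k - ((∑ i, w i * A i k) + (∑ i, w i * B i k)) := by
      intro k
      have hg : (0:ℝ) < w k * D k - ((∑ i, w i * A i k) + (∑ i, w i * B i k)) := by
        linarith [hcol k]
      have hcont : Filter.Tendsto
          (fun δ : ℝ => Real.exp (δ * T) * (∑ i, w i * B i k) - (∑ i, w i * B i k) + δ * w k)
          (nhds 0) (nhds 0) := by
        have hc : Continuous
            (fun δ : ℝ => Real.exp (δ * T) * (∑ i, w i * B i k) - (∑ i, w i * B i k) + δ * w k) := by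
          continuity
        have := hc.tendsto 0
        simpa using this
      exact (hcont.eventually (eventually_lt_nhds hg)).filter_mono nhdsWithin_le_nhds
    have hall : ∀ᶠ δ in nhdsWithin (0:ℝ) (Set.Ioi 0), (∀ k,
        Real.exp (δ * T) * (∑ i, w i * B i k) - (∑ i, w i * B i k) + δ * w k
          < w k * D k - ((∑ i, w i * A i k) + (∑ i, w i * B i k))) ∧ δ ∈ Set.Ioi (0:ℝ) :=
      (Filter.eventually_all.mpr hev).and self_mem_nhdsWithin
    obtain ⟨δ, h1, h2⟩ := hall.exists
    exact ⟨δ, h2, fun k => by linarith [h1 k]⟩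
  have hxc : ∀ i, Continuous (x i) := fun i => (hx i).continuous
  have hxd : ∀ i t, HasDerivAt (x i) (deriv (x i) t) t := fun i t =>
    ((hx i).differentiable one_ne_zero).differentiableAt.hasDerivAt
  -- antiderivatives
  set F : ι → ℝ → ℝ := fun k t => ∫ s in (0:ℝ)..t, Real.exp (δ * s) * |x k s| with hF
  have hFint : ∀ k, Continuous fun s => Real.exp (δ * s) * |x k s| := by
    intro k
    exact (Real.continuous_exp.comp (continuous_const.mul continuous_id)).mul (hxc k).abs
  have hFd : ∀ k b, HasDerivAt (F k) (Real.exp (δ * b) * |x k b|) b := fun k b =>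
    ((hFint k).integral_hasStrictDerivAt 0 b).hasDerivAt
  have hFc : ∀ k, Continuous (F k) := fun k =>
    continuous_iff_continuousAt.mpr fun b => (hFd k b).continuousAt
  -- right derivative of |x i|
  set ρ : ι → ℝ → ℝ := fun i t =>
    if x i t = 0 then |deriv (x i) t| else if 0 < x i t then deriv (x i) t
      else -(deriv (x i) t) with hρdef
  have hρ : ∀ i t, HasDerivWithinAt (fun s => |x i s|) (ρ i t) (Set.Ici t) t := fun i t =>
    abs_right_deriv (hxd i t)
  have hρle : ∀ i t, 0 ≤ t → ρ i t ≤ -(D i) * |x i t| +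
      ((∑ k, A i k * |x k t|) + ∑ k, B i k * |x k (t - τ' i k)|) := by
    intro i t ht
    have h := hode i t ht
    simp only [hρdef]
    rcases eq_or_ne (x i t) 0 with h0 | h0
    · simp only [h0, if_pos rfl]
      simpa [h0] using h
    · rcases lt_or_gt_of_ne h0 with hne | hpo
      · simp only [if_neg h0, if_neg (not_lt.mpr hne.le)]
        rw [abs_of_neg hne]
        have := neg_abs_le (deriv (x i) t + D i * x i t)
        linarith
      · simp only [if_neg h0, if_pos hpo]
        rw [abs_of_pos hpo]
        have := le_abs_self (deriv (x i) t + D i * x i t)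
        linarith
  -- the Lyapunov functional and its right derivative
  set V : ℝ → ℝ := fun t => (∑ i, w i * (Real.exp (δ * t) * |x i t|))
    + ∑ i, ∑ k, (w i * B i k * Real.exp (δ * τ' i k)) * (F k t - F k (t - τ' i k)) with hV
  set V' : ℝ → ℝ := fun t =>
    (∑ i, w i * (Real.exp (δ * t) * (δ * 1) * |x i t| + Real.exp (δ * t) * ρ i t))
    + ∑ i, ∑ k, (w i * B i k * Real.exp (δ * τ' i k)) *
        (Real.exp (δ * t) * |x k t| - Real.exp (δ * (t - τ' i k)) * |x k (t - τ' i k)| * 1)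
      with hV'def
  have hE : ∀ t : ℝ, HasDerivAt (fun s => Real.exp (δ * s)) (Real.exp (δ * t) * (δ * 1)) t := by
    intro t
    exact ((hasDerivAt_id t).const_mul δ).exp
  have hVd : ∀ t, HasDerivWithinAt V (V' t) (Set.Ici t) t := by
    intro t
    apply HasDerivWithinAt.add
    · exact HasDerivWithinAt.fun_sum fun i _ =>
        (((hE t).hasDerivWithinAt.mul (hρ i t)).const_mul (w i))
    · refine HasDerivWithinAt.fun_sum fun i _ => HasDerivWithinAt.fun_sum fun k _ => ?_
      refine HasDerivAt.hasDerivWithinAt ?_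
      refine HasDerivAt.const_mul _ ?_
      exact (hFd k t).sub
        (((hFd k (t - τ' i k)).comp t (h := fun s => s - τ' i k) ((hasDerivAt_id t).sub_const (τ' i k))))
  have hVc : Continuous V := by
    apply Continuous.add
    · exact continuous_finset_sum _ fun i _ => continuous_const.mul
        ((Real.continuous_exp.comp (continuous_const.mul continuous_id)).mul (hxc i).abs)
    · refine continuous_finset_sum _ fun i _ => continuous_finset_sum _ fun k _ =>
        continuous_const.mul (Continuous.sub (hFc k) ?_)
      exact (hFc k).comp (continuous_id.sub continuous_const)
  -- V' ≤ 0 on [0, ∞)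
  have hkey : ∀ t : ℝ, 0 ≤ t → V' t ≤ 0 := by
    intro t ht
    have he : (0:ℝ) < Real.exp (δ * t) := Real.exp_pos _
    have hS1 : (∑ i, w i * (Real.exp (δ * t) * (δ * 1) * |x i t| + Real.exp (δ * t) * ρ i t))
        ≤ ∑ i, (w i * Real.exp (δ * t) * ((δ - D i) * |x i t|)
            + ((∑ k, w i * Real.exp (δ * t) * (A i k * |x k t|))
              + ∑ k, w i * Real.exp (δ * t) * (B i k * |x k (t - τ' i k)|))) := by
      refine Finset.sum_le_sum fun i _ => ?_
      have h2 := hρle i t ht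
      have hwi := (hw i).le
      have hnn : (0:ℝ) ≤ w i * Real.exp (δ * t) := by positivity
      calc w i * (Real.exp (δ * t) * (δ * 1) * |x i t| + Real.exp (δ * t) * ρ i t)
          = (w i * Real.exp (δ * t)) * (δ * |x i t| + ρ i t) := by ring
        _ ≤ (w i * Real.exp (δ * t)) * (δ * |x i t| + (-(D i) * |x i t|
              + ((∑ k, A i k * |x k t|) + ∑ k, B i k * |x k (t - τ' i k)|))) := by
            apply mul_le_mul_of_nonneg_left _ hnn
            linarith
        _ = w i * Real.exp (δ * t) * ((δ - D i) * |x i t|)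
            + ((∑ k, w i * Real.exp (δ * t) * (A i k * |x k t|))
              + ∑ k, w i * Real.exp (δ * t) * (B i k * |x k (t - τ' i k)|)) := by
            simp only [← Finset.mul_sum]
            ring
    have hS2 : (∑ i, ∑ k, (w i * B i k * Real.exp (δ * τ' i k)) *
          (Real.exp (δ * t) * |x k t| - Real.exp (δ * (t - τ' i k)) * |x k (t - τ' i k)| * 1))
        = (∑ i, ∑ k, w i * B i k * Real.exp (δ * τ' i k) * Real.exp (δ * t) * |x k t|)
          - ∑ i, ∑ k, w i * Real.exp (δ * t) * (B i k * |x k (t - τ' i k)|) := by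
      rw [← Finset.sum_sub_distrib]
      refine Finset.sum_congr rfl fun i _ => ?_
      rw [← Finset.sum_sub_distrib]
      refine Finset.sum_congr rfl fun k _ => ?_
      have hexp : Real.exp (δ * τ' i k) * Real.exp (δ * (t - τ' i k)) = Real.exp (δ * t) := by
        rw [← Real.exp_add]
        ring_nf
      linear_combination (-(w i * B i k * |x k (t - τ' i k)|)) * hexp
    have hstep : V' t ≤ (∑ i, w i * Real.exp (δ * t) * ((δ - D i) * |x i t|))
        + ((∑ i, ∑ k, w i * Real.exp (δ * t) * (A i k * |x k t|))
          + ∑ i, ∑ k, w i * B i k * Real.exp (δ * τ' i k) * Real.exp (δ * t) * |x k t|) := by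
      have hv : V' t = (∑ i, w i * (Real.exp (δ * t) * (δ * 1) * |x i t|
            + Real.exp (δ * t) * ρ i t))
          + (∑ i, ∑ k, (w i * B i k * Real.exp (δ * τ' i k)) *
            (Real.exp (δ * t) * |x k t|
              - Real.exp (δ * (t - τ' i k)) * |x k (t - τ' i k)| * 1)) := by
        rw [hV'def]
      rw [hv, hS2]
      have h6 := add_le_add hS1 (le_refl
        ((∑ i, ∑ k, w i * B i k * Real.exp (δ * τ' i k) * Real.exp (δ * t) * |x k t|)
          - ∑ i, ∑ k, w i * Real.exp (δ * t) * (B i k * |x k (t - τ' i k)|)))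
      refine le_trans h6 (le_of_eq ?_)
      rw [Finset.sum_add_distrib, Finset.sum_add_distrib]
      ring
    -- bound by exp (δ T) and regroup columns
    have hstep2 : (∑ i, ∑ k, w i * B i k * Real.exp (δ * τ' i k) * Real.exp (δ * t) * |x k t|)
        ≤ ∑ i, ∑ k, w i * B i k * Real.exp (δ * T) * Real.exp (δ * t) * |x k t| := by
      refine Finset.sum_le_sum fun i _ => Finset.sum_le_sum fun k _ => ?_
      have hle : Real.exp (δ * τ' i k) ≤ Real.exp (δ * T) :=
        Real.exp_le_exp.mpr (mul_le_mul_of_nonneg_left (hτT i k) hδ0.le)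
      have hnn : (0:ℝ) ≤ w i * B i k := mul_nonneg (hw i).le (hB i k)
      have hnn2 : (0:ℝ) ≤ Real.exp (δ * t) * |x k t| := by positivity
      calc w i * B i k * Real.exp (δ * τ' i k) * Real.exp (δ * t) * |x k t|
          = (w i * B i k) * Real.exp (δ * τ' i k) * (Real.exp (δ * t) * |x k t|) := by ring
        _ ≤ (w i * B i k) * Real.exp (δ * T) * (Real.exp (δ * t) * |x k t|) := by
            apply mul_le_mul_of_nonneg_right _ hnn2
            exact mul_le_mul_of_nonneg_left hle hnn
        _ = w i * B i k * Real.exp (δ * T) * Real.exp (δ * t) * |x k t| := by ring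
    have hfin : (∑ i, w i * Real.exp (δ * t) * ((δ - D i) * |x i t|))
        + ((∑ i, ∑ k, w i * Real.exp (δ * t) * (A i k * |x k t|))
          + ∑ i, ∑ k, w i * B i k * Real.exp (δ * T) * Real.exp (δ * t) * |x k t|)
        = ∑ k, (((δ * w k - w k * D k) + ((∑ i, w i * A i k)
            + Real.exp (δ * T) * (∑ i, w i * B i k))) * (Real.exp (δ * t) * |x k t|)) := by
      rw [Finset.sum_comm (f := fun i k => w i * Real.exp (δ * t) * (A i k * |x k t|)),
        Finset.sum_comm (f := fun i k => w i * B i k * Real.exp (δ * T) * Real.exp (δ * t) * |x k t|)]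
      rw [← Finset.sum_add_distrib, ← Finset.sum_add_distrib]
      refine Finset.sum_congr rfl fun k _ => ?_
      have e1 : ∑ i, w i * Real.exp (δ * t) * (A i k * |x k t|)
          = (∑ i, w i * A i k) * (Real.exp (δ * t) * |x k t|) := by
        simp only [Finset.sum_mul, Finset.mul_sum]
        exact Finset.sum_congr rfl fun i _ => by ring
      have e2 : ∑ i, w i * B i k * Real.exp (δ * T) * Real.exp (δ * t) * |x k t|
          = (Real.exp (δ * T) * ∑ i, w i * B i k) * (Real.exp (δ * t) * |x k t|) := by
        simp only [Finset.sum_mul, Finset.mul_sum]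
        exact Finset.sum_congr rfl fun i _ => by ring
      rw [e1, e2]
      ring
    have hnonpos : (∑ k, (((δ * w k - w k * D k) + ((∑ i, w i * A i k)
          + Real.exp (δ * T) * (∑ i, w i * B i k))) * (Real.exp (δ * t) * |x k t|))) ≤ 0 := by
      refine Finset.sum_nonpos fun k _ => ?_
      have hc : (δ * w k - w k * D k) + ((∑ i, w i * A i k)
          + Real.exp (δ * T) * (∑ i, w i * B i k)) ≤ 0 := by linarith [hδk k]
      have hnn : (0:ℝ) ≤ Real.exp (δ * t) * |x k t| := by positivity
      exact mul_nonpos_of_nonpos_of_nonneg hc hnn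
    calc V' t ≤ (∑ i, w i * Real.exp (δ * t) * ((δ - D i) * |x i t|))
        + ((∑ i, ∑ k, w i * Real.exp (δ * t) * (A i k * |x k t|))
          + ∑ i, ∑ k, w i * B i k * Real.exp (δ * τ' i k) * Real.exp (δ * t) * |x k t|) := hstep
      _ ≤ (∑ i, w i * Real.exp (δ * t) * ((δ - D i) * |x i t|))
        + ((∑ i, ∑ k, w i * Real.exp (δ * t) * (A i k * |x k t|))
          + ∑ i, ∑ k, w i * B i k * Real.exp (δ * T) * Real.exp (δ * t) * |x k t|) := by
          linarith [hstep2]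
      _ = ∑ k, (((δ * w k - w k * D k) + ((∑ i, w i * A i k)
            + Real.exp (δ * T) * (∑ i, w i * B i k))) * (Real.exp (δ * t) * |x k t|)) := hfin
      _ ≤ 0 := hnonpos
  -- V is nonincreasing on [0, ∞)
  have hVmono : ∀ t : ℝ, 0 ≤ t → V t ≤ V 0 := by
    intro t ht
    have := image_le_of_deriv_right_le_deriv_boundary (f := V) (f' := V') (a := 0) (b := t)
      (B := fun _ => V 0) (B' := fun _ => 0)
      hVc.continuousOn (fun s _ => hVd s) (le_refl (V 0)) continuousOn_const
      (fun s _ => hasDerivWithinAt_const s _ (V 0)) (fun s hs => hkey s hs.1)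
    exact this ⟨ht, le_rfl⟩
  -- the integral part is nonnegative
  have hIpos : ∀ t : ℝ, 0 ≤ ∑ i, ∑ k,
      (w i * B i k * Real.exp (δ * τ' i k)) * (F k t - F k (t - τ' i k)) := by
    intro t
    refine Finset.sum_nonneg fun i _ => Finset.sum_nonneg fun k _ => ?_
    have hint1 : IntervalIntegrable (fun s => Real.exp (δ * s) * |x k s|)
        MeasureTheory.volume 0 t := (hFint k).intervalIntegrable _ _
    have hint2 : IntervalIntegrable (fun s => Real.exp (δ * s) * |x k s|)
        MeasureTheory.volume 0 (t - τ' i k) := (hFint k).intervalIntegrable _ _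
    have hdiff : F k t - F k (t - τ' i k)
        = ∫ s in (t - τ' i k)..t, Real.exp (δ * s) * |x k s| :=
      intervalIntegral.integral_interval_sub_left hint1 hint2
    have hnn : 0 ≤ ∫ s in (t - τ' i k)..t, Real.exp (δ * s) * |x k s| :=
      intervalIntegral.integral_nonneg (by linarith [hτ i k]) (fun u _ => by positivity)
    rw [hdiff]
    have hco : (0:ℝ) ≤ w i * B i k * Real.exp (δ * τ' i k) := by
      have := (hw i).le
      have := hB i k
      positivity
    exact mul_nonneg hco hnn
  -- conclusion
  have hVge : ∀ t : ℝ, Real.exp (δ * t) * (∑ i, w i * |x i t|) ≤ V t := by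
    intro t
    have h1 : Real.exp (δ * t) * (∑ i, w i * |x i t|)
        = ∑ i, w i * (Real.exp (δ * t) * |x i t|) := by
      rw [Finset.mul_sum]
      exact Finset.sum_congr rfl fun i _ => by ring
    rw [hV]
    simp only []
    rw [← h1]
    linarith [hIpos t]
  have hV0 : 0 ≤ V 0 := by
    refine le_trans ?_ (hVge 0)
    exact mul_nonneg (Real.exp_pos _).le
      (Finset.sum_nonneg fun i _ => mul_nonneg (hw i).le (abs_nonneg _))
  refine ⟨V 0 + 1, δ, by linarith, hδ0, ?_⟩
  intro t ht
  have he : (0:ℝ) < Real.exp (δ * t) := Real.exp_pos _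
  have h3 : (∑ i, w i * |x i t|) * Real.exp (δ * t) ≤ V 0 := by
    have := hVge t
    have := hVmono t ht
    nlinarith
  have hexp : Real.exp (-δ * t) = (Real.exp (δ * t))⁻¹ := by
    rw [← Real.exp_neg]
    ring_nf
  rw [hexp]
  have h4 : (∑ i, w i * |x i t|) ≤ V 0 * (Real.exp (δ * t))⁻¹ := by
    rw [← div_eq_mul_inv, le_div_iff₀ he]
    linarith
  have h5 : V 0 * (Real.exp (δ * t))⁻¹ ≤ (V 0 + 1) * (Real.exp (δ * t))⁻¹ := by
    apply mul_le_mul_of_nonneg_right (by linarith) (by positivity)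
  linarith

/-- Coefficient matrix on the doubled index type. -/
def Qmat {n : ℕ} (aR aI : Fin n → Fin n → ℝ) (l1 l2 l3 l4 : Fin n → ℝ) :
    Fin n ⊕ Fin n → Fin n ⊕ Fin n → ℝ
  | Sum.inl j, Sum.inl k => |aR j k| * l1 k + |aI j k| * l3 k
  | Sum.inl j, Sum.inr k => |aR j k| * l2 k + |aI j k| * l4 k
  | Sum.inr j, Sum.inl k => |aR j k| * l3 k + |aI j k| * l1 k
  | Sum.inr j, Sum.inr k => |aR j k| * l4 k + |aI j k| * l2 k

/-- Right-hand side (minus the linear part) on the doubled index type. -/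
def Nvec {n : ℕ} (aR aI bR bI : Fin n → Fin n → ℝ) (uR uI : Fin n → ℝ)
    (fR fI gR gI : Fin n → ℝ → ℝ → ℝ) (z : Fin n ⊕ Fin n → ℝ) :
    Fin n ⊕ Fin n → ℝ
  | Sum.inl j =>
      (∑ k, (aR j k * fR k (z (Sum.inl k)) (z (Sum.inr k))
        - aI j k * fI k (z (Sum.inl k)) (z (Sum.inr k))))
      + (∑ k, (bR j k * gR k (z (Sum.inl k)) (z (Sum.inr k))
        - bI j k * gI k (z (Sum.inl k)) (z (Sum.inr k)))) + uR j
  | Sum.inr j =>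
      (∑ k, (aR j k * fI k (z (Sum.inl k)) (z (Sum.inr k))
        + aI j k * fR k (z (Sum.inl k)) (z (Sum.inr k))))
      + (∑ k, (bR j k * gI k (z (Sum.inl k)) (z (Sum.inr k))
        + bI j k * gR k (z (Sum.inl k)) (z (Sum.inr k)))) + uI j

lemma row_bound {n : ℕ} (aR aI : Fin n → Fin n → ℝ) (l1 l2 l3 l4 : Fin n → ℝ)
    (fR fI : Fin n → ℝ → ℝ → ℝ)
    (hfR : ∀ k : Fin n, ∀ x y x' y' : ℝ,
      |fR k x y - fR k x' y'| ≤ l1 k * |x - x'| + l2 k * |y - y'|)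
    (hfI : ∀ k : Fin n, ∀ x y x' y' : ℝ,
      |fI k x y - fI k x' y'| ≤ l3 k * |x - x'| + l4 k * |y - y'|)
    (j : Fin n) (X Y X' Y' : Fin n → ℝ) :
    (|(∑ k, (aR j k * fR k (X k) (Y k) - aI j k * fI k (X k) (Y k)))
      - ∑ k, (aR j k * fR k (X' k) (Y' k) - aI j k * fI k (X' k) (Y' k))|
      ≤ ∑ k, ((|aR j k| * l1 k + |aI j k| * l3 k) * |X k - X' k|
              + (|aR j k| * l2 k + |aI j k| * l4 k) * |Y k - Y' k|))
    ∧ (|(∑ k, (aR j k * fI k (X k) (Y k) + aI j k * fR k (X k) (Y k)))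
      - ∑ k, (aR j k * fI k (X' k) (Y' k) + aI j k * fR k (X' k) (Y' k))|
      ≤ ∑ k, ((|aR j k| * l3 k + |aI j k| * l1 k) * |X k - X' k|
              + (|aR j k| * l4 k + |aI j k| * l2 k) * |Y k - Y' k|)) := by
  constructor
  · rw [← Finset.sum_sub_distrib]
    refine (Finset.abs_sum_le_sum_abs _ _).trans (Finset.sum_le_sum fun k _ => ?_)
    have h1 := hfR k (X k) (Y k) (X' k) (Y' k)
    have h2 := hfI k (X k) (Y k) (X' k) (Y' k)
    have hrw : aR j k * fR k (X k) (Y k) - aI j k * fI k (X k) (Y k)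
        - (aR j k * fR k (X' k) (Y' k) - aI j k * fI k (X' k) (Y' k))
        = aR j k * (fR k (X k) (Y k) - fR k (X' k) (Y' k))
          - aI j k * (fI k (X k) (Y k) - fI k (X' k) (Y' k)) := by ring
    rw [hrw]
    refine (abs_sub _ _).trans ?_
    rw [abs_mul, abs_mul]
    have m1 := mul_le_mul_of_nonneg_left h1 (abs_nonneg (aR j k))
    have m2 := mul_le_mul_of_nonneg_left h2 (abs_nonneg (aI j k))
    nlinarith [m1, m2]
  · rw [← Finset.sum_sub_distrib]
    refine (Finset.abs_sum_le_sum_abs _ _).trans (Finset.sum_le_sum fun k _ => ?_)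
    have h1 := hfR k (X k) (Y k) (X' k) (Y' k)
    have h2 := hfI k (X k) (Y k) (X' k) (Y' k)
    have hrw : aR j k * fI k (X k) (Y k) + aI j k * fR k (X k) (Y k)
        - (aR j k * fI k (X' k) (Y' k) + aI j k * fR k (X' k) (Y' k))
        = aR j k * (fI k (X k) (Y k) - fI k (X' k) (Y' k))
          + aI j k * (fR k (X k) (Y k) - fR k (X' k) (Y' k)) := by ring
    rw [hrw]
    refine (abs_add_le _ _).trans ?_
    rw [abs_mul, abs_mul]
    have m1 := mul_le_mul_of_nonneg_left h1 (abs_nonneg (aI j k))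
    have m2 := mul_le_mul_of_nonneg_left h2 (abs_nonneg (aR j k))
    nlinarith [m1, m2]

theorem stmt5
    (n : ℕ) (hn : 1 ≤ n)
    (d : Fin n → ℝ) (hd : ∀ j, 0 < d j)
    (aR aI bR bI τ : Fin n → Fin n → ℝ) (hτ : ∀ j k, 0 ≤ τ j k)
    (uR uI : Fin n → ℝ)
    (fR fI gR gI : Fin n → ℝ → ℝ → ℝ)
    (lRR lRI lIR lII mRR mRI mIR mII : Fin n → ℝ)
    (hl : ∀ j, 0 < lRR j ∧ 0 < lRI j ∧ 0 < lIR j ∧ 0 < lII j)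
    (hm : ∀ j, 0 < mRR j ∧ 0 < mRI j ∧ 0 < mIR j ∧ 0 < mII j)
    (hf : ∀ j, CondH2 (fR j) (fI j) (lRR j) (lRI j) (lIR j) (lII j))
    (hg : ∀ j, CondH2 (gR j) (gI j) (mRR j) (mRI j) (mIR j) (mII j))
    (ξ φ : Fin n → ℝ) (hξ : ∀ j, 0 < ξ j) (hφ : ∀ j, 0 < φ j)
    (hT11 : ∀ k : Fin n,
      -(ξ k) * d k
      + ((∑ j, ξ j * |aR j k|) + (∑ j, φ j * |aI j k|)) * lRR k
      + ((∑ j, ξ j * |aI j k|) + (∑ j, φ j * |aR j k|)) * lIR k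
      + (∑ j, (ξ j * (|bR j k| * mRR k + |bI j k| * mIR k)
               + φ j * (|bR j k| * mIR k + |bI j k| * mRR k))) < 0)
    (hT12 : ∀ k : Fin n,
      -(φ k) * d k
      + ((∑ j, φ j * |aR j k|) + (∑ j, ξ j * |aI j k|)) * lII k
      + ((∑ j, φ j * |aI j k|) + (∑ j, ξ j * |aR j k|)) * lRI k
      + (∑ j, (ξ j * (|bR j k| * mRI k + |bI j k| * mII k)
               + φ j * (|bR j k| * mII k + |bI j k| * mRI k))) < 0)
    (hsol : ∃ zR zI, IsSolution n d aR aI bR bI τ uR uI fR fI gR gI zR zI) :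
    ∃ zbR zbI : Fin n → ℝ,
      IsEquilibrium n d aR aI bR bI uR uI fR fI gR gI zbR zbI ∧
      (∀ wR wI : Fin n → ℝ,
        IsEquilibrium n d aR aI bR bI uR uI fR fI gR gI wR wI → wR = zbR ∧ wI = zbI) ∧
      (∀ zR zI : Fin n → ℝ → ℝ,
        IsSolution n d aR aI bR bI τ uR uI fR fI gR gI zR zI →
        ∃ c δ : ℝ, 0 < c ∧ 0 < δ ∧ ∀ t : ℝ, 0 ≤ t →
          Real.sqrt ((∑ j, (zR j t - zbR j) ^ 2) + ∑ j, (zI j t - zbI j) ^ 2)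
            ≤ c * Real.exp (-δ * t)) := by
  classical
  haveI hne : Nonempty (Fin n ⊕ Fin n) := ⟨Sum.inl ⟨0, hn⟩⟩
  -- Lipschitz bounds from the mean value theorem
  have hfRlip : ∀ k : Fin n, ∀ x y x' y' : ℝ,
      |fR k x y - fR k x' y'| ≤ lRR k * |x - x'| + lRI k * |y - y'| := fun k =>
    mvt_lip (hf k).1 (fun x y => ((hf k).2.2 x y).1) (fun x y => ((hf k).2.2 x y).2.1)
  have hfIlip : ∀ k : Fin n, ∀ x y x' y' : ℝ,
      |fI k x y - fI k x' y'| ≤ lIR k * |x - x'| + lII k * |y - y'| := fun k =>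
    mvt_lip (hf k).2.1 (fun x y => ((hf k).2.2 x y).2.2.1)
      (fun x y => ((hf k).2.2 x y).2.2.2)
  have hgRlip : ∀ k : Fin n, ∀ x y x' y' : ℝ,
      |gR k x y - gR k x' y'| ≤ mRR k * |x - x'| + mRI k * |y - y'| := fun k =>
    mvt_lip (hg k).1 (fun x y => ((hg k).2.2 x y).1) (fun x y => ((hg k).2.2 x y).2.1)
  have hgIlip : ∀ k : Fin n, ∀ x y x' y' : ℝ,
      |gI k x y - gI k x' y'| ≤ mIR k * |x - x'| + mII k * |y - y'| := fun k =>
    mvt_lip (hg k).2.1 (fun x y => ((hg k).2.2 x y).2.2.1)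
      (fun x y => ((hg k).2.2 x y).2.2.2)
  have hwpos : ∀ i : Fin n ⊕ Fin n, 0 < Sum.elim ξ φ i := by
    rintro (j | j) <;> simp [hξ j, hφ j]
  have hDpos : ∀ i : Fin n ⊕ Fin n, 0 < Sum.elim d d i := by
    rintro (j | j) <;> simp [hd j]
  have hQa_nonneg : ∀ i k, 0 ≤ Qmat aR aI lRR lRI lIR lII i k := by
    rintro (j | j) (k | k) <;> simp only [Qmat] <;>
      nlinarith [abs_nonneg (aR j k), abs_nonneg (aI j k),
        (hl k).1, (hl k).2.1, (hl k).2.2.1, (hl k).2.2.2]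
  have hQb_nonneg : ∀ i k, 0 ≤ Qmat bR bI mRR mRI mIR mII i k := by
    rintro (j | j) (k | k) <;> simp only [Qmat] <;>
      nlinarith [abs_nonneg (bR j k), abs_nonneg (bI j k),
        (hm k).1, (hm k).2.1, (hm k).2.2.1, (hm k).2.2.2]
  -- column conditions on the doubled system
  have ea : ∀ (v u1 u2 : Fin n → ℝ) (c1 c2 : ℝ),
      ∑ j, v j * (u1 j * c1 + u2 j * c2)
        = (∑ j, v j * u1 j) * c1 + (∑ j, v j * u2 j) * c2 := by
    intro v u1 u2 c1 c2
    rw [Finset.sum_mul, Finset.sum_mul, ← Finset.sum_add_distrib]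
    exact Finset.sum_congr rfl fun j _ => by ring
  have hcolQ : ∀ k : Fin n ⊕ Fin n,
      (∑ i, Sum.elim ξ φ i * Qmat aR aI lRR lRI lIR lII i k)
        + (∑ i, Sum.elim ξ φ i * Qmat bR bI mRR mRI mIR mII i k)
        < Sum.elim ξ φ k * Sum.elim d d k := by
    rintro (k | k)
    · have h := hT11 k
      rw [Finset.sum_add_distrib] at h
      rw [ea ξ (fun j => |bR j k|) (fun j => |bI j k|) (mRR k) (mIR k),
        ea φ (fun j => |bR j k|) (fun j => |bI j k|) (mIR k) (mRR k)] at h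
      simp only [Fintype.sum_sum_type, Sum.elim_inl, Sum.elim_inr, Qmat]
      rw [ea ξ (fun j => |aR j k|) (fun j => |aI j k|) (lRR k) (lIR k),
        ea φ (fun j => |aR j k|) (fun j => |aI j k|) (lIR k) (lRR k),
        ea ξ (fun j => |bR j k|) (fun j => |bI j k|) (mRR k) (mIR k),
        ea φ (fun j => |bR j k|) (fun j => |bI j k|) (mIR k) (mRR k)]
      nlinarith [h]
    · have h := hT12 k
      rw [Finset.sum_add_distrib] at h
      rw [ea ξ (fun j => |bR j k|) (fun j => |bI j k|) (mRI k) (mII k),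
        ea φ (fun j => |bR j k|) (fun j => |bI j k|) (mII k) (mRI k)] at h
      simp only [Fintype.sum_sum_type, Sum.elim_inl, Sum.elim_inr, Qmat]
      rw [ea ξ (fun j => |aR j k|) (fun j => |aI j k|) (lRI k) (lII k),
        ea φ (fun j => |aR j k|) (fun j => |aI j k|) (lII k) (lRI k),
        ea ξ (fun j => |bR j k|) (fun j => |bI j k|) (mRI k) (mII k),
        ea φ (fun j => |bR j k|) (fun j => |bI j k|) (mII k) (mRI k)]
      nlinarith [h]
  have hνpos : ∀ k : Fin n ⊕ Fin n, 0 < Sum.elim ξ φ k * Sum.elim d d k := fun k =>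
    mul_pos (hwpos k) (hDpos k)
  have hsum_split : ∀ k : Fin n ⊕ Fin n,
      (∑ i, Sum.elim ξ φ i * (Qmat aR aI lRR lRI lIR lII i k
        + Qmat bR bI mRR mRI mIR mII i k))
      = (∑ i, Sum.elim ξ φ i * Qmat aR aI lRR lRI lIR lII i k)
        + ∑ i, Sum.elim ξ φ i * Qmat bR bI mRR mRI mIR mII i k := by
    intro k
    rw [← Finset.sum_add_distrib]
    exact Finset.sum_congr rfl fun i _ => by ring
  set q : ℝ := Finset.univ.sup' Finset.univ_nonempty (fun k : Fin n ⊕ Fin n =>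
    (∑ i, Sum.elim ξ φ i * (Qmat aR aI lRR lRI lIR lII i k
      + Qmat bR bI mRR mRI mIR mII i k)) / (Sum.elim ξ φ k * Sum.elim d d k)) with hqdef
  have hq1 : q < 1 := by
    rw [hqdef, Finset.sup'_lt_iff]
    intro k _
    rw [div_lt_one (hνpos k), hsum_split k]
    exact hcolQ k
  have hq0 : 0 ≤ q := by
    refine le_trans ?_ (Finset.le_sup' _ (Finset.mem_univ (Sum.inl (⟨0, hn⟩ : Fin n))))
    refine div_nonneg (Finset.sum_nonneg fun i _ => mul_nonneg (hwpos i).le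
      (add_nonneg (hQa_nonneg _ _) (hQb_nonneg _ _))) (hνpos _).le
  have hqk : ∀ k : Fin n ⊕ Fin n,
      (∑ i, Sum.elim ξ φ i * (Qmat aR aI lRR lRI lIR lII i k
        + Qmat bR bI mRR mRI mIR mII i k))
      ≤ q * (Sum.elim ξ φ k * Sum.elim d d k) := by
    intro k
    have h := Finset.le_sup' (fun k : Fin n ⊕ Fin n =>
      (∑ i, Sum.elim ξ φ i * (Qmat aR aI lRR lRI lIR lII i k
        + Qmat bR bI mRR mRI mIR mII i k)) / (Sum.elim ξ φ k * Sum.elim d d k))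
      (Finset.mem_univ k)
    rw [div_le_iff₀ (hνpos k)] at h
    rw [hqdef]
    linarith [h]
  -- the fixed point map
  set P : ((Fin n ⊕ Fin n) → ℝ) → (Fin n ⊕ Fin n) → ℝ :=
    fun z i => (Sum.elim d d i)⁻¹ * Nvec aR aI bR bI uR uI fR fI gR gI z i with hPdef
  have hPcont : Continuous P := by
    apply continuous_pi
    intro i
    have hc1 : ∀ k : Fin n, Continuous (fun z : (Fin n ⊕ Fin n) → ℝ =>
        fR k (z (Sum.inl k)) (z (Sum.inr k))) := by
      intro k
      have hu := (hf k).1.continuous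
      have hp : Continuous fun z : (Fin n ⊕ Fin n) → ℝ => (z (Sum.inl k), z (Sum.inr k)) :=
        (continuous_apply _).prodMk (continuous_apply _)
      exact hu.comp hp
    have hc2 : ∀ k : Fin n, Continuous (fun z : (Fin n ⊕ Fin n) → ℝ =>
        fI k (z (Sum.inl k)) (z (Sum.inr k))) := by
      intro k
      have hu := (hf k).2.1.continuous
      have hp : Continuous fun z : (Fin n ⊕ Fin n) → ℝ => (z (Sum.inl k), z (Sum.inr k)) :=
        (continuous_apply _).prodMk (continuous_apply _)
      exact hu.comp hp
    have hc3 : ∀ k : Fin n, Continuous (fun z : (Fin n ⊕ Fin n) → ℝ =>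
        gR k (z (Sum.inl k)) (z (Sum.inr k))) := by
      intro k
      have hu := (hg k).1.continuous
      have hp : Continuous fun z : (Fin n ⊕ Fin n) → ℝ => (z (Sum.inl k), z (Sum.inr k)) :=
        (continuous_apply _).prodMk (continuous_apply _)
      exact hu.comp hp
    have hc4 : ∀ k : Fin n, Continuous (fun z : (Fin n ⊕ Fin n) → ℝ =>
        gI k (z (Sum.inl k)) (z (Sum.inr k))) := by
      intro k
      have hu := (hg k).2.1.continuous
      have hp : Continuous fun z : (Fin n ⊕ Fin n) → ℝ => (z (Sum.inl k), z (Sum.inr k)) :=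
        (continuous_apply _).prodMk (continuous_apply _)
      exact hu.comp hp
    rw [hPdef]
    refine continuous_const.mul ?_
    cases i with
    | inl j =>
      simp only [Nvec]
      exact ((continuous_finset_sum _ fun k _ =>
          (continuous_const.mul (hc1 k)).sub (continuous_const.mul (hc2 k))).add
        (continuous_finset_sum _ fun k _ =>
          (continuous_const.mul (hc3 k)).sub (continuous_const.mul (hc4 k)))).add
        continuous_const
    | inr j =>
      simp only [Nvec]
      exact ((continuous_finset_sum _ fun k _ =>
          (continuous_const.mul (hc2 k)).add (continuous_const.mul (hc1 k))).add
        (continuous_finset_sum _ fun k _ =>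
          (continuous_const.mul (hc4 k)).add (continuous_const.mul (hc3 k)))).add
        continuous_const
  -- Lipschitz bound for the nonlinear part
  have hNlip : ∀ (z z' : (Fin n ⊕ Fin n) → ℝ) (i : Fin n ⊕ Fin n),
      |Nvec aR aI bR bI uR uI fR fI gR gI z i - Nvec aR aI bR bI uR uI fR fI gR gI z' i|
      ≤ ∑ k, (Qmat aR aI lRR lRI lIR lII i k + Qmat bR bI mRR mRI mIR mII i k)
          * |z k - z' k| := by
    intro z z' i
    cases i with
    | inl j =>
      obtain ⟨ha, -⟩ := row_bound aR aI lRR lRI lIR lII fR fI hfRlip hfIlip j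
        (fun k => z (Sum.inl k)) (fun k => z (Sum.inr k))
        (fun k => z' (Sum.inl k)) (fun k => z' (Sum.inr k))
      obtain ⟨hb, -⟩ := row_bound bR bI mRR mRI mIR mII gR gI hgRlip hgIlip j
        (fun k => z (Sum.inl k)) (fun k => z (Sum.inr k))
        (fun k => z' (Sum.inl k)) (fun k => z' (Sum.inr k))
      simp only [Nvec, Fintype.sum_sum_type, Qmat]
      have hsplit : (∑ k, (aR j k * fR k (z (Sum.inl k)) (z (Sum.inr k))
            - aI j k * fI k (z (Sum.inl k)) (z (Sum.inr k))))
          + (∑ k, (bR j k * gR k (z (Sum.inl k)) (z (Sum.inr k))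
            - bI j k * gI k (z (Sum.inl k)) (z (Sum.inr k)))) + uR j
          - ((∑ k, (aR j k * fR k (z' (Sum.inl k)) (z' (Sum.inr k))
            - aI j k * fI k (z' (Sum.inl k)) (z' (Sum.inr k))))
          + (∑ k, (bR j k * gR k (z' (Sum.inl k)) (z' (Sum.inr k))
            - bI j k * gI k (z' (Sum.inl k)) (z' (Sum.inr k)))) + uR j)
          = ((∑ k, (aR j k * fR k (z (Sum.inl k)) (z (Sum.inr k))
            - aI j k * fI k (z (Sum.inl k)) (z (Sum.inr k))))
            - ∑ k, (aR j k * fR k (z' (Sum.inl k)) (z' (Sum.inr k))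
            - aI j k * fI k (z' (Sum.inl k)) (z' (Sum.inr k))))
          + ((∑ k, (bR j k * gR k (z (Sum.inl k)) (z (Sum.inr k))
            - bI j k * gI k (z (Sum.inl k)) (z (Sum.inr k))))
            - ∑ k, (bR j k * gR k (z' (Sum.inl k)) (z' (Sum.inr k))
            - bI j k * gI k (z' (Sum.inl k)) (z' (Sum.inr k)))) := by ring
      rw [hsplit]
      refine (abs_add_le _ _).trans ((add_le_add ha hb).trans (le_of_eq ?_))
      rw [← Finset.sum_add_distrib, ← Finset.sum_add_distrib]
      exact Finset.sum_congr rfl fun k _ => by ring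
    | inr j =>
      obtain ⟨-, ha⟩ := row_bound aR aI lRR lRI lIR lII fR fI hfRlip hfIlip j
        (fun k => z (Sum.inl k)) (fun k => z (Sum.inr k))
        (fun k => z' (Sum.inl k)) (fun k => z' (Sum.inr k))
      obtain ⟨-, hb⟩ := row_bound bR bI mRR mRI mIR mII gR gI hgRlip hgIlip j
        (fun k => z (Sum.inl k)) (fun k => z (Sum.inr k))
        (fun k => z' (Sum.inl k)) (fun k => z' (Sum.inr k))
      simp only [Nvec, Fintype.sum_sum_type, Qmat]
      have hsplit : (∑ k, (aR j k * fI k (z (Sum.inl k)) (z (Sum.inr k))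
            + aI j k * fR k (z (Sum.inl k)) (z (Sum.inr k))))
          + (∑ k, (bR j k * gI k (z (Sum.inl k)) (z (Sum.inr k))
            + bI j k * gR k (z (Sum.inl k)) (z (Sum.inr k)))) + uI j
          - ((∑ k, (aR j k * fI k (z' (Sum.inl k)) (z' (Sum.inr k))
            + aI j k * fR k (z' (Sum.inl k)) (z' (Sum.inr k))))
          + (∑ k, (bR j k * gI k (z' (Sum.inl k)) (z' (Sum.inr k))
            + bI j k * gR k (z' (Sum.inl k)) (z' (Sum.inr k)))) + uI j)
          = ((∑ k, (aR j k * fI k (z (Sum.inl k)) (z (Sum.inr k))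
            + aI j k * fR k (z (Sum.inl k)) (z (Sum.inr k))))
            - ∑ k, (aR j k * fI k (z' (Sum.inl k)) (z' (Sum.inr k))
            + aI j k * fR k (z' (Sum.inl k)) (z' (Sum.inr k))))
          + ((∑ k, (bR j k * gI k (z (Sum.inl k)) (z (Sum.inr k))
            + bI j k * gR k (z (Sum.inl k)) (z (Sum.inr k))))
            - ∑ k, (bR j k * gI k (z' (Sum.inl k)) (z' (Sum.inr k))
            + bI j k * gR k (z' (Sum.inl k)) (z' (Sum.inr k)))) := by ring
      rw [hsplit]
      refine (abs_add_le _ _).trans ((add_le_add ha hb).trans (le_of_eq ?_))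
      rw [← Finset.sum_add_distrib, ← Finset.sum_add_distrib]
      exact Finset.sum_congr rfl fun k _ => by ring
  -- contraction estimate
  have hPlip : ∀ z z' : (Fin n ⊕ Fin n) → ℝ,
      (∑ i, (Sum.elim ξ φ i * Sum.elim d d i) * |P z i - P z' i|)
      ≤ q * ∑ i, (Sum.elim ξ φ i * Sum.elim d d i) * |z i - z' i| := by
    intro z z'
    have e1 : ∀ i, (Sum.elim ξ φ i * Sum.elim d d i) * |P z i - P z' i|
        = Sum.elim ξ φ i * |Nvec aR aI bR bI uR uI fR fI gR gI z i
            - Nvec aR aI bR bI uR uI fR fI gR gI z' i| := by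
      intro i
      rw [hPdef]
      simp only []
      rw [← mul_sub, abs_mul, abs_inv, abs_of_pos (hDpos i)]
      field_simp
      rw [mul_right_comm, mul_div_assoc, div_self (hDpos i).ne', mul_one]
    calc (∑ i, (Sum.elim ξ φ i * Sum.elim d d i) * |P z i - P z' i|)
        = ∑ i, Sum.elim ξ φ i * |Nvec aR aI bR bI uR uI fR fI gR gI z i
            - Nvec aR aI bR bI uR uI fR fI gR gI z' i| :=
          Finset.sum_congr rfl fun i _ => e1 i
      _ ≤ ∑ i, Sum.elim ξ φ i * ∑ k, (Qmat aR aI lRR lRI lIR lII i k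
            + Qmat bR bI mRR mRI mIR mII i k) * |z k - z' k| :=
          Finset.sum_le_sum fun i _ =>
            mul_le_mul_of_nonneg_left (hNlip z z' i) (hwpos i).le
      _ = ∑ k, (∑ i, Sum.elim ξ φ i * (Qmat aR aI lRR lRI lIR lII i k
            + Qmat bR bI mRR mRI mIR mII i k)) * |z k - z' k| := by
          simp only [Finset.mul_sum]
          rw [Finset.sum_comm]
          refine Finset.sum_congr rfl fun k _ => ?_
          rw [Finset.sum_mul]
          exact Finset.sum_congr rfl fun i _ => by ring
      _ ≤ ∑ k, (q * (Sum.elim ξ φ k * Sum.elim d d k)) * |z k - z' k| :=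
          Finset.sum_le_sum fun k _ =>
            mul_le_mul_of_nonneg_right (hqk k) (abs_nonneg _)
      _ = q * ∑ k, (Sum.elim ξ φ k * Sum.elim d d k) * |z k - z' k| := by
          rw [Finset.mul_sum]
          exact Finset.sum_congr rfl fun k _ => by ring
  obtain ⟨zstar, hzfix, hzuniq⟩ := banach_pi
    (fun i => Sum.elim ξ φ i * Sum.elim d d i) hνpos q hq0 hq1 P hPcont hPlip
  set zbR : Fin n → ℝ := fun j => zstar (Sum.inl j) with hzbR
  set zbI : Fin n → ℝ := fun j => zstar (Sum.inr j) with hzbI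
  have hzelim : Sum.elim zbR zbI = zstar := by
    funext i
    cases i <;> rfl
  -- fixed points are exactly equilibria
  have hfix_iff : ∀ vR vI : Fin n → ℝ,
      P (Sum.elim vR vI) = Sum.elim vR vI ↔
        IsEquilibrium n d aR aI bR bI uR uI fR fI gR gI vR vI := by
    intro vR vI
    constructor
    · intro h
      constructor
      · intro j
        have hj := congrFun h (Sum.inl j)
        rw [hPdef] at hj
        simp only [Nvec, Sum.elim_inl, Sum.elim_inr] at hj
        have hdj : d j ≠ 0 := (hd j).ne'
        field_simp at hj
        rw [Finset.sum_sub_distrib, Finset.sum_sub_distrib]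
        rw [Finset.sum_sub_distrib, Finset.sum_sub_distrib] at hj
        linarith [hj]
      · intro j
        have hj := congrFun h (Sum.inr j)
        rw [hPdef] at hj
        simp only [Nvec, Sum.elim_inl, Sum.elim_inr] at hj
        have hdj : d j ≠ 0 := (hd j).ne'
        field_simp at hj
        linarith [hj]
    · intro h
      funext i
      rw [hPdef]
      cases i with
      | inl j =>
        have hj := h.1 j
        simp only [Nvec, Sum.elim_inl, Sum.elim_inr]
        have hdj : d j ≠ 0 := (hd j).ne'
        rw [Finset.sum_sub_distrib, Finset.sum_sub_distrib] at hj
        field_simp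
        rw [Finset.sum_sub_distrib, Finset.sum_sub_distrib]
        linarith [hj]
      | inr j =>
        have hj := h.2 j
        simp only [Nvec, Sum.elim_inl, Sum.elim_inr]
        have hdj : d j ≠ 0 := (hd j).ne'
        field_simp
        linarith [hj]
  have hEq : IsEquilibrium n d aR aI bR bI uR uI fR fI gR gI zbR zbI :=
    (hfix_iff zbR zbI).mp (by rw [hzelim]; exact hzfix)
  refine ⟨zbR, zbI, hEq, ?_, ?_⟩
  · intro wR wI hw'
    have huw := hzuniq (Sum.elim wR wI) ((hfix_iff wR wI).mpr hw')
    constructor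
    · funext j
      exact congrFun huw (Sum.inl j)
    · funext j
      exact congrFun huw (Sum.inr j)
  -- exponential stability
  intro zR zI hsol2
  obtain ⟨hzRcd, hzIcd, hsolR, hsolI⟩ := hsol2
  have hodeQ : ∀ (i : Fin n ⊕ Fin n) (t : ℝ), 0 ≤ t →
      |deriv (Sum.elim (fun j t => zR j t - zbR j) (fun j t => zI j t - zbI j) i) t
        + Sum.elim d d i
          * Sum.elim (fun j t => zR j t - zbR j) (fun j t => zI j t - zbI j) i t|
      ≤ (∑ k, Qmat aR aI lRR lRI lIR lII i k
            * |Sum.elim (fun j t => zR j t - zbR j) (fun j t => zI j t - zbI j) k t|)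
        + ∑ k, Qmat bR bI mRR mRI mIR mII i k
            * |Sum.elim (fun j t => zR j t - zbR j) (fun j t => zI j t - zbI j) k
                (t - τ (Sum.elim id id i) (Sum.elim id id k))| := by
    rintro (j | j) t ht
    · simp only [Sum.elim_inl, Sum.elim_inr, Fintype.sum_sum_type, Qmat, id_eq]
      rw [deriv_sub_const]
      have h2 := hEq.1 j
      have h1 := hsolR j t ht
      have heq2 : deriv (zR j) t + d j * (zR j t - zbR j)
          = ((∑ k, (aR j k * fR k (zR k t) (zI k t) - aI j k * fI k (zR k t) (zI k t)))
              - ∑ k, (aR j k * fR k (zbR k) (zbI k) - aI j k * fI k (zbR k) (zbI k)))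
            + ((∑ k, (bR j k * gR k (zR k (t - τ j k)) (zI k (t - τ j k))
                - bI j k * gI k (zR k (t - τ j k)) (zI k (t - τ j k))))
              - ∑ k, (bR j k * gR k (zbR k) (zbI k) - bI j k * gI k (zbR k) (zbI k))) := by
        rw [h1]
        linear_combination h2
      rw [heq2]
      obtain ⟨ha, -⟩ := row_bound aR aI lRR lRI lIR lII fR fI hfRlip hfIlip j
        (fun k => zR k t) (fun k => zI k t) zbR zbI
      obtain ⟨hb, -⟩ := row_bound bR bI mRR mRI mIR mII gR gI hgRlip hgIlip j
        (fun k => zR k (t - τ j k)) (fun k => zI k (t - τ j k)) zbR zbI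
      refine (abs_add_le _ _).trans ((add_le_add ha hb).trans (le_of_eq ?_))
      rw [Finset.sum_add_distrib, Finset.sum_add_distrib]
    · simp only [Sum.elim_inl, Sum.elim_inr, Fintype.sum_sum_type, Qmat, id_eq]
      rw [deriv_sub_const]
      have h2 := hEq.2 j
      have h1 := hsolI j t ht
      have heq2 : deriv (zI j) t + d j * (zI j t - zbI j)
          = ((∑ k, (aR j k * fI k (zR k t) (zI k t) + aI j k * fR k (zR k t) (zI k t)))
              - ∑ k, (aR j k * fI k (zbR k) (zbI k) + aI j k * fR k (zbR k) (zbI k)))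
            + ((∑ k, (bR j k * gI k (zR k (t - τ j k)) (zI k (t - τ j k))
                + bI j k * gR k (zR k (t - τ j k)) (zI k (t - τ j k))))
              - ∑ k, (bR j k * gI k (zbR k) (zbI k) + bI j k * gR k (zbR k) (zbI k))) := by
        rw [h1]
        linear_combination h2
      rw [heq2]
      obtain ⟨-, ha⟩ := row_bound aR aI lRR lRI lIR lII fR fI hfRlip hfIlip j
        (fun k => zR k t) (fun k => zI k t) zbR zbI
      obtain ⟨-, hb⟩ := row_bound bR bI mRR mRI mIR mII gR gI hgRlip hgIlip j
        (fun k => zR k (t - τ j k)) (fun k => zI k (t - τ j k)) zbR zbI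
      refine (abs_add_le _ _).trans ((add_le_add ha hb).trans (le_of_eq ?_))
      rw [Finset.sum_add_distrib, Finset.sum_add_distrib]
  obtain ⟨c, δ, hc, hδ, hbound⟩ := halanay (Sum.elim ξ φ) (Sum.elim d d) hwpos hDpos
    (Qmat aR aI lRR lRI lIR lII) (Qmat bR bI mRR mRI mIR mII)
    (fun i k => τ (Sum.elim id id i) (Sum.elim id id k))
    hQa_nonneg hQb_nonneg (fun i k => hτ _ _)
    (Sum.elim (fun j t => zR j t - zbR j) (fun j t => zI j t - zbI j))
    (by rintro (j | j)
        · exact (hzRcd j).sub contDiff_const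
        · exact (hzIcd j).sub contDiff_const)
    hodeQ hcolQ
  set wm : ℝ := Finset.univ.inf' Finset.univ_nonempty (Sum.elim ξ φ) with hwm
  have hwm0 : 0 < wm := by
    obtain ⟨i, _, hi⟩ := Finset.exists_mem_eq_inf' Finset.univ_nonempty (Sum.elim ξ φ)
    rw [hwm, hi]
    exact hwpos i
  have hwmle : ∀ i, wm ≤ Sum.elim ξ φ i := fun i =>
    Finset.inf'_le _ (Finset.mem_univ i)
  refine ⟨c / wm, δ, div_pos hc hwm0, hδ, ?_⟩
  intro t ht
  have h1 := hbound t ht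
  have h2 : Real.sqrt ((∑ j, (zR j t - zbR j) ^ 2) + ∑ j, (zI j t - zbI j) ^ 2)
      ≤ ∑ i, |Sum.elim (fun j t => zR j t - zbR j) (fun j t => zI j t - zbI j) i t| := by
    have hsq : (∑ j, (zR j t - zbR j) ^ 2) + ∑ j, (zI j t - zbI j) ^ 2
        = ∑ i, (Sum.elim (fun j t => zR j t - zbR j) (fun j t => zI j t - zbI j) i t) ^ 2 := by
      rw [Fintype.sum_sum_type]
      simp
    rw [hsq]
    have h3 : (∑ i, (Sum.elim (fun j t => zR j t - zbR j)
          (fun j t => zI j t - zbI j) i t) ^ 2)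
        ≤ (∑ i, |Sum.elim (fun j t => zR j t - zbR j)
          (fun j t => zI j t - zbI j) i t|) ^ 2 := by
      calc (∑ i, (Sum.elim (fun j t => zR j t - zbR j) (fun j t => zI j t - zbI j) i t) ^ 2)
          = ∑ i, |Sum.elim (fun j t => zR j t - zbR j)
              (fun j t => zI j t - zbI j) i t| ^ 2 := by
            simp [sq_abs]
        _ ≤ _ := Finset.sum_sq_le_sq_sum_of_nonneg fun i _ => abs_nonneg _
    calc Real.sqrt (∑ i, (Sum.elim (fun j t => zR j t - zbR j)
          (fun j t => zI j t - zbI j) i t) ^ 2)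
        ≤ Real.sqrt ((∑ i, |Sum.elim (fun j t => zR j t - zbR j)
          (fun j t => zI j t - zbI j) i t|) ^ 2) := Real.sqrt_le_sqrt h3
      _ = _ := Real.sqrt_sq (Finset.sum_nonneg fun i _ => abs_nonneg _)
  have h4 : (∑ i, |Sum.elim (fun j t => zR j t - zbR j) (fun j t => zI j t - zbI j) i t|)
      ≤ wm⁻¹ * ∑ i, Sum.elim ξ φ i
        * |Sum.elim (fun j t => zR j t - zbR j) (fun j t => zI j t - zbI j) i t| := by
    rw [Finset.mul_sum]
    refine Finset.sum_le_sum fun i _ => ?_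
    have h5 : (1:ℝ) ≤ wm⁻¹ * Sum.elim ξ φ i := by
      calc (1:ℝ) = wm⁻¹ * wm := (inv_mul_cancel₀ hwm0.ne').symm
        _ ≤ wm⁻¹ * Sum.elim ξ φ i :=
          mul_le_mul_of_nonneg_left (hwmle i) (inv_pos.mpr hwm0).le
    calc |Sum.elim (fun j t => zR j t - zbR j) (fun j t => zI j t - zbI j) i t|
        = 1 * |Sum.elim (fun j t => zR j t - zbR j) (fun j t => zI j t - zbI j) i t| :=
          (one_mul _).symm
      _ ≤ (wm⁻¹ * Sum.elim ξ φ i)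
          * |Sum.elim (fun j t => zR j t - zbR j) (fun j t => zI j t - zbI j) i t| :=
          mul_le_mul_of_nonneg_right h5 (abs_nonneg _)
      _ = wm⁻¹ * (Sum.elim ξ φ i
          * |Sum.elim (fun j t => zR j t - zbR j) (fun j t => zI j t - zbI j) i t|) := by
          ring
  calc Real.sqrt ((∑ j, (zR j t - zbR j) ^ 2) + ∑ j, (zI j t - zbI j) ^ 2)
      ≤ ∑ i, |Sum.elim (fun j t => zR j t - zbR j) (fun j t => zI j t - zbI j) i t| := h2
    _ ≤ wm⁻¹ * ∑ i, Sum.elim ξ φ i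
        * |Sum.elim (fun j t => zR j t - zbR j) (fun j t => zI j t - zbI j) i t| := h4
    _ ≤ wm⁻¹ * (c * Real.exp (-δ * t)) :=
        mul_le_mul_of_nonneg_left h1 (inv_pos.mpr hwm0).le
    _ = c / wm * Real.exp (-δ * t) := by ring
end
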